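/- arXiv:1806.00320 — 10 statements merged into one kernel-verified Lean document; each statement's English description precedes it below -/
import Mathlib

section
/- Let D = {(i,j) ∈ Fin n × Fin n | i < j} be the complete DAG on Fin n. Then for every choice of distinct i0, j0 and every S ⊆ Fin n with i0, j0 ∉ S, the partial derivatives of f have no common real zero: for every a ∈ ℝ^D there exists an edge e ∈ D with (∂f/∂X_e)(a) ≠ 0. In particular the hypersurface {a ∈ ℝ^D : f(a) = 0} is nonsingular. -/
open MvPolynomial Matrix

noncomputable section

/-- The matrix of variables of the DAG with edge set `D`. -/
def edgeMatrix (n : ℕ) (D : Finset (Fin n × Fin n)) :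
    Matrix (Fin n) (Fin n) (MvPolynomial {e // e ∈ D} ℝ) :=
  Matrix.of fun i j => if h : (i, j) ∈ D then X ⟨(i, j), h⟩ else 0

/-- `Σ = (I - A)⁻ᵀ (I - A)⁻¹` over the polynomial ring. -/
def sigmaMat (n : ℕ) (D : Finset (Fin n × Fin n)) :
    Matrix (Fin n) (Fin n) (MvPolynomial {e // e ∈ D} ℝ) :=
  ((1 - edgeMatrix n D)ᵀ)⁻¹ * (1 - edgeMatrix n D)⁻¹

/-- `det M[I,J]`, rows and columns in increasing order. -/
def subdet {α : Type*} [CommRing α] {n : ℕ} (M : Matrix (Fin n) (Fin n) α)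
    (I J : Finset (Fin n)) : α :=
  if h : I.card = J.card then
    (M.submatrix (fun p : Fin I.card => ((I.orderIsoOfFin rfl) p : Fin n))
      (fun p : Fin I.card => ((J.orderIsoOfFin h.symm) p : Fin n))).det
  else 0

/-- `f = det Σ[S ∪ {i0}, S ∪ {j0}]`. -/
def fpoly (n : ℕ) (D : Finset (Fin n × Fin n)) (i0 j0 : Fin n) (S : Finset (Fin n)) :
    MvPolynomial {e // e ∈ D} ℝ :=
  subdet (sigmaMat n D) (insert i0 S) (insert j0 S)

/-- `t` is below `v`: there is a directed path of length ≥ 1 from `v` to `t`. -/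
def Below {n : ℕ} (D : Finset (Fin n × Fin n)) (v t : Fin n) : Prop :=
  Relation.TransGen (fun i j => (i, j) ∈ D) v t

end

section Helpers

variable {k A : Type*} [CommSemiring k] [CommRing A] [Algebra k A]

variable {σ' : Type*}

private theorem deriv_prod {ι : Type*} [DecidableEq ι]
    (d : Derivation ℝ (MvPolynomial σ' ℝ) (MvPolynomial σ' ℝ)) (s : Finset ι)
    (g : ι → MvPolynomial σ' ℝ) :
    d (∏ i ∈ s, g i) = ∑ i ∈ s, d (g i) * ∏ j ∈ s.erase i, g j := by
  induction s using Finset.induction_on with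
  | empty => simp
  | @insert a s ha ih =>
    rw [Finset.prod_insert ha, Derivation.leibniz, Finset.sum_insert ha, Finset.erase_insert ha]
    rw [smul_eq_mul, smul_eq_mul, ih, Finset.mul_sum]
    rw [add_comm, mul_comm]
    congr 1
    refine Finset.sum_congr rfl fun i hi => ?_
    rw [Finset.erase_insert_of_ne (by rintro rfl; exact ha hi : a ≠ i)]
    rw [Finset.prod_insert (fun h => ha (Finset.mem_of_mem_erase h))]
    ring

private theorem deriv_det {m : ℕ} (d : Derivation ℝ (MvPolynomial σ' ℝ) (MvPolynomial σ' ℝ))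
    (M : Matrix (Fin m) (Fin m) (MvPolynomial σ' ℝ)) :
    d M.det = ∑ j, (M.updateCol j fun i => d (M i j)).det := by
  rw [Matrix.det_apply']
  rw [map_sum]
  have key : ∀ σ : Equiv.Perm (Fin m),
      d (((Equiv.Perm.sign σ : ℤ) : MvPolynomial σ' ℝ) * ∏ i, M (σ i) i)
        = ∑ j, ((Equiv.Perm.sign σ : ℤ) : MvPolynomial σ' ℝ)
            * ∏ i, (M.updateCol j fun i => d (M i j)) (σ i) i := by
    intro σ
    rw [Derivation.leibniz, smul_eq_mul, smul_eq_mul]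
    have hd0 : d ((Equiv.Perm.sign σ : ℤ) : MvPolynomial σ' ℝ) = 0 := by
      have h1 : (((Equiv.Perm.sign σ : ℤ) : MvPolynomial σ' ℝ))
          = ((Equiv.Perm.sign σ : ℤ) : ℤ) • (1 : MvPolynomial σ' ℝ) := by
        simp [zsmul_eq_mul]
      rw [h1, map_zsmul]
      simp
    rw [hd0, mul_zero, add_zero, deriv_prod, Finset.mul_sum]
    refine Finset.sum_congr rfl fun j _ => ?_
    rw [← Finset.mul_prod_erase Finset.univ _ (Finset.mem_univ j)]
    rw [Matrix.updateCol_apply, if_pos rfl]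
    have h2 : ∏ i ∈ Finset.univ.erase j, (M.updateCol j fun i => d (M i j)) (σ i) i
        = ∏ i ∈ Finset.univ.erase j, M (σ i) i := by
      refine Finset.prod_congr rfl fun i hi => ?_
      rw [Matrix.updateCol_apply, if_neg (Finset.ne_of_mem_erase hi)]
    rw [h2]
  calc ∑ σ : Equiv.Perm (Fin m),
        d (((Equiv.Perm.sign σ : ℤ) : MvPolynomial σ' ℝ) * ∏ i, M (σ i) i)
      = ∑ σ : Equiv.Perm (Fin m), ∑ j, ((Equiv.Perm.sign σ : ℤ) : MvPolynomial σ' ℝ)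
          * ∏ i, (M.updateCol j fun i => d (M i j)) (σ i) i :=
        Finset.sum_congr rfl fun σ _ => key σ
    _ = ∑ j, (M.updateCol j fun i => d (M i j)).det := by
        rw [Finset.sum_comm]
        exact Finset.sum_congr rfl fun j _ => (Matrix.det_apply' _).symm

private theorem deriv_det_row {m : ℕ} (d : Derivation ℝ (MvPolynomial σ' ℝ) (MvPolynomial σ' ℝ))
    (M : Matrix (Fin m) (Fin m) (MvPolynomial σ' ℝ)) :
    d M.det = ∑ j, (M.updateRow j fun i => d (M j i)).det := by
  rw [← Matrix.det_transpose M, deriv_det]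
  refine Finset.sum_congr rfl fun j _ => ?_
  rw [← Matrix.det_transpose (M.updateRow j fun i => d (M j i))]
  congr 1
  rw [Matrix.updateCol_transpose]
  rfl

private theorem map_deriv_mul {m : ℕ}
    (d : Derivation ℝ (MvPolynomial σ' ℝ) (MvPolynomial σ' ℝ))
    (M N : Matrix (Fin m) (Fin m) (MvPolynomial σ' ℝ)) :
    (M * N).map d = M.map d * N + M * N.map d := by
  ext i j : 1
  simp only [Matrix.map_apply, Matrix.mul_apply, Matrix.add_apply, map_sum]
  rw [← Finset.sum_add_distrib]
  refine Finset.sum_congr rfl fun l _ => ?_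
  rw [Derivation.leibniz, smul_eq_mul, smul_eq_mul]
  ring

private def esingle {m : ℕ} (A : Type*) [CommRing A] (u v : Fin m) : Matrix (Fin m) (Fin m) A :=
  Matrix.of fun i j => if i = u ∧ j = v then 1 else 0

private theorem mul_esingle_mul {m : ℕ} (u v : Fin m) (M N : Matrix (Fin m) (Fin m) A)
    (x y : Fin m) :
    (M * (esingle A u v) * N) x y = M x u * N v y := by
  have h1 : ∀ z, (M * (esingle A u v)) x z = if z = v then M x u else 0 := by
    intro z
    simp only [Matrix.mul_apply, esingle, Matrix.of_apply, mul_ite, mul_one, mul_zero]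
    by_cases hz : z = v
    · subst hz
      simp [Finset.sum_ite_eq', Finset.sum_ite_eq]
    · simp [hz]
  rw [Matrix.mul_apply]
  simp only [h1, ite_mul, zero_mul]
  simp [Finset.sum_ite_eq', Finset.sum_ite_eq]

private theorem gram_det_ne_zero {n m : ℕ} (B₀ W₀ : Matrix (Fin n) (Fin n) ℝ)
    (hWB : W₀ * B₀ = 1) (ρ : Fin m → Fin n) (hρ : Function.Injective ρ) :
    ((B₀ᵀ * B₀).submatrix ρ ρ).det ≠ 0 := by
  intro hdet
  obtain ⟨v, hv, hPv⟩ := (Matrix.exists_mulVec_eq_zero_iff).mpr hdet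
  set G : Matrix (Fin n) (Fin m) ℝ := B₀.submatrix id ρ with hG
  have hsub : (B₀ᵀ * B₀).submatrix ρ ρ = Gᵀ * G := by
    ext p q
    simp [Matrix.mul_apply, hG, Matrix.submatrix_apply, Matrix.transpose_apply]
  set y := G *ᵥ v with hy
  have hyy : y ⬝ᵥ y = 0 := by
    have h1 : (B₀ᵀ * B₀).submatrix ρ ρ *ᵥ v = Gᵀ *ᵥ y := by
      rw [hsub, hy, ← Matrix.mulVec_mulVec]
    have h2 : v ⬝ᵥ (Gᵀ *ᵥ y) = y ⬝ᵥ y := by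
      rw [Matrix.dotProduct_mulVec, Matrix.vecMul_transpose, hy]
    rw [← h2, ← h1, hPv, dotProduct_zero]
  have hy0 : y = 0 := by
    funext r
    have := (Finset.sum_eq_zero_iff_of_nonneg (fun i _ => mul_self_nonneg (y i))).mp hyy r
      (Finset.mem_univ r)
    simpa [mul_self_eq_zero] using this
  classical
  set xh : Fin n → ℝ := fun z => if h : ∃ p, ρ p = z then v h.choose else 0 with hxh
  have hxhρ : ∀ p, xh (ρ p) = v p := by
    intro p
    have hex : ∃ q, ρ q = ρ p := ⟨p, rfl⟩
    have h3 : hex.choose = p := hρ hex.choose_spec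
    simp only [hxh, dif_pos hex, h3]
  have hBx : B₀ *ᵥ xh = y := by
    funext r
    rw [hy, Matrix.mulVec, Matrix.mulVec, dotProduct, dotProduct]
    rw [← Finset.sum_subset (Finset.subset_univ ((Finset.univ : Finset (Fin m)).image ρ))]
    · rw [Finset.sum_image (fun a _ b _ h => hρ h)]
      refine Finset.sum_congr rfl fun p _ => ?_
      rw [hxhρ]
      rfl
    · intro z _ hz
      have h4 : ¬ ∃ p, ρ p = z := by
        rintro ⟨p, rfl⟩
        exact hz (Finset.mem_image_of_mem ρ (Finset.mem_univ p))
      rw [hxh]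
      simp only [dif_neg h4, mul_zero]
  have hxh0 : xh = 0 := by
    have h5 : W₀ *ᵥ (B₀ *ᵥ xh) = xh := by
      rw [Matrix.mulVec_mulVec, hWB, Matrix.one_mulVec]
    rw [hBx, hy0, Matrix.mulVec_zero] at h5
    exact h5.symm
  apply hv
  funext p
  have h6 := congrFun hxh0 (ρ p)
  rw [hxhρ] at h6
  exact h6

private theorem det_updateCol_combo {m : ℕ} {ι : Type*} (M : Matrix (Fin m) (Fin m) ℝ)
    (q : Fin m) (s : Finset ι) (c : ι → ℝ) (v : ι → Fin m → ℝ) :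
    ∑ t ∈ s, c t * (M.updateCol q (v t)).det
      = (M.updateCol q (fun p => ∑ t ∈ s, c t * v t p)).det := by
  classical
  induction s using Finset.induction_on with
  | empty =>
    simp only [Finset.sum_empty]
    rw [eq_comm]
    exact Matrix.det_eq_zero_of_column_eq_zero q (fun i => by
      rw [Matrix.updateCol_apply, if_pos rfl])
  | @insert a s ha ih =>
    rw [Finset.sum_insert ha, ih]
    have h1 : (fun p => ∑ t ∈ insert a s, c t * v t p)
        = (c a • v a) + fun p => ∑ t ∈ s, c t * v t p := by
      funext p
      simp [Finset.sum_insert ha]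
    rw [h1, Matrix.det_updateCol_add, Matrix.det_updateCol_smul]

private theorem det_updateRow_combo {m : ℕ} {ι : Type*} (M : Matrix (Fin m) (Fin m) ℝ)
    (q : Fin m) (s : Finset ι) (c : ι → ℝ) (v : ι → Fin m → ℝ) :
    ∑ t ∈ s, c t * (M.updateRow q (v t)).det
      = (M.updateRow q (fun p => ∑ t ∈ s, c t * v t p)).det := by
  classical
  induction s using Finset.induction_on with
  | empty =>
    simp only [Finset.sum_empty]
    rw [eq_comm]
    exact Matrix.det_eq_zero_of_row_eq_zero q (fun i => by
      rw [Matrix.updateRow_apply, if_pos rfl])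
  | @insert a s ha ih =>
    rw [Finset.sum_insert ha, ih]
    have h1 : (fun p => ∑ t ∈ insert a s, c t * v t p)
        = (c a • v a) + fun p => ∑ t ∈ s, c t * v t p := by
      funext p
      simp [Finset.sum_insert ha]
    rw [h1, Matrix.det_updateRow_add, Matrix.det_updateRow_smul]

end Helpers

set_option maxHeartbeats 1600000 in
/-- For the complete DAG on `Fin n`, for every choice of distinct `i0, j0` and every
`S` not containing them, the partial derivatives of `f` have no common real zero;
in particular `{a | f(a) = 0}` is nonsingular. -/
theorem statement1 (n : ℕ)
    (D : Finset (Fin n × Fin n)) (hD : D = Finset.univ.filter fun e => e.1 < e.2)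
    (i0 j0 : Fin n) (hne : i0 ≠ j0) (S : Finset (Fin n)) (hi0S : i0 ∉ S) (hj0S : j0 ∉ S)
    (a : {e // e ∈ D} → ℝ) :
    ∃ e : {e // e ∈ D}, MvPolynomial.eval a (MvPolynomial.pderiv e (fpoly n D i0 j0 S)) ≠ 0 := by
  classical
  by_contra hcon
  push_neg at hcon
  have hmemD : ∀ p : Fin n × Fin n, p ∈ D ↔ p.1 < p.2 := by
    intro p; subst hD; simp
  set A : Matrix (Fin n) (Fin n) (MvPolynomial {e // e ∈ D} ℝ) := edgeMatrix n D with hAdef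
  set WR : Matrix (Fin n) (Fin n) (MvPolynomial {e // e ∈ D} ℝ) := 1 - A with hWdef
  set BR : Matrix (Fin n) (Fin n) (MvPolynomial {e // e ∈ D} ℝ) := WR.adjugate with hBdef
  have hA0 : ∀ i j : Fin n, ¬ i < j → A i j = 0 := by
    intro i j h
    show edgeMatrix n D i j = 0
    rw [edgeMatrix, Matrix.of_apply, dif_neg]
    intro hmem
    exact h ((hmemD _).mp hmem)
  have hWz : ∀ i j : Fin n, j < i → WR i j = 0 := by
    intro i j h
    rw [hWdef, Matrix.sub_apply, Matrix.one_apply_ne (ne_of_gt h), hA0 i j (lt_asymm h), sub_zero]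
  have hdetW : WR.det = 1 := by
    have hbt : WR.BlockTriangular id := fun i j hij => hWz i j hij
    rw [Matrix.det_of_upperTriangular hbt]
    refine Finset.prod_eq_one fun i _ => ?_
    rw [hWdef, Matrix.sub_apply, Matrix.one_apply_eq, hA0 i i (lt_irrefl i), sub_zero]
  have hWB : WR * BR = 1 := by rw [hBdef, Matrix.mul_adjugate, hdetW, one_smul]
  have hBW : BR * WR = 1 := by rw [hBdef, Matrix.adjugate_mul, hdetW, one_smul]
  have hSig : sigmaMat n D = BRᵀ * BR := by
    have hinv : WR⁻¹ = BR := by rw [Matrix.inv_def, hdetW, Ring.inverse_one, one_smul, hBdef]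
    have hinvT : (WRᵀ)⁻¹ = BRᵀ := by rw [← Matrix.transpose_nonsing_inv, hinv]
    show ((1 - edgeMatrix n D)ᵀ)⁻¹ * (1 - edgeMatrix n D)⁻¹ = BRᵀ * BR
    rw [show (1 - edgeMatrix n D) = WR from rfl, hinvT, hinv]
  set W₀ : Matrix (Fin n) (Fin n) ℝ := WR.map ⇑(eval a) with hW₀def
  set B₀ : Matrix (Fin n) (Fin n) ℝ := BR.map ⇑(eval a) with hB₀def
  set Sg0 : Matrix (Fin n) (Fin n) ℝ := (sigmaMat n D).map ⇑(eval a) with hSg0def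
  have hW₀B₀ : W₀ * B₀ = 1 := by
    have h1 : (eval a).mapMatrix (WR * BR) = (eval a).mapMatrix (1 : Matrix (Fin n) (Fin n) _) :=
      congrArg _ hWB
    rw [_root_.map_mul, _root_.map_one] at h1
    rw [hW₀def, hB₀def, ← RingHom.mapMatrix_apply, ← RingHom.mapMatrix_apply, h1]
  have hSg0BB : Sg0 = B₀ᵀ * B₀ := by
    ext r c
    simp only [hSg0def, hSig, Matrix.map_apply, Matrix.mul_apply, map_sum, _root_.map_mul,
      Matrix.transpose_apply, hB₀def]
  have hW₀z : ∀ i j : Fin n, j < i → W₀ i j = 0 := by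
    intro i j h
    rw [hW₀def, Matrix.map_apply, hWz i j h, map_zero]
  -- entry formula for derivatives of sigma
  have hεentry : ∀ (u t : Fin n) (he : (u, t) ∈ D) (r c : Fin n),
      eval a (pderiv (⟨(u, t), he⟩ : {e // e ∈ D}) ((sigmaMat n D) r c))
        = B₀ t r * Sg0 u c + Sg0 r u * B₀ t c := by
    intro u t he r c
    set e : {e // e ∈ D} := ⟨(u, t), he⟩ with hedef
    set d := pderiv (R := ℝ) e with hddef
    set sg : Matrix (Fin n) (Fin n) (MvPolynomial {e // e ∈ D} ℝ) := esingle _ u t with hsgdef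
    have hδA : ∀ i j : Fin n, d (A i j) = if i = u ∧ j = t then 1 else 0 := by
      intro i j
      show d (edgeMatrix n D i j) = _
      rw [edgeMatrix, Matrix.of_apply]
      by_cases hij : (i, j) ∈ D
      · rw [dif_pos hij]
        by_cases h2 : i = u ∧ j = t
        · obtain ⟨rfl, rfl⟩ := h2
          rw [if_pos ⟨rfl, rfl⟩]
          have : (⟨(i, j), hij⟩ : {e // e ∈ D}) = e := by rw [hedef]
          rw [this, hddef]
          exact pderiv_X_self e
        · rw [if_neg h2, hddef]
          refine pderiv_X_of_ne ?_
          intro h3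
          apply h2
          have := congrArg (fun x => (x : {e // e ∈ D}).1) h3
          simp only [hedef] at this
          exact ⟨congrArg Prod.fst this, congrArg Prod.snd this⟩
      · rw [dif_neg hij, map_zero, if_neg]
        rintro ⟨rfl, rfl⟩
        exact hij he
    have hone : (1 : Matrix (Fin n) (Fin n) (MvPolynomial {e // e ∈ D} ℝ)).map d = 0 := by
      ext i j : 1
      rw [Matrix.map_apply, Matrix.zero_apply]
      by_cases h : i = j
      · subst h; rw [Matrix.one_apply_eq]; exact d.map_one_eq_zero
      · rw [Matrix.one_apply_ne h, map_zero]
    have hδW : WR.map d = -sg := by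
      ext i j : 1
      rw [Matrix.map_apply, hWdef, Matrix.sub_apply, map_sub, Matrix.neg_apply]
      have h1 : d ((1 : Matrix (Fin n) (Fin n) _) i j) = 0 := by
        have := congrFun (congrFun hone i) j
        rwa [Matrix.map_apply, Matrix.zero_apply] at this
      rw [h1, hδA, zero_sub, hsgdef, esingle, Matrix.of_apply]
    have h2 : WR * BR.map d = sg * BR := by
      have h0 := map_deriv_mul d WR BR
      rw [hWB, hone, hδW] at h0
      have h3 : -sg * BR = -(sg * BR) := by rw [neg_mul]
      rw [h3] at h0
      have h4 := congrArg (fun M => sg * BR + M) h0.symm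
      simpa using h4
    have hδB : BR.map d = BR * sg * BR := by
      calc BR.map d = (BR * WR) * BR.map d := by rw [hBW, Matrix.one_mul]
        _ = BR * (WR * BR.map d) := by rw [Matrix.mul_assoc]
        _ = BR * (sg * BR) := by rw [h2]
        _ = BR * sg * BR := by rw [Matrix.mul_assoc]
    have hm : (sigmaMat n D).map d
        = (BR * sg * BR)ᵀ * BR + BRᵀ * (BR * sg * BR) := by
      rw [hSig, map_deriv_mul d BRᵀ BR]
      congr 1
      · congr 1
        ext i j : 1
        rw [Matrix.map_apply, Matrix.transpose_apply, ← hδB, Matrix.transpose_apply,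
          Matrix.map_apply]
      · rw [hδB]
    have e1 : ((BR * sg * BR)ᵀ * BR) r c = BR t r * (BRᵀ * BR) u c := by
      rw [Matrix.mul_apply, Matrix.mul_apply, Finset.mul_sum]
      refine Finset.sum_congr rfl fun z _ => ?_
      simp only [Matrix.transpose_apply, hsgdef]
      rw [mul_esingle_mul]
      ring
    have e2 : (BRᵀ * (BR * sg * BR)) r c = (BRᵀ * BR) r u * BR t c := by
      rw [Matrix.mul_apply, Matrix.mul_apply, Finset.sum_mul]
      refine Finset.sum_congr rfl fun z _ => ?_
      simp only [Matrix.transpose_apply, hsgdef]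
      rw [mul_esingle_mul]
      ring
    have hentry : d ((sigmaMat n D) r c)
        = BR t r * (sigmaMat n D) u c + (sigmaMat n D) r u * BR t c := by
      have h5 := congrFun (congrFun hm r) c
      rw [Matrix.map_apply, Matrix.add_apply, e1, e2, ← hSig] at h5
      exact h5
    rw [hddef] at hentry
    rw [hentry, map_add, _root_.map_mul, _root_.map_mul]
    simp only [hB₀def, hSg0def, Matrix.map_apply]
  -- index bookkeeping
  have hcard : (insert i0 S).card = (insert j0 S).card := by
    rw [Finset.card_insert_of_notMem hi0S, Finset.card_insert_of_notMem hj0S]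
  have hf : fpoly n D i0 j0 S = ((sigmaMat n D).submatrix
      (fun p : Fin (insert i0 S).card => (((insert i0 S).orderIsoOfFin rfl) p : Fin n))
      (fun q : Fin (insert i0 S).card =>
        (((insert j0 S).orderIsoOfFin hcard.symm) q : Fin n))).det := by
    rw [fpoly, subdet, dif_pos hcard]
  set ρ : Fin (insert i0 S).card → Fin n :=
    fun p => (((insert i0 S).orderIsoOfFin rfl) p : Fin n) with hρdef
  set γ : Fin (insert i0 S).card → Fin n :=
    fun q => (((insert j0 S).orderIsoOfFin hcard.symm) q : Fin n) with hγdef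
  set Q₀ : Matrix (Fin (insert i0 S).card) (Fin (insert i0 S).card) ℝ := Sg0.submatrix ρ γ
    with hQ₀def
  have hρmem : ∀ p, ρ p ∈ insert i0 S := fun p => (((insert i0 S).orderIsoOfFin rfl) p).2
  have hγmem : ∀ q, γ q ∈ insert j0 S := fun q => (((insert j0 S).orderIsoOfFin hcard.symm) q).2
  have hρinj : Function.Injective ρ := by
    intro x y h
    exact ((insert i0 S).orderIsoOfFin rfl).injective (Subtype.ext h)
  have hγinj : Function.Injective γ := by
    intro x y h
    exact ((insert j0 S).orderIsoOfFin hcard.symm).injective (Subtype.ext h)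
  have hj0I : j0 ∉ insert i0 S := by
    simp only [Finset.mem_insert]
    rintro (h | h)
    · exact hne h.symm
    · exact hj0S h
  have hi0J : i0 ∉ insert j0 S := by
    simp only [Finset.mem_insert]
    rintro (h | h)
    · exact hne h
    · exact hi0S h
  -- derivative of f via column updates
  have hpdcol : ∀ (e' : {p // p ∈ D}), eval a (pderiv e' (fpoly n D i0 j0 S))
      = ∑ q' : Fin (insert i0 S).card, (Q₀.updateCol q'
          (fun p' => eval a (pderiv e' ((sigmaMat n D) (ρ p') (γ q'))))).det := by
    intro e'
    rw [hf, deriv_det (pderiv e'), map_sum]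
    refine Finset.sum_congr rfl fun q' _ => ?_
    rw [RingHom.map_det]
    congr 1
    ext p' q''
    simp only [RingHom.mapMatrix_apply, Matrix.map_apply, Matrix.updateCol_apply,
      Matrix.submatrix_apply, apply_ite (⇑(eval a)), hQ₀def, hSg0def]
  have hpdrow : ∀ (e' : {p // p ∈ D}), eval a (pderiv e' (fpoly n D i0 j0 S))
      = ∑ p' : Fin (insert i0 S).card, (Q₀.updateRow p'
          (fun q' => eval a (pderiv e' ((sigmaMat n D) (ρ p') (γ q'))))).det := by
    intro e'
    rw [hf, deriv_det_row (pderiv e'), map_sum]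
    refine Finset.sum_congr rfl fun p' _ => ?_
    rw [RingHom.map_det]
    congr 1
    ext p'' q'
    simp only [RingHom.mapMatrix_apply, Matrix.map_apply, Matrix.updateRow_apply,
      Matrix.submatrix_apply, apply_ite (⇑(eval a)), hQ₀def, hSg0def]
  rcases lt_or_gt_of_ne hne with hlt | hlt
  · -- case i0 < j0 : use edges (i0, t) with weights W₀ j0 t
    set q0 : Fin (insert i0 S).card :=
      ((insert j0 S).orderIsoOfFin hcard.symm).symm ⟨j0, Finset.mem_insert_self _ _⟩ with hq0def
    have hγq0 : γ q0 = j0 := by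
      rw [hγdef, hq0def]
      exact congrArg Subtype.val
        (((insert j0 S).orderIsoOfFin hcard.symm).apply_symm_apply ⟨j0, Finset.mem_insert_self _ _⟩)
    have hγeq : ∀ q', γ q' = j0 ↔ q' = q0 :=
      fun q' => ⟨fun h => hγinj (h.trans hγq0.symm), fun h => h ▸ hγq0⟩
    set V : ℝ := ∑ t : Fin n, (if ht : i0 < t then
        W₀ j0 t * eval a (pderiv (⟨(i0, t), (hmemD _).mpr ht⟩ : {e // e ∈ D}) (fpoly n D i0 j0 S))
      else 0) with hVdef
    have hV0 : V = 0 := Finset.sum_eq_zero fun t _ => by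
      split_ifs with h
      · rw [hcon, mul_zero]
      · rfl
    have step1 : ∀ t : Fin n, (if ht : i0 < t then
        W₀ j0 t * eval a (pderiv (⟨(i0, t), (hmemD _).mpr ht⟩ : {e // e ∈ D}) (fpoly n D i0 j0 S))
      else 0) = ∑ q' : Fin (insert i0 S).card, W₀ j0 t *
        (Q₀.updateCol q' (fun p' =>
          B₀ t (ρ p') * Sg0 i0 (γ q') + Sg0 (ρ p') i0 * B₀ t (γ q'))).det := by
      intro t
      by_cases ht : i0 < t
      · rw [dif_pos ht, hpdcol, Finset.mul_sum]
        refine Finset.sum_congr rfl fun q' _ => ?_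
        exact congrArg (fun col => W₀ j0 t * (Q₀.updateCol q' col).det)
          (funext fun p' => hεentry i0 t ((hmemD _).mpr ht) (ρ p') (γ q'))
      · rw [dif_neg ht, eq_comm]
        have hW0 : W₀ j0 t = 0 := hW₀z j0 t (lt_of_le_of_lt (not_lt.mp ht) hlt)
        exact Finset.sum_eq_zero fun q' _ => by rw [hW0, zero_mul]
    have hWBsum : ∀ r : Fin n, (∑ t : Fin n, W₀ j0 t * B₀ t r) = if j0 = r then 1 else 0 := by
      intro r
      rw [← Matrix.mul_apply, hW₀B₀, Matrix.one_apply]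
    have hcolsum : ∀ (q' p' : Fin (insert i0 S).card),
        (∑ t : Fin n, W₀ j0 t * (B₀ t (ρ p') * Sg0 i0 (γ q') + Sg0 (ρ p') i0 * B₀ t (γ q')))
          = Sg0 (ρ p') i0 * (if j0 = γ q' then 1 else 0) := by
      intro q' p'
      have hsplit : (∑ t : Fin n, W₀ j0 t *
            (B₀ t (ρ p') * Sg0 i0 (γ q') + Sg0 (ρ p') i0 * B₀ t (γ q')))
          = (∑ t : Fin n, W₀ j0 t * B₀ t (ρ p')) * Sg0 i0 (γ q')
            + Sg0 (ρ p') i0 * (∑ t : Fin n, W₀ j0 t * B₀ t (γ q')) := by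
        simp only [mul_add]
        rw [Finset.sum_add_distrib, Finset.sum_mul, Finset.mul_sum]
        congr 1
        · exact Finset.sum_congr rfl fun t _ => by ring
        · exact Finset.sum_congr rfl fun t _ => by ring
      rw [hsplit, hWBsum, hWBsum]
      have hzz : (if j0 = ρ p' then (1:ℝ) else 0) = 0 :=
        if_neg (fun h => hj0I (by rw [h]; exact hρmem p'))
      rw [hzz, zero_mul, zero_add]
    have hV2 : V = (Q₀.updateCol q0 (fun p' => Sg0 (ρ p') i0)).det := by
      rw [hVdef, Finset.sum_congr rfl fun t _ => step1 t, Finset.sum_comm]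
      have hq'det : ∀ q' : Fin (insert i0 S).card,
          (∑ t : Fin n, W₀ j0 t * (Q₀.updateCol q' (fun p' =>
            B₀ t (ρ p') * Sg0 i0 (γ q') + Sg0 (ρ p') i0 * B₀ t (γ q'))).det)
          = (Q₀.updateCol q' (fun p' =>
              Sg0 (ρ p') i0 * (if j0 = γ q' then 1 else 0))).det := by
        intro q'
        rw [det_updateCol_combo Q₀ q' Finset.univ (fun t => W₀ j0 t) _]
        exact congrArg (fun col => (Q₀.updateCol q' col).det)
          (funext fun p' => hcolsum q' p')
      rw [Finset.sum_congr rfl fun q' _ => hq'det q']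
      rw [Finset.sum_eq_single q0]
      · exact congrArg (fun col => (Q₀.updateCol q0 col).det)
          (funext fun p' => by rw [if_pos hγq0.symm, mul_one])
      · intro q' _ hq'
        refine Matrix.det_eq_zero_of_column_eq_zero q' fun i => ?_
        rw [Matrix.updateCol_apply, if_pos rfl, if_neg, mul_zero]
        exact fun h => hq' ((hγeq q').mp h.symm)
      · exact fun h => absurd (Finset.mem_univ q0) h
    set g : Fin (insert i0 S).card → Fin (insert i0 S).card := fun q' =>
      if h : q' = q0 then
        ((insert i0 S).orderIsoOfFin rfl).symm ⟨i0, Finset.mem_insert_self _ _⟩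
      else ((insert i0 S).orderIsoOfFin rfl).symm ⟨γ q', by
        rcases Finset.mem_insert.mp (hγmem q') with h1 | h1
        · exact absurd ((hγeq q').mp h1) h
        · exact Finset.mem_insert_of_mem h1⟩ with hgdef
    have hρg : ∀ q', ρ (g q') = if q' = q0 then i0 else γ q' := by
      intro q'
      by_cases h : q' = q0
      · rw [hgdef]
        simp only [dif_pos h, if_pos h, hρdef]
        exact congrArg Subtype.val
          (((insert i0 S).orderIsoOfFin rfl).apply_symm_apply ⟨i0, Finset.mem_insert_self _ _⟩)
      · rw [hgdef]
        simp only [dif_neg h, if_neg h, hρdef]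
        exact congrArg Subtype.val
          (((insert i0 S).orderIsoOfFin rfl).apply_symm_apply ⟨γ q', _⟩)
    have hginj : Function.Injective g := by
      intro x y hxy
      have h1 := congrArg ρ hxy
      rw [hρg x, hρg y] at h1
      by_cases hx : x = q0 <;> by_cases hy : y = q0
      · rw [hx, hy]
      · rw [if_pos hx, if_neg hy] at h1
        exact absurd (by rw [h1]; exact hγmem y) hi0J
      · rw [if_neg hx, if_pos hy] at h1
        exact absurd (by rw [← h1]; exact hγmem x) hi0J
      · rw [if_neg hx, if_neg hy] at h1
        exact hγinj h1
    have hgbij : Function.Bijective g := Finite.injective_iff_bijective.mp hginj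
    set gp : Equiv.Perm (Fin (insert i0 S).card) := Equiv.ofBijective g hgbij with hgpdef
    have hNP : Q₀.updateCol q0 (fun p' => Sg0 (ρ p') i0)
        = (Sg0.submatrix ρ ρ).submatrix id ⇑gp := by
      ext p' q'
      rw [Matrix.submatrix_apply, Matrix.submatrix_apply, id_eq]
      have hgp : gp q' = g q' := rfl
      rw [hgp, hρg q']
      rw [Matrix.updateCol_apply, hQ₀def, Matrix.submatrix_apply]
      by_cases h : q' = q0
      · rw [if_pos h, if_pos h]
      · rw [if_neg h, if_neg h]
    have hdet0 : (Sg0.submatrix ρ ρ).det ≠ 0 := by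
      rw [hSg0BB]
      exact gram_det_ne_zero B₀ W₀ hW₀B₀ ρ hρinj
    have hVfin : V ≠ 0 := by
      rw [hV2, hNP, Matrix.det_permute' gp]
      rcases Int.units_eq_one_or (Equiv.Perm.sign gp) with h | h <;> rw [h] <;>
        simpa using hdet0
    exact hVfin hV0
  · -- case j0 < i0 : use edges (j0, t) with weights W₀ i0 t
    set p0 : Fin (insert i0 S).card :=
      ((insert i0 S).orderIsoOfFin rfl).symm ⟨i0, Finset.mem_insert_self _ _⟩ with hp0def
    have hρp0 : ρ p0 = i0 := by
      rw [hρdef, hp0def]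
      exact congrArg Subtype.val
        (((insert i0 S).orderIsoOfFin rfl).apply_symm_apply ⟨i0, Finset.mem_insert_self _ _⟩)
    have hρeq : ∀ p', ρ p' = i0 ↔ p' = p0 :=
      fun p' => ⟨fun h => hρinj (h.trans hρp0.symm), fun h => h ▸ hρp0⟩
    set V : ℝ := ∑ t : Fin n, (if ht : j0 < t then
        W₀ i0 t * eval a (pderiv (⟨(j0, t), (hmemD _).mpr ht⟩ : {e // e ∈ D}) (fpoly n D i0 j0 S))
      else 0) with hVdef
    have hV0 : V = 0 := Finset.sum_eq_zero fun t _ => by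
      split_ifs with h
      · rw [hcon, mul_zero]
      · rfl
    have step1 : ∀ t : Fin n, (if ht : j0 < t then
        W₀ i0 t * eval a (pderiv (⟨(j0, t), (hmemD _).mpr ht⟩ : {e // e ∈ D}) (fpoly n D i0 j0 S))
      else 0) = ∑ p' : Fin (insert i0 S).card, W₀ i0 t *
        (Q₀.updateRow p' (fun q' =>
          B₀ t (ρ p') * Sg0 j0 (γ q') + Sg0 (ρ p') j0 * B₀ t (γ q'))).det := by
      intro t
      by_cases ht : j0 < t
      · rw [dif_pos ht, hpdrow, Finset.mul_sum]
        refine Finset.sum_congr rfl fun p' _ => ?_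
        exact congrArg (fun row => W₀ i0 t * (Q₀.updateRow p' row).det)
          (funext fun q' => hεentry j0 t ((hmemD _).mpr ht) (ρ p') (γ q'))
      · rw [dif_neg ht, eq_comm]
        have hW0 : W₀ i0 t = 0 := hW₀z i0 t (lt_of_le_of_lt (not_lt.mp ht) hlt)
        exact Finset.sum_eq_zero fun p' _ => by rw [hW0, zero_mul]
    have hWBsum : ∀ r : Fin n, (∑ t : Fin n, W₀ i0 t * B₀ t r) = if i0 = r then 1 else 0 := by
      intro r
      rw [← Matrix.mul_apply, hW₀B₀, Matrix.one_apply]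
    have hrowsum : ∀ (p' q' : Fin (insert i0 S).card),
        (∑ t : Fin n, W₀ i0 t * (B₀ t (ρ p') * Sg0 j0 (γ q') + Sg0 (ρ p') j0 * B₀ t (γ q')))
          = (if i0 = ρ p' then 1 else 0) * Sg0 j0 (γ q') := by
      intro p' q'
      have hsplit : (∑ t : Fin n, W₀ i0 t *
            (B₀ t (ρ p') * Sg0 j0 (γ q') + Sg0 (ρ p') j0 * B₀ t (γ q')))
          = (∑ t : Fin n, W₀ i0 t * B₀ t (ρ p')) * Sg0 j0 (γ q')
            + Sg0 (ρ p') j0 * (∑ t : Fin n, W₀ i0 t * B₀ t (γ q')) := by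
        simp only [mul_add]
        rw [Finset.sum_add_distrib, Finset.sum_mul, Finset.mul_sum]
        congr 1
        · exact Finset.sum_congr rfl fun t _ => by ring
        · exact Finset.sum_congr rfl fun t _ => by ring
      rw [hsplit, hWBsum, hWBsum]
      have hzz : (if i0 = γ q' then (1:ℝ) else 0) = 0 :=
        if_neg (fun h => hi0J (by rw [h]; exact hγmem q'))
      rw [hzz, mul_zero, add_zero]
    have hV2 : V = (Q₀.updateRow p0 (fun q' => Sg0 j0 (γ q'))).det := by
      rw [hVdef, Finset.sum_congr rfl fun t _ => step1 t, Finset.sum_comm]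
      have hp'det : ∀ p' : Fin (insert i0 S).card,
          (∑ t : Fin n, W₀ i0 t * (Q₀.updateRow p' (fun q' =>
            B₀ t (ρ p') * Sg0 j0 (γ q') + Sg0 (ρ p') j0 * B₀ t (γ q'))).det)
          = (Q₀.updateRow p' (fun q' =>
              (if i0 = ρ p' then 1 else 0) * Sg0 j0 (γ q'))).det := by
        intro p'
        rw [det_updateRow_combo Q₀ p' Finset.univ (fun t => W₀ i0 t) _]
        exact congrArg (fun row => (Q₀.updateRow p' row).det)
          (funext fun q' => hrowsum p' q')
      rw [Finset.sum_congr rfl fun p' _ => hp'det p']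
      rw [Finset.sum_eq_single p0]
      · exact congrArg (fun row => (Q₀.updateRow p0 row).det)
          (funext fun q' => by rw [if_pos hρp0.symm, one_mul])
      · intro p' _ hp'
        refine Matrix.det_eq_zero_of_row_eq_zero p' fun i => ?_
        rw [Matrix.updateRow_apply, if_pos rfl, if_neg, zero_mul]
        exact fun h => hp' ((hρeq p').mp h.symm)
      · exact fun h => absurd (Finset.mem_univ p0) h
    set g : Fin (insert i0 S).card → Fin (insert i0 S).card := fun p' =>
      if h : p' = p0 then
        ((insert j0 S).orderIsoOfFin hcard.symm).symm ⟨j0, Finset.mem_insert_self _ _⟩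
      else ((insert j0 S).orderIsoOfFin hcard.symm).symm ⟨ρ p', by
        rcases Finset.mem_insert.mp (hρmem p') with h1 | h1
        · exact absurd ((hρeq p').mp h1) h
        · exact Finset.mem_insert_of_mem h1⟩ with hgdef
    have hγg : ∀ p', γ (g p') = if p' = p0 then j0 else ρ p' := by
      intro p'
      by_cases h : p' = p0
      · rw [hgdef]
        simp only [dif_pos h, if_pos h, hγdef]
        exact congrArg Subtype.val
          (((insert j0 S).orderIsoOfFin hcard.symm).apply_symm_apply
            ⟨j0, Finset.mem_insert_self _ _⟩)
      · rw [hgdef]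
        simp only [dif_neg h, if_neg h, hγdef]
        exact congrArg Subtype.val
          (((insert j0 S).orderIsoOfFin hcard.symm).apply_symm_apply ⟨ρ p', _⟩)
    have hginj : Function.Injective g := by
      intro x y hxy
      have h1 := congrArg γ hxy
      rw [hγg x, hγg y] at h1
      by_cases hx : x = p0 <;> by_cases hy : y = p0
      · rw [hx, hy]
      · rw [if_pos hx, if_neg hy] at h1
        exact absurd (by rw [h1]; exact hρmem y) hj0I
      · rw [if_neg hx, if_pos hy] at h1
        exact absurd (by rw [← h1]; exact hρmem x) hj0I
      · rw [if_neg hx, if_neg hy] at h1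
        exact hρinj h1
    have hgbij : Function.Bijective g := Finite.injective_iff_bijective.mp hginj
    set gp : Equiv.Perm (Fin (insert i0 S).card) := Equiv.ofBijective g hgbij with hgpdef
    have hNP : Q₀.updateRow p0 (fun q' => Sg0 j0 (γ q'))
        = (Sg0.submatrix γ γ).submatrix ⇑gp id := by
      ext p' q'
      rw [Matrix.submatrix_apply, Matrix.submatrix_apply, id_eq]
      have hgp : gp p' = g p' := rfl
      rw [hgp, hγg p']
      rw [Matrix.updateRow_apply, hQ₀def, Matrix.submatrix_apply]
      by_cases h : p' = p0
      · rw [if_pos h, if_pos h]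
      · rw [if_neg h, if_neg h]
    have hdet0 : (Sg0.submatrix γ γ).det ≠ 0 := by
      rw [hSg0BB]
      exact gram_det_ne_zero B₀ W₀ hW₀B₀ γ hγinj
    have hVfin : V ≠ 0 := by
      rw [hV2, hNP, Matrix.det_permute gp]
      rcases Int.units_eq_one_or (Equiv.Perm.sign gp) with h | h <;> rw [h] <;>
        simpa using hdet0
    exact hVfin hV0
end

section
/- The map Φ given by Φ(a, d) = (a', ω) with a'_{(i,j)} = a_{(i,j)} · d_j / d_i for (i,j) ∈ D and ω_m = d_m² for m ∈ Fin n is a bijection from {a ∈ ℝ^D : f(a) = 0} × (ℝ_{>0})^n onto {(a', ω) ∈ ℝ^D × (ℝ_{>0})^n : f_Ω(a', ω) = 0}, with inverse given by (a', ω) ↦ (a, d) where a_{(i,j)} = a'_{(i,j)} · √ω_i / √ω_j and d_m = √ω_m. -/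
open MvPolynomial Matrix

noncomputable section

/-- The real matrix of edge weights `a`. -/
def edgeMatrixR (n : ℕ) (D : Finset (Fin n × Fin n)) (a : {e // e ∈ D} → ℝ) :
    Matrix (Fin n) (Fin n) ℝ :=
  Matrix.of fun i j => if h : (i, j) ∈ D then a ⟨(i, j), h⟩ else 0

/-- `Σ_Ω(a, ω) = (I - A(a))⁻ᵀ · diag(ω) · (I - A(a))⁻¹`. -/
def sigmaOm (n : ℕ) (D : Finset (Fin n × Fin n)) (a : {e // e ∈ D} → ℝ) (ω : Fin n → ℝ) :
    Matrix (Fin n) (Fin n) ℝ :=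
  ((1 - edgeMatrixR n D a)ᵀ)⁻¹ * Matrix.diagonal ω * (1 - edgeMatrixR n D a)⁻¹

/-- `f_Ω(a, ω) = det Σ_Ω(a, ω)[S ∪ {i0}, S ∪ {j0}]`. -/
def fOm (n : ℕ) (D : Finset (Fin n × Fin n)) (i0 j0 : Fin n) (S : Finset (Fin n))
    (a : {e // e ∈ D} → ℝ) (ω : Fin n → ℝ) : ℝ :=
  subdet (sigmaOm n D a ω) (insert i0 S) (insert j0 S)

section AuxLemmas

variable {n : ℕ}

lemma det_one_sub_su {R : Type*} [CommRing R] (B : Matrix (Fin n) (Fin n) R)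
    (hB : ∀ i j, ¬ i < j → B i j = 0) : (1 - B).det = 1 := by
  have h : (1 - B).BlockTriangular id := by
    intro i j hij
    have h1 : B i j = 0 := hB i j (fun h => absurd (h.trans hij) (lt_irrefl _))
    have h2 : i ≠ j := hij.ne'
    simp [Matrix.sub_apply, Matrix.one_apply, h1, h2]
  rw [Matrix.det_of_upperTriangular h]
  refine Finset.prod_eq_one fun i _ => ?_
  simp [Matrix.sub_apply, hB i i (lt_irrefl i)]

lemma inv_eq_adj {R : Type*} [CommRing R] (M : Matrix (Fin n) (Fin n) R) (h : M.det = 1) :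
    M⁻¹ = M.adjugate := by
  rw [Matrix.inv_def, h, Ring.inverse_one, one_smul]

lemma map_inv' {R S : Type*} [CommRing R] [CommRing S] (φ : R →+* S)
    (M : Matrix (Fin n) (Fin n) R) (h : M.det = 1) : (M⁻¹).map φ = (M.map φ)⁻¹ := by
  have h2 : (M.map φ).det = 1 := by
    rw [← RingHom.mapMatrix_apply, ← RingHom.map_det, h, _root_.map_one]
  rw [inv_eq_adj M h, inv_eq_adj _ h2, ← RingHom.mapMatrix_apply, RingHom.map_adjugate,
    RingHom.mapMatrix_apply]

lemma edgeMatrixR_su (n : ℕ) (D : Finset (Fin n × Fin n)) (hD : ∀ e ∈ D, e.1 < e.2)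
    (a : {e // e ∈ D} → ℝ) : ∀ i j, ¬ i < j → edgeMatrixR n D a i j = 0 := by
  intro i j hij
  simp only [edgeMatrixR, Matrix.of_apply]
  split
  · exact absurd (hD _ ‹_›) hij
  · rfl

lemma diag_mul_diag_inv (d : Fin n → ℝ) (hd : ∀ m, d m ≠ 0) :
    Matrix.diagonal d * Matrix.diagonal (fun m => (d m)⁻¹) = 1 := by
  rw [Matrix.diagonal_mul_diagonal]
  rw [show (fun m => d m * (d m)⁻¹) = fun _ => (1:ℝ) from funext fun m => mul_inv_cancel₀ (hd m)]
  exact Matrix.diagonal_one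

lemma diag_inv_mul_diag (d : Fin n → ℝ) (hd : ∀ m, d m ≠ 0) :
    Matrix.diagonal (fun m => (d m)⁻¹) * Matrix.diagonal d = 1 := by
  rw [Matrix.diagonal_mul_diagonal]
  rw [show (fun m => (d m)⁻¹ * d m) = fun _ => (1:ℝ) from funext fun m => inv_mul_cancel₀ (hd m)]
  exact Matrix.diagonal_one

lemma sigmaOm_scale (n : ℕ) (D : Finset (Fin n × Fin n)) (hD : ∀ e ∈ D, e.1 < e.2)
    (a : {e // e ∈ D} → ℝ) (d : Fin n → ℝ) (hd : ∀ m, d m ≠ 0) :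
    sigmaOm n D (fun e => a e * d e.1.2 / d e.1.1) (fun m => d m ^ 2)
      = Matrix.diagonal d * sigmaOm n D a 1 * Matrix.diagonal d := by
  set E := 1 - edgeMatrixR n D a with hE
  have hdetE : E.det = 1 := det_one_sub_su _ (edgeMatrixR_su n D hD a)
  have hconj : (1 : Matrix (Fin n) (Fin n) ℝ)
      - edgeMatrixR n D (fun e => a e * d e.1.2 / d e.1.1)
      = Matrix.diagonal (fun m => (d m)⁻¹) * E * Matrix.diagonal d := by
    ext i j
    simp only [hE, Matrix.mul_diagonal, Matrix.diagonal_mul, Matrix.sub_apply,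
      Matrix.one_apply, edgeMatrixR, Matrix.of_apply]
    by_cases hmem : (i, j) ∈ D
    · have hij : i ≠ j := ne_of_lt (hD _ hmem)
      rw [dif_pos hmem, dif_pos hmem, if_neg hij]
      field_simp
      ring
    · rw [dif_neg hmem, dif_neg hmem]
      by_cases hij : i = j
      · subst hij
        simp [hd i]
      · simp [hij]
  have hDi : (Matrix.diagonal d)⁻¹ = Matrix.diagonal (fun m => (d m)⁻¹) :=
    Matrix.inv_eq_right_inv (diag_mul_diag_inv d hd)
  have hDd : (Matrix.diagonal (fun m => (d m)⁻¹))⁻¹ = Matrix.diagonal d :=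
    Matrix.inv_eq_right_inv (diag_inv_mul_diag d hd)
  have hdiagsq : Matrix.diagonal (fun m => d m ^ 2) = Matrix.diagonal d * Matrix.diagonal d := by
    rw [Matrix.diagonal_mul_diagonal,
      show (fun m => d m * d m) = fun m => d m ^ 2 from funext fun m => (sq (d m)).symm]
  have hEmul : E * E⁻¹ = 1 := Matrix.mul_nonsing_inv E (by rw [hdetE]; exact isUnit_one)
  have hEtmul : Eᵀ * Eᵀ⁻¹ = 1 :=
    Matrix.mul_nonsing_inv Eᵀ (by rw [Matrix.det_transpose, hdetE]; exact isUnit_one)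
  set Dd := Matrix.diagonal d with hDdDef
  set Di := Matrix.diagonal (fun m => (d m)⁻¹) with hDiDef
  have h2 : (Di * E * Dd)⁻¹ = Di * E⁻¹ * Dd := by
    refine Matrix.inv_eq_right_inv ?_
    calc Di * E * Dd * (Di * E⁻¹ * Dd)
        = Di * (E * (Dd * Di) * E⁻¹) * Dd := by simp only [Matrix.mul_assoc]
      _ = Di * (E * E⁻¹) * Dd := by rw [diag_mul_diag_inv d hd, Matrix.mul_one]
      _ = 1 := by rw [hEmul, Matrix.mul_one, diag_inv_mul_diag d hd]
  have h1 : ((Di * E * Dd)ᵀ)⁻¹ = Dd * Eᵀ⁻¹ * Di := by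
    have ht : (Di * E * Dd)ᵀ = Dd * Eᵀ * Di := by
      rw [Matrix.transpose_mul, Matrix.transpose_mul, hDdDef, hDiDef,
        Matrix.diagonal_transpose, Matrix.diagonal_transpose, Matrix.mul_assoc]
    rw [ht]
    refine Matrix.inv_eq_right_inv ?_
    calc Dd * Eᵀ * Di * (Dd * Eᵀ⁻¹ * Di)
        = Dd * (Eᵀ * (Di * Dd) * Eᵀ⁻¹) * Di := by simp only [Matrix.mul_assoc]
      _ = Dd * (Eᵀ * Eᵀ⁻¹) * Di := by rw [diag_inv_mul_diag d hd, Matrix.mul_one]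
      _ = 1 := by rw [hEtmul, Matrix.mul_one, diag_mul_diag_inv d hd]
  unfold sigmaOm
  rw [← hE, hconj, h1, h2, hdiagsq]
  rw [show Matrix.diagonal (1 : Fin n → ℝ) = 1 from Matrix.diagonal_one, Matrix.mul_one]
  calc Dd * Eᵀ⁻¹ * Di * (Dd * Dd) * (Di * E⁻¹ * Dd)
      = Dd * Eᵀ⁻¹ * ((Di * Dd) * ((Dd * Di) * (E⁻¹ * Dd))) := by simp only [Matrix.mul_assoc]
    _ = Dd * Eᵀ⁻¹ * (E⁻¹ * Dd) := by
        rw [diag_inv_mul_diag d hd, diag_mul_diag_inv d hd, Matrix.one_mul, Matrix.one_mul]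
    _ = Dd * (Eᵀ⁻¹ * E⁻¹) * Dd := by simp only [Matrix.mul_assoc]

lemma prod_orderIso (d : Fin n → ℝ) (I : Finset (Fin n)) {k : ℕ} (h : I.card = k) :
    ∏ p : Fin k, d ((I.orderIsoOfFin h) p : Fin n) = ∏ i ∈ I, d i := by
  rw [← Finset.prod_coe_sort I d]
  exact Fintype.prod_equiv (I.orderIsoOfFin h).toEquiv _ _ (fun p => rfl)

lemma subdet_scale (d : Fin n → ℝ) (M : Matrix (Fin n) (Fin n) ℝ) (I J : Finset (Fin n)) :
    subdet (Matrix.diagonal d * M * Matrix.diagonal d) I J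
      = (∏ i ∈ I, d i) * ((∏ j ∈ J, d j) * subdet M I J) := by
  unfold subdet
  by_cases h : I.card = J.card
  · rw [dif_pos h, dif_pos h]
    set r := fun p : Fin I.card => ((I.orderIsoOfFin rfl) p : Fin n)
    set c := fun p : Fin I.card => ((J.orderIsoOfFin h.symm) p : Fin n)
    have hsub : (Matrix.diagonal d * M * Matrix.diagonal d).submatrix r c
        = Matrix.diagonal (fun p => d (r p)) * M.submatrix r c
            * Matrix.diagonal (fun q => d (c q)) := by
      ext p q
      simp [Matrix.mul_diagonal, Matrix.diagonal_mul, Matrix.submatrix_apply]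
    rw [hsub, Matrix.det_mul, Matrix.det_mul, Matrix.det_diagonal, Matrix.det_diagonal]
    rw [show (∏ p, d (r p)) = ∏ i ∈ I, d i from prod_orderIso d I rfl,
      show (∏ q, d (c q)) = ∏ j ∈ J, d j from prod_orderIso d J h.symm]
    ring
  · rw [dif_neg h, dif_neg h]
    ring

lemma edgeMatrix_su (n : ℕ) (D : Finset (Fin n × Fin n)) (hD : ∀ e ∈ D, e.1 < e.2) :
    ∀ i j, ¬ i < j → edgeMatrix n D i j = 0 := by
  intro i j hij
  simp only [edgeMatrix, Matrix.of_apply]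
  split
  · exact absurd (hD _ ‹_›) hij
  · rfl

lemma map_one_sub_edge (n : ℕ) (D : Finset (Fin n × Fin n)) (a : {e // e ∈ D} → ℝ) :
    (1 - edgeMatrix n D).map (eval a) = 1 - edgeMatrixR n D a := by
  ext i j
  simp only [Matrix.map_apply, Matrix.sub_apply, Matrix.one_apply, edgeMatrix, edgeMatrixR,
    Matrix.of_apply, map_sub]
  congr 1
  · split <;> simp
  · split <;> simp

lemma map_sigmaMat (n : ℕ) (D : Finset (Fin n × Fin n)) (hD : ∀ e ∈ D, e.1 < e.2)
    (a : {e // e ∈ D} → ℝ) : (sigmaMat n D).map (eval a) = sigmaOm n D a 1 := by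
  have hdet : (1 - edgeMatrix n D).det = 1 := det_one_sub_su _ (edgeMatrix_su n D hD)
  have hdetT : ((1 - edgeMatrix n D)ᵀ).det = 1 := by rw [Matrix.det_transpose, hdet]
  unfold sigmaMat sigmaOm
  rw [Matrix.map_mul (f := (eval a : MvPolynomial {e // e ∈ D} ℝ →+* ℝ)),
    map_inv' _ _ hdetT, map_inv' _ _ hdet, Matrix.transpose_map, map_one_sub_edge]
  rw [show Matrix.diagonal (1 : Fin n → ℝ) = 1 from Matrix.diagonal_one, Matrix.mul_one]

lemma eval_subdet {D : Finset (Fin n × Fin n)} (a : {e // e ∈ D} → ℝ) (M : Matrix (Fin n) (Fin n) (MvPolynomial {e // e ∈ D} ℝ))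
    (I J : Finset (Fin n)) : eval a (subdet M I J) = subdet (M.map (eval a)) I J := by
  unfold subdet
  by_cases h : I.card = J.card
  · rw [dif_pos h, dif_pos h, RingHom.map_det, RingHom.mapMatrix_apply, Matrix.submatrix_map]
  · rw [dif_neg h, dif_neg h, map_zero]

lemma eval_fpoly (n : ℕ) (D : Finset (Fin n × Fin n)) (hD : ∀ e ∈ D, e.1 < e.2)
    (i0 j0 : Fin n) (S : Finset (Fin n)) (a : {e // e ∈ D} → ℝ) :
    eval a (fpoly n D i0 j0 S) = fOm n D i0 j0 S a 1 := by
  unfold fpoly fOm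
  rw [eval_subdet, map_sigmaMat n D hD]

lemma fOm_scale (n : ℕ) (D : Finset (Fin n × Fin n)) (hD : ∀ e ∈ D, e.1 < e.2)
    (i0 j0 : Fin n) (S : Finset (Fin n)) (a : {e // e ∈ D} → ℝ) (d : Fin n → ℝ)
    (hd : ∀ m, d m ≠ 0) :
    fOm n D i0 j0 S (fun e => a e * d e.1.2 / d e.1.1) (fun m => d m ^ 2)
      = (∏ i ∈ insert i0 S, d i) * ((∏ j ∈ insert j0 S, d j)
          * eval a (fpoly n D i0 j0 S)) := by
  unfold fOm
  rw [sigmaOm_scale n D hD a d hd, subdet_scale, eval_fpoly n D hD]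
  rfl


end AuxLemmas

/-- The map `Φ(a, d) = ((a_{ij} d_j / d_i)_{(i,j) ∈ D}, (d_m²)_m)` is a bijection from
`H_f × ℝ_{>0}^n` onto `H_{f_Ω}`, with the stated inverse. -/
theorem statement2 (n : ℕ) (D : Finset (Fin n × Fin n)) (hD : ∀ e ∈ D, e.1 < e.2)
    (i0 j0 : Fin n) (hne : i0 ≠ j0) (S : Finset (Fin n)) (hi0S : i0 ∉ S) (hj0S : j0 ∉ S) :
    Set.BijOn
      (fun p : ({e // e ∈ D} → ℝ) × (Fin n → ℝ) =>
        ((fun e => p.1 e * p.2 e.1.2 / p.2 e.1.1, fun m => p.2 m ^ 2) :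
          ({e // e ∈ D} → ℝ) × (Fin n → ℝ)))
      ({a | MvPolynomial.eval a (fpoly n D i0 j0 S) = 0} ×ˢ {d | ∀ m, 0 < d m})
      {q | fOm n D i0 j0 S q.1 q.2 = 0 ∧ ∀ m, 0 < q.2 m} ∧
    Set.InvOn
      (fun q : ({e // e ∈ D} → ℝ) × (Fin n → ℝ) =>
        ((fun e => q.1 e * Real.sqrt (q.2 e.1.1) / Real.sqrt (q.2 e.1.2),
          fun m => Real.sqrt (q.2 m)) : ({e // e ∈ D} → ℝ) × (Fin n → ℝ)))
      (fun p : ({e // e ∈ D} → ℝ) × (Fin n → ℝ) =>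
        ((fun e => p.1 e * p.2 e.1.2 / p.2 e.1.1, fun m => p.2 m ^ 2) :
          ({e // e ∈ D} → ℝ) × (Fin n → ℝ)))
      ({a | MvPolynomial.eval a (fpoly n D i0 j0 S) = 0} ×ˢ {d | ∀ m, 0 < d m})
      {q | fOm n D i0 j0 S q.1 q.2 = 0 ∧ ∀ m, 0 < q.2 m} := by
  classical
  set src := ({a | MvPolynomial.eval a (fpoly n D i0 j0 S) = 0} ×ˢ {d | ∀ m, 0 < d m} :
    Set (({e // e ∈ D} → ℝ) × (Fin n → ℝ)))
  set tgt := ({q : ({e // e ∈ D} → ℝ) × (Fin n → ℝ) |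
    fOm n D i0 j0 S q.1 q.2 = 0 ∧ ∀ m, 0 < q.2 m})
  set Φ := (fun p : ({e // e ∈ D} → ℝ) × (Fin n → ℝ) =>
    ((fun e => p.1 e * p.2 e.1.2 / p.2 e.1.1, fun m => p.2 m ^ 2) :
      ({e // e ∈ D} → ℝ) × (Fin n → ℝ))) with hΦ
  set g := (fun q : ({e // e ∈ D} → ℝ) × (Fin n → ℝ) =>
    ((fun e => q.1 e * Real.sqrt (q.2 e.1.1) / Real.sqrt (q.2 e.1.2),
      fun m => Real.sqrt (q.2 m)) : ({e // e ∈ D} → ℝ) × (Fin n → ℝ))) with hg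
  have hmapsto : Set.MapsTo Φ src tgt := by
    rintro ⟨a, d⟩ ⟨ha, hd⟩
    have hd' : ∀ m, d m ≠ 0 := fun m => (hd m).ne'
    refine ⟨?_, fun m => pow_pos (hd m) 2⟩
    show fOm n D i0 j0 S (fun e => a e * d e.1.2 / d e.1.1) (fun m => d m ^ 2) = 0
    rw [fOm_scale n D hD i0 j0 S a d hd', ha, mul_zero, mul_zero]
  have hleft : Set.LeftInvOn g Φ src := by
    rintro ⟨a, d⟩ ⟨-, hd⟩
    have hs : ∀ m, Real.sqrt (d m ^ 2) = d m := fun m => by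
      rw [Real.sqrt_sq (hd m).le]
    have hd' : ∀ m, d m ≠ 0 := fun m => (hd m).ne'
    show ((fun e => (a e * d e.1.2 / d e.1.1) * Real.sqrt (d e.1.1 ^ 2)
        / Real.sqrt (d e.1.2 ^ 2), fun m => Real.sqrt (d m ^ 2)) :
      ({e // e ∈ D} → ℝ) × (Fin n → ℝ)) = (a, d)
    refine Prod.ext ?_ (funext fun m => hs m)
    funext e
    simp only [hs]
    rw [div_mul_eq_mul_div, div_div, div_eq_iff (mul_ne_zero (hd' _) (hd' _))]
    ring
  have hrightinv : Set.RightInvOn g Φ tgt := by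
    rintro ⟨a, ω⟩ ⟨-, hω⟩
    have hsq : ∀ m, Real.sqrt (ω m) ^ 2 = ω m := fun m => Real.sq_sqrt (hω m).le
    have hne0 : ∀ m, Real.sqrt (ω m) ≠ 0 := fun m => (Real.sqrt_pos.mpr (hω m)).ne'
    show ((fun e => (a e * Real.sqrt (ω e.1.1) / Real.sqrt (ω e.1.2)) * Real.sqrt (ω e.1.2)
        / Real.sqrt (ω e.1.1), fun m => Real.sqrt (ω m) ^ 2) :
      ({e // e ∈ D} → ℝ) × (Fin n → ℝ)) = (a, ω)
    refine Prod.ext ?_ (funext fun m => hsq m)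
    funext e
    show a e * Real.sqrt (ω e.1.1) / Real.sqrt (ω e.1.2) * Real.sqrt (ω e.1.2)
      / Real.sqrt (ω e.1.1) = a e
    rw [div_mul_eq_mul_div, div_div, div_eq_iff (mul_ne_zero (hne0 _) (hne0 _))]
    ring
  have hgmaps : Set.MapsTo g tgt src := by
    rintro ⟨a, ω⟩ hq
    obtain ⟨hq0, hω⟩ := hq
    have hne0 : ∀ m, Real.sqrt (ω m) ≠ 0 := fun m => (Real.sqrt_pos.mpr (hω m)).ne'
    refine ⟨?_, fun m => Real.sqrt_pos.mpr (hω m)⟩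
    have heq := hrightinv (show ((a, ω) : ({e // e ∈ D} → ℝ) × (Fin n → ℝ)) ∈ tgt from ⟨hq0, hω⟩)
    set a0 : {e // e ∈ D} → ℝ :=
      fun e => a e * Real.sqrt (ω e.1.1) / Real.sqrt (ω e.1.2) with ha0
    set d0 : Fin n → ℝ := fun m => Real.sqrt (ω m) with hd0
    show MvPolynomial.eval a0 (fpoly n D i0 j0 S) = 0
    have hscale := fOm_scale n D hD i0 j0 S a0 d0 hne0
    have h1 : (fun e => a0 e * d0 e.1.2 / d0 e.1.1) = a :=
      funext fun e => congrFun (congrArg Prod.fst heq) e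
    have h2 : (fun m => d0 m ^ 2) = ω := funext fun m => congrFun (congrArg Prod.snd heq) m
    rw [h1, h2, hq0] at hscale
    have hc1 : (∏ i ∈ insert i0 S, d0 i) ≠ 0 :=
      Finset.prod_ne_zero_iff.mpr fun i _ => hne0 i
    have hc2 : (∏ j ∈ insert j0 S, d0 j) ≠ 0 :=
      Finset.prod_ne_zero_iff.mpr fun j _ => hne0 j
    rcases mul_eq_zero.mp hscale.symm with h | h
    · exact absurd h hc1
    rcases mul_eq_zero.mp h with h' | h'
    · exact absurd h' hc2
    · exact h'
  exact ⟨Set.InvOn.bijOn ⟨hleft, hrightinv⟩ hmapsto hgmaps, ⟨hleft, hrightinv⟩⟩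

end
end

section
/- For every a ∈ ℝ^D, ω ∈ (ℝ_{>0})^n and d ∈ (ℝ_{>0})^n one has diag(d) * Σ_Ω(a, ω) * diag(d) = Σ_Ω(a', ω'), where a'_{(i,j)} = d_i⁻¹ · a_{(i,j)} · d_j for each (i,j) ∈ D and ω'_m = d_m² · ω_m for each m ∈ Fin n. -/
open Matrix

noncomputable section

/-- `diag(d) · Σ_Ω(a, ω) · diag(d) = Σ_Ω(a', ω')` with
`a'_{(i,j)} = d_i⁻¹ · a_{(i,j)} · d_j` and `ω'_m = d_m² · ω_m`. -/
theorem statement3 (n : ℕ) (D : Finset (Fin n × Fin n)) (hD : ∀ e ∈ D, e.1 < e.2)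
    (a : {e // e ∈ D} → ℝ) (ω d : Fin n → ℝ) (hω : ∀ m, 0 < ω m) (hd : ∀ m, 0 < d m) :
    Matrix.diagonal d * sigmaOm n D a ω * Matrix.diagonal d =
      sigmaOm n D (fun e => (d e.1.1)⁻¹ * a e * d e.1.2) (fun m => d m ^ 2 * ω m) := by
  set A := edgeMatrixR n D a with hA
  have hd0 : ∀ m, d m ≠ 0 := fun m => (hd m).ne'
  have key : 1 - edgeMatrixR n D (fun e => (d e.1.1)⁻¹ * a e * d e.1.2)
      = Matrix.diagonal (fun m => (d m)⁻¹) * (1 - A) * Matrix.diagonal d := by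
    ext i j
    rw [Matrix.mul_diagonal, Matrix.diagonal_mul]
    by_cases hij : i = j
    · subst hij
      simp only [hA, edgeMatrixR, Matrix.sub_apply, Matrix.one_apply_eq, Matrix.of_apply]
      split_ifs with h
      · exact absurd (hD _ h) (lt_irrefl i)
      · field_simp
        exact (div_self (hd0 i)).symm
    · simp only [hA, edgeMatrixR, Matrix.sub_apply, Matrix.one_apply_ne hij, Matrix.of_apply]
      split_ifs with h <;> ring
  have hdd : Matrix.diagonal (fun m => (d m)⁻¹) * Matrix.diagonal d = 1 := by
    rw [Matrix.diagonal_mul_diagonal]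
    convert Matrix.diagonal_one using 2
    funext m
    exact inv_mul_cancel₀ (hd0 m)
  have hdd' : Matrix.diagonal d * Matrix.diagonal (fun m => (d m)⁻¹) = 1 := by
    rw [Matrix.diagonal_mul_diagonal]
    convert Matrix.diagonal_one using 2
    funext m
    exact mul_inv_cancel₀ (hd0 m)
  have hdiaginv : (Matrix.diagonal d)⁻¹ = Matrix.diagonal (fun m => (d m)⁻¹) :=
    Matrix.inv_eq_right_inv hdd'
  have hdiaginv' : (Matrix.diagonal (fun m => (d m)⁻¹))⁻¹ = Matrix.diagonal d :=
    Matrix.inv_eq_right_inv hdd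
  have keyT : (1 - edgeMatrixR n D (fun e => (d e.1.1)⁻¹ * a e * d e.1.2))ᵀ
      = Matrix.diagonal d * (1 - A)ᵀ * Matrix.diagonal (fun m => (d m)⁻¹) := by
    rw [key]
    simp [Matrix.transpose_mul, Matrix.diagonal_transpose, Matrix.mul_assoc]
  have hmid : Matrix.diagonal (fun m => (d m)⁻¹) * Matrix.diagonal (fun m => d m ^ 2 * ω m)
      * Matrix.diagonal (fun m => (d m)⁻¹) = Matrix.diagonal ω := by
    rw [Matrix.diagonal_mul_diagonal, Matrix.diagonal_mul_diagonal]
    exact congrArg Matrix.diagonal (funext fun m => by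
      field_simp
      exact mul_div_cancel_left₀ (ω m) (hd0 m))
  unfold sigmaOm
  rw [keyT, key, Matrix.mul_inv_rev, Matrix.mul_inv_rev, Matrix.mul_inv_rev,
    Matrix.mul_inv_rev, hdiaginv, hdiaginv']
  have h1 : ∀ X : Matrix (Fin n) (Fin n) ℝ,
      Matrix.diagonal (fun m => (d m)⁻¹) * (Matrix.diagonal (fun m => d m ^ 2 * ω m)
        * (Matrix.diagonal (fun m => (d m)⁻¹) * X)) = Matrix.diagonal ω * X := by
    intro X
    rw [← Matrix.mul_assoc, ← Matrix.mul_assoc, hmid]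
  simp only [Matrix.mul_assoc, ← hA]
  rw [h1 ((1 - A)⁻¹ * Matrix.diagonal d)]

end
end

section
/- For all subsets I, J ⊆ Fin n of equal cardinality, all a ∈ ℝ^D, ω ∈ (ℝ_{>0})^n and d ∈ (ℝ_{>0})^n: det Σ_Ω(a', ω')[I,J] = (∏_{i ∈ I} d_i) · (∏_{j ∈ J} d_j) · det Σ_Ω(a, ω)[I,J], where a'_{(i,j)} = d_i⁻¹ · a_{(i,j)} · d_j for each (i,j) ∈ D and ω'_m = d_m² · ω_m for each m ∈ Fin n. -/
open Matrix

noncomputable section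

lemma sigma_rescale (n : ℕ) (D : Finset (Fin n × Fin n))
    (a : {e // e ∈ D} → ℝ) (ω d : Fin n → ℝ) (hd : ∀ m, 0 < d m) :
    sigmaOm n D (fun e => (d e.1.1)⁻¹ * a e * d e.1.2) (fun m => d m ^ 2 * ω m) =
      Matrix.diagonal d * sigmaOm n D a ω * Matrix.diagonal d := by
  set A := edgeMatrixR n D a with hAdef
  set E : Matrix (Fin n) (Fin n) ℝ := Matrix.diagonal d with hE
  set F : Matrix (Fin n) (Fin n) ℝ := Matrix.diagonal (fun i => (d i)⁻¹) with hF
  have hd0 : ∀ m, d m ≠ 0 := fun m => (hd m).ne'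
  have hEF : E * F = 1 := by
    rw [hE, hF, Matrix.diagonal_mul_diagonal]
    rw [show (fun i => d i * (d i)⁻¹) = fun _ => (1:ℝ) from funext fun i => mul_inv_cancel₀ (hd0 i)]
    exact Matrix.diagonal_one
  have hFE : F * E = 1 := by
    rw [hE, hF, Matrix.diagonal_mul_diagonal]
    rw [show (fun i => (d i)⁻¹ * d i) = fun _ => (1:ℝ) from funext fun i => inv_mul_cancel₀ (hd0 i)]
    exact Matrix.diagonal_one
  have hEinv : E⁻¹ = F := Matrix.inv_eq_right_inv hEF
  have hFinv : F⁻¹ = E := Matrix.inv_eq_right_inv hFE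
  have hA' : edgeMatrixR n D (fun e => (d e.1.1)⁻¹ * a e * d e.1.2) = F * A * E := by
    ext i j
    rw [hAdef, hE, hF]
    simp only [Matrix.diagonal_mul, Matrix.mul_diagonal, edgeMatrixR, Matrix.of_apply]
    split_ifs with h
    · ring
    · ring
  have hone : (1 : Matrix (Fin n) (Fin n) ℝ) - edgeMatrixR n D
      (fun e => (d e.1.1)⁻¹ * a e * d e.1.2) = F * (1 - A) * E := by
    rw [hA', Matrix.mul_sub, Matrix.sub_mul, Matrix.mul_one, hFE]
  have hinv : ((1 : Matrix (Fin n) (Fin n) ℝ) - edgeMatrixR n D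
      (fun e => (d e.1.1)⁻¹ * a e * d e.1.2))⁻¹ = F * (1 - A)⁻¹ * E := by
    rw [hone, Matrix.mul_inv_rev, Matrix.mul_inv_rev, hEinv, hFinv, Matrix.mul_assoc]
  have htinv : (((1 : Matrix (Fin n) (Fin n) ℝ) - edgeMatrixR n D
      (fun e => (d e.1.1)⁻¹ * a e * d e.1.2))ᵀ)⁻¹ = E * ((1 - A)ᵀ)⁻¹ * F := by
    rw [hone, Matrix.transpose_mul, Matrix.transpose_mul, hE, hF,
      Matrix.diagonal_transpose, Matrix.diagonal_transpose, ← hE, ← hF,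
      Matrix.mul_inv_rev, Matrix.mul_inv_rev, hEinv, hFinv, Matrix.mul_assoc]
  have hdiag : Matrix.diagonal (fun m => d m ^ 2 * ω m) = E * Matrix.diagonal ω * E := by
    rw [hE, Matrix.diagonal_mul_diagonal, Matrix.diagonal_mul_diagonal]
    rw [show (fun m => d m ^ 2 * ω m) = fun m => d m * ω m * d m from funext fun m => by ring]
  have key : ∀ X : Matrix (Fin n) (Fin n) ℝ, F * (E * X) = X := fun X => by
    rw [← Matrix.mul_assoc, hFE, Matrix.one_mul]
  have key2 : ∀ X : Matrix (Fin n) (Fin n) ℝ, E * (F * X) = X := fun X => by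
    rw [← Matrix.mul_assoc, hEF, Matrix.one_mul]
  rw [sigmaOm, sigmaOm, htinv, hinv, hdiag]
  simp only [Matrix.mul_assoc, key, key2]
  rfl

lemma subdet_scale_s4 {n k : ℕ} (M : Matrix (Fin n) (Fin n) ℝ) (d : Fin n → ℝ)
    (r c : Fin k → Fin n) :
    ((Matrix.diagonal d * M * Matrix.diagonal d).submatrix r c).det =
      (∏ p, d (r p)) * (∏ p, d (c p)) * (M.submatrix r c).det := by
  have : (Matrix.diagonal d * M * Matrix.diagonal d).submatrix r c =
      Matrix.diagonal (fun p => d (r p)) * M.submatrix r c * Matrix.diagonal (fun p => d (c p)) := by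
    ext p q
    simp [Matrix.mul_diagonal, Matrix.diagonal_mul, Matrix.submatrix_apply]
  rw [this, Matrix.det_mul, Matrix.det_mul, Matrix.det_diagonal, Matrix.det_diagonal]
  ring

/-- Rescaling by `d` scales `det Σ_Ω[I,J]` by `(∏_{i ∈ I} d_i) · (∏_{j ∈ J} d_j)`. -/
theorem statement4 (n : ℕ) (D : Finset (Fin n × Fin n)) (hD : ∀ e ∈ D, e.1 < e.2)
    (I J : Finset (Fin n)) (hIJ : I.card = J.card)
    (a : {e // e ∈ D} → ℝ) (ω d : Fin n → ℝ) (hω : ∀ m, 0 < ω m) (hd : ∀ m, 0 < d m) :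
    subdet (sigmaOm n D (fun e => (d e.1.1)⁻¹ * a e * d e.1.2) (fun m => d m ^ 2 * ω m)) I J =
      (∏ i ∈ I, d i) * (∏ j ∈ J, d j) * subdet (sigmaOm n D a ω) I J := by
  rw [sigma_rescale n D a ω d hd]
  rw [subdet, subdet, dif_pos hIJ, dif_pos hIJ, subdet_scale_s4]
  have hI : (∏ p : Fin I.card, d ((I.orderIsoOfFin rfl) p : Fin n)) = ∏ i ∈ I, d i := by
    rw [← Finset.prod_coe_sort I d]
    exact Fintype.prod_equiv (I.orderIsoOfFin rfl).toEquiv _ _ (fun p => rfl)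
  have hJ : (∏ p : Fin I.card, d ((J.orderIsoOfFin hIJ.symm) p : Fin n)) = ∏ j ∈ J, d j := by
    rw [← Finset.prod_coe_sort J d]
    exact Fintype.prod_equiv (J.orderIsoOfFin hIJ.symm).toEquiv _ _ (fun p => rfl)
  rw [hI, hJ]

end
end

section
/- If s ∈ S and (s,j) ∈ D, then the variable X_{(s,j)} does not occur in f; that is, (s,j) is not in the set of variables of the multivariate polynomial f. -/
open MvPolynomial Matrix

/-- If `s ∈ S` and `s → j`, then the variable `X_{(s,j)}` does not occur in `f`. -/
theorem statement5 (n : ℕ) (D : Finset (Fin n × Fin n)) (hD : ∀ e ∈ D, e.1 < e.2)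
    (i0 j0 : Fin n) (hne : i0 ≠ j0) (S : Finset (Fin n)) (hi0S : i0 ∉ S) (hj0S : j0 ∉ S)
    (s j : Fin n) (hs : s ∈ S) (hsj : (s, j) ∈ D) :
    (⟨(s, j), hsj⟩ : {e // e ∈ D}) ∉ (fpoly n D i0 j0 S).vars := by
  classical
  set v0 : {e // e ∈ D} := ⟨(s, j), hsj⟩ with hv0def
  set g : {e // e ∈ D} → MvPolynomial {e // e ∈ D} ℝ :=
    fun k => if k = v0 then 0 else X k with hgdef
  have hsltj : s < j := hD _ hsj
  set φ : MvPolynomial {e // e ∈ D} ℝ →+* MvPolynomial {e // e ∈ D} ℝ :=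
    (bind₁ g).toRingHom with hφdef
  have hφapp : ∀ p, φ p = bind₁ g p := fun _ => rfl
  set A := edgeMatrix n D with hAdef
  set A₀ := A.map φ with hA0def
  have hAapp : ∀ a b, A a b =
      if h : (a, b) ∈ D then X (⟨(a, b), h⟩ : {e // e ∈ D}) else 0 := fun a b => rfl
  have hAupper : ∀ a b : Fin n, ¬ a < b → A a b = 0 := by
    intro a b hab
    rw [hAapp]
    split_ifs with h
    · exact absurd (hD _ h) hab
    · rfl
  have hA0app : ∀ a b, A₀ a b = φ (A a b) := fun a b => rfl
  have hA0upper : ∀ a b : Fin n, ¬ a < b → A₀ a b = 0 := by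
    intro a b hab; rw [hA0app, hAupper a b hab, map_zero]
  have htri : ∀ M : Matrix (Fin n) (Fin n) (MvPolynomial {e // e ∈ D} ℝ),
      (∀ a b : Fin n, ¬ a < b → M a b = 0) → BlockTriangular (1 - M) id := by
    intro M hM a b hab
    simp only [id_eq] at hab
    rw [Matrix.sub_apply, Matrix.one_apply_ne (ne_of_gt hab), hM a b (not_lt_of_gt hab),
      sub_zero]
  have hdet : ∀ M : Matrix (Fin n) (Fin n) (MvPolynomial {e // e ∈ D} ℝ),
      (∀ a b : Fin n, ¬ a < b → M a b = 0) → (1 - M).det = 1 := by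
    intro M hM
    rw [Matrix.det_of_upperTriangular (htri M hM)]
    apply Finset.prod_eq_one
    intro i _
    rw [Matrix.sub_apply, Matrix.one_apply_eq, hM i i (lt_irrefl i), sub_zero]
  have hdetA : (1 - A).det = 1 := hdet A hAupper
  have huA : IsUnit (1 - A).det := by rw [hdetA]; exact isUnit_one
  set B := (1 - A)⁻¹ with hBdef
  have hBl : (1 - A) * B = 1 := Matrix.mul_nonsing_inv _ huA
  have hBr : B * (1 - A) = 1 := Matrix.nonsing_inv_mul _ huA
  set B₀ := B.map φ with hB0def
  have hmap1A : (1 - A).map φ = 1 - A₀ := by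
    ext a b
    by_cases h : a = b <;>
      simp [Matrix.map_apply, Matrix.sub_apply, Matrix.one_apply, h, hA0app]
  have hB0l : (1 - A₀) * B₀ = 1 := by
    calc (1 - A₀) * B₀ = ((1 - A) * B).map φ := by
          rw [Matrix.map_mul, hmap1A]
      _ = 1 := by rw [hBl, Matrix.map_one φ (map_zero φ) (map_one φ)]
  have hB0r : B₀ * (1 - A₀) = 1 := by
    calc B₀ * (1 - A₀) = (B * (1 - A)).map φ := by
          rw [Matrix.map_mul, hmap1A]
      _ = 1 := by rw [hBr, Matrix.map_one φ (map_zero φ) (map_one φ)]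
  have hA0det : (1 - A₀).det = 1 := hdet A₀ hA0upper
  haveI : Invertible (1 - A₀) :=
    (1 - A₀).invertibleOfIsUnitDet (by rw [hA0det]; exact isUnit_one)
  have hB0eq : (1 - A₀)⁻¹ = B₀ := Matrix.inv_eq_right_inv hB0l
  have hB0tri : BlockTriangular B₀ id := by
    rw [← hB0eq]
    exact Matrix.blockTriangular_inv_of_blockTriangular (htri A₀ hA0upper)
  have hB0js : B₀ j s = 0 := hB0tri hsltj
  set x : MvPolynomial {e // e ∈ D} ℝ := X v0 with hxdef
  set E : Matrix (Fin n) (Fin n) (MvPolynomial {e // e ∈ D} ℝ) :=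
    Matrix.of (fun a b => if a = s ∧ b = j then x else 0) with hEdef
  have hEapp : ∀ a b, E a b = if a = s ∧ b = j then x else 0 := fun a b => rfl
  have hAdecomp : A = A₀ + E := by
    ext a b
    rw [Matrix.add_apply, hA0app, hEapp, hAapp]
    by_cases h : (a, b) ∈ D
    · rw [dif_pos h]
      by_cases h2 : a = s ∧ b = j
      · obtain ⟨rfl, rfl⟩ := h2
        have hv : (⟨(a, b), h⟩ : {e // e ∈ D}) = v0 := rfl
        rw [hv, if_pos ⟨rfl, rfl⟩, hφapp, bind₁_X_right, hgdef]
        simp [hxdef]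
      · have hv : (⟨(a, b), h⟩ : {e // e ∈ D}) ≠ v0 := by
          intro hc
          apply h2
          have := congrArg Subtype.val hc
          exact ⟨congrArg Prod.fst this, congrArg Prod.snd this⟩
        rw [if_neg h2, hφapp, bind₁_X_right, hgdef]
        simp [hv]
    · rw [dif_neg h, if_neg ?_, map_zero, add_zero]
      rintro ⟨rfl, rfl⟩
      exact h hsj
  set w : Fin n → MvPolynomial {e // e ∈ D} ℝ := fun b => x * B₀ j b with hwdef
  have hw_s : w s = 0 := by rw [hwdef]; simp [hB0js]
  have hEB : ∀ a b, (E * B₀) a b = if a = s then w b else 0 := by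
    intro a b
    rw [Matrix.mul_apply]
    rw [Finset.sum_eq_single j
      (fun l _ hl => by rw [hEapp, if_neg (fun hc => hl hc.2), zero_mul])
      (fun h => absurd (Finset.mem_univ j) h)]
    rw [hEapp]
    by_cases ha : a = s
    · rw [if_pos ⟨ha, rfl⟩, if_pos ha, hwdef]
    · rw [if_neg (fun hc => ha hc.1), if_neg ha, zero_mul]
  have hEBE : E * B₀ * E = 0 := by
    rw [← Matrix.ext_iff]
    intro a b
    rw [Matrix.mul_apply, Matrix.zero_apply]
    apply Finset.sum_eq_zero
    intro l _
    rw [hEB, hEapp]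
    by_cases ha : a = s
    · rw [if_pos ha]
      by_cases hl : l = s ∧ b = j
      · obtain ⟨rfl, rfl⟩ := hl
        rw [hw_s, zero_mul]
      · rw [if_neg hl, mul_zero]
    · rw [if_neg ha, zero_mul]
  set P : Matrix (Fin n) (Fin n) (MvPolynomial {e // e ∈ D} ℝ) := 1 + E * B₀ with hPdef
  have hkey : (1 - A) * (B₀ * P) = 1 := by
    have h1 : (1 : Matrix (Fin n) (Fin n) (MvPolynomial {e // e ∈ D} ℝ)) - A
        = (1 - A₀) - E := by rw [hAdecomp, sub_add_eq_sub_sub]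
    rw [h1, hPdef, Matrix.mul_add, Matrix.mul_one, Matrix.sub_mul, Matrix.mul_add,
      Matrix.mul_add, hB0l]
    rw [← Matrix.mul_assoc (1 - A₀) B₀ (E * B₀), hB0l, Matrix.one_mul]
    have h2 : E * (B₀ * (E * B₀)) = 0 := by
      rw [← Matrix.mul_assoc E B₀ (E * B₀), ← Matrix.mul_assoc (E * B₀) E B₀, hEBE,
        Matrix.zero_mul]
    rw [h2, add_zero, add_sub_cancel_right]
  have hBeq : B = B₀ * P := by rw [hBdef]; exact Matrix.inv_eq_right_inv hkey
  set Sg := B₀ᵀ * B₀ with hSgdef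
  have hsig : sigmaMat n D = Bᵀ * B := by
    rw [hBdef, hAdef, sigmaMat, Matrix.transpose_nonsing_inv]
  have hsigmap : (sigmaMat n D).map φ = Sg := by
    rw [hsig, Matrix.map_mul, Matrix.transpose_map, hSgdef, hB0def]
  have hT : ∀ a b, (Sg * P) a b = Sg a b + Sg a s * w b := by
    intro a b
    rw [hPdef, Matrix.mul_add, Matrix.mul_one, Matrix.add_apply]
    congr 1
    rw [Matrix.mul_apply]
    rw [Finset.sum_eq_single s
      (fun l _ hl => by rw [hEB, if_neg hl, mul_zero])
      (fun h => absurd (Finset.mem_univ s) h)]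
    rw [hEB, if_pos rfl]
  have hfact : Bᵀ * B = (Sg * P) + (E * B₀)ᵀ * (Sg * P) := by
    rw [hBeq, Matrix.transpose_mul, Matrix.mul_assoc, ← Matrix.mul_assoc B₀ᵀ B₀ P,
      ← hSgdef]
    nth_rewrite 1 [hPdef]
    rw [Matrix.transpose_add, Matrix.transpose_one, Matrix.add_mul, Matrix.one_mul]
  have hBB : ∀ a b, (Bᵀ * B) a b = (Sg * P) a b + w a * (Sg * P) s b := by
    intro a b
    rw [hfact, Matrix.add_apply]
    congr 1
    rw [Matrix.mul_apply]
    rw [Finset.sum_eq_single s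
      (fun l _ hl => by rw [Matrix.transpose_apply, hEB, if_neg hl, zero_mul])
      (fun h => absurd (Finset.mem_univ s) h)]
    rw [Matrix.transpose_apply, hEB, if_pos rfl]
  -- now the submatrix business
  have hcard : (insert i0 S).card = (insert j0 S).card := by
    rw [Finset.card_insert_of_notMem hi0S, Finset.card_insert_of_notMem hj0S]
  set r : Fin (insert i0 S).card → Fin n :=
    fun p => (((insert i0 S).orderIsoOfFin rfl) p : Fin n) with hrdef
  set c : Fin (insert i0 S).card → Fin n :=
    fun p => (((insert j0 S).orderIsoOfFin hcard.symm) p : Fin n) with hcdef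
  have hf : fpoly n D i0 j0 S = ((sigmaMat n D).submatrix r c).det := by
    rw [fpoly, subdet, dif_pos hcard]
  have hsI : s ∈ insert i0 S := Finset.mem_insert_of_mem hs
  have hsJ : s ∈ insert j0 S := Finset.mem_insert_of_mem hs
  set s' := ((insert i0 S).orderIsoOfFin rfl).symm ⟨s, hsI⟩ with hs'def
  have hrs' : r s' = s := by rw [hrdef]; simp [hs'def]
  set t' := ((insert j0 S).orderIsoOfFin hcard.symm).symm ⟨s, hsJ⟩ with ht'def
  have hct' : c t' = s := by rw [hcdef]; simp [ht'def]
  set N := Sg.submatrix r c with hNdef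
  set u' : Fin (insert i0 S).card → MvPolynomial {e // e ∈ D} ℝ := fun p => w (r p) with hu'def
  set v' : Fin (insert i0 S).card → MvPolynomial {e // e ∈ D} ℝ := fun q => w (c q) with hv'def
  set L : Matrix (Fin (insert i0 S).card) (Fin (insert i0 S).card) (MvPolynomial {e // e ∈ D} ℝ) :=
    1 + Matrix.replicateCol Unit u' * Matrix.replicateRow Unit (Pi.single s' (1 : MvPolynomial {e // e ∈ D} ℝ)) with hLdef
  set R' : Matrix (Fin (insert i0 S).card) (Fin (insert i0 S).card) (MvPolynomial {e // e ∈ D} ℝ) :=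
    1 + Matrix.replicateCol Unit (Pi.single t' (1 : MvPolynomial {e // e ∈ D} ℝ)) * Matrix.replicateRow Unit v' with hR'def
  have hcolrow : ∀ (u v : Fin (insert i0 S).card → MvPolynomial {e // e ∈ D} ℝ) p q,
      (Matrix.replicateCol Unit u * Matrix.replicateRow Unit v) p q = u p * v q := by
    intro u v p q
    rw [Matrix.mul_apply]
    simp [Matrix.replicateCol, Matrix.replicateRow]
  have hNR : ∀ p q, (N * R') p q = N p q + N p t' * v' q := by
    intro p q
    rw [hR'def, Matrix.mul_add, Matrix.mul_one, Matrix.add_apply]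
    congr 1
    rw [Matrix.mul_apply]
    rw [Finset.sum_eq_single t'
      (fun l _ hl => by rw [hcolrow, Pi.single_eq_of_ne hl, zero_mul, mul_zero])
      (fun h => absurd (Finset.mem_univ t') h)]
    rw [hcolrow, Pi.single_eq_same, one_mul]
  have hLNR : ∀ (X : Matrix (Fin (insert i0 S).card) (Fin (insert i0 S).card)
      (MvPolynomial {e // e ∈ D} ℝ)) p q, (L * X) p q = X p q + u' p * X s' q := by
    intro X p q
    rw [hLdef, Matrix.add_mul, Matrix.one_mul, Matrix.add_apply]
    congr 1
    rw [Matrix.mul_apply]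
    rw [Finset.sum_eq_single s'
      (fun l _ hl => by rw [hcolrow, Pi.single_eq_of_ne hl, mul_zero, zero_mul])
      (fun h => absurd (Finset.mem_univ s') h)]
    rw [hcolrow, Pi.single_eq_same, mul_one]
  have hmain : (Bᵀ * B).submatrix r c = L * (N * R') := by
    ext p q
    rw [Matrix.submatrix_apply, hBB, hT, hT, hLNR, hNR, hNR]
    simp only [hNdef, Matrix.submatrix_apply, hrs', hct', hu'def, hv'def]
    try ring
  have hdetL : L.det = 1 := by
    rw [hLdef, Matrix.det_one_add_replicateCol_mul_replicateRow, single_dotProduct, hu'def]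
    simp only [hrs', hw_s]
    rw [mul_zero, add_zero]
  have hdetR : R'.det = 1 := by
    rw [hR'def, Matrix.det_one_add_replicateCol_mul_replicateRow, dotProduct_single, hv'def]
    simp only [hct', hw_s]
    rw [zero_mul, add_zero]
  have hfix : (bind₁ g) (fpoly n D i0 j0 S) = fpoly n D i0 j0 S := by
    rw [← hφapp, hf, RingHom.map_det, RingHom.mapMatrix_apply, ← Matrix.submatrix_map]
    rw [hsigmap, hsig, hmain, Matrix.det_mul, Matrix.det_mul, hdetL, hdetR, one_mul, mul_one,
      hNdef]
  intro hv
  rw [← hfix] at hv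
  obtain ⟨i, _, hi⟩ := mem_vars_bind₁ g _ hv
  by_cases h : i = v0
  · rw [hgdef] at hi
    simp only [h, if_pos rfl, vars_0] at hi
    exact absurd hi (Finset.notMem_empty _)
  · rw [hgdef] at hi
    simp only [if_neg h, vars_X] at hi
    rw [Finset.mem_singleton] at hi
    exact h hi.symm
end

section
/- Suppose D contains no edge whose source lies in S, and let s ∈ S with (i0,s) ∈ D. Then the variable X_{(i0,s)} appears at most linearly in f (its degree in f is at most 1), the formal partial derivative ∂f/∂X_{(i0,s)} equals ε · det Σ[S ∪ {i0}, (S \ {s}) ∪ {j0, i0}] for some sign ε ∈ {1, −1}, and consequently det Σ[S ∪ {i0}, (S \ {s}) ∪ {j0, i0}] lies in the ideal of R generated by the partial derivatives {∂f/∂X_e : e ∈ D}. -/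
open MvPolynomial Matrix

section Aux
variable {σ' : Type*} [DecidableEq σ']

lemma pderiv_finset_prod' {ι : Type*} [DecidableEq ι] (x : σ') (t : Finset ι)
    (g : ι → MvPolynomial σ' ℝ) :
    pderiv x (∏ i ∈ t, g i) = ∑ i ∈ t, pderiv x (g i) * ∏ j ∈ t.erase i, g j := by
  induction t using Finset.induction_on with
  | empty => simp
  | @insert a t' ha ih =>
      rw [Finset.prod_insert ha, pderiv_mul, ih, Finset.sum_insert ha, Finset.erase_insert ha,
        Finset.mul_sum]
      congr 1
      apply Finset.sum_congr rfl
      intro i hi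
      have hai : a ≠ i := fun h => ha (h ▸ hi)
      rw [Finset.erase_insert_of_ne hai,
        Finset.prod_insert (fun h => ha (Finset.mem_of_mem_erase h))]
      ring

lemma pderiv_det' {m : Type*} [DecidableEq m] [Fintype m] (x : σ')
    (M : Matrix m m (MvPolynomial σ' ℝ)) :
    pderiv x M.det = ∑ p, (M.updateRow p fun q => pderiv x (M p q)).det := by
  have key : ∀ σ : Equiv.Perm m,
      pderiv x (((Equiv.Perm.sign σ : ℤ) : MvPolynomial σ' ℝ) * ∏ i, M (σ i) i)
        = ∑ p, ((Equiv.Perm.sign σ : ℤ) : MvPolynomial σ' ℝ) *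
            ∏ i, (M.updateRow p fun q => pderiv x (M p q)) (σ i) i := by
    intro σ
    have hc : pderiv x (((Equiv.Perm.sign σ : ℤ) : MvPolynomial σ' ℝ)) = 0 := by
      rw [show (((Equiv.Perm.sign σ : ℤ)) : MvPolynomial σ' ℝ)
          = C (((Equiv.Perm.sign σ : ℤ)) : ℝ) from (map_intCast (C : ℝ →+* _) _).symm, pderiv_C]
    rw [pderiv_mul, hc, zero_mul, zero_add, pderiv_finset_prod', Finset.mul_sum,
      ← Equiv.sum_comp σ (fun p => ((Equiv.Perm.sign σ : ℤ) : MvPolynomial σ' ℝ) *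
          ∏ i, (M.updateRow p fun q => pderiv x (M p q)) (σ i) i)]
    apply Finset.sum_congr rfl
    intro j _
    congr 1
    rw [← Finset.mul_prod_erase Finset.univ _ (Finset.mem_univ j)]
    congr 1
    · rw [Matrix.updateRow_self]
    · apply Finset.prod_congr rfl
      intro i hi
      rw [Matrix.updateRow_ne (fun h => (Finset.mem_erase.mp hi).1 (σ.injective h))]
  calc pderiv x M.det
      = ∑ σ : Equiv.Perm m, pderiv x (((Equiv.Perm.sign σ : ℤ) : MvPolynomial σ' ℝ)
          * ∏ i, M (σ i) i) := by rw [Matrix.det_apply', map_sum]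
    _ = ∑ σ : Equiv.Perm m, ∑ p, ((Equiv.Perm.sign σ : ℤ) : MvPolynomial σ' ℝ) *
          ∏ i, (M.updateRow p fun q => pderiv x (M p q)) (σ i) i :=
        Finset.sum_congr rfl fun σ _ => key σ
    _ = ∑ p, ∑ σ : Equiv.Perm m, ((Equiv.Perm.sign σ : ℤ) : MvPolynomial σ' ℝ) *
          ∏ i, (M.updateRow p fun q => pderiv x (M p q)) (σ i) i := Finset.sum_comm
    _ = _ := Finset.sum_congr rfl fun p _ => (Matrix.det_apply' _).symm

lemma coeff_pderiv' (x : σ') (f : MvPolynomial σ' ℝ) (d : σ' →₀ ℕ) :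
    coeff d (pderiv x f) = ((d x : ℝ) + 1) * coeff (d + Finsupp.single x 1) f := by
  induction f using MvPolynomial.induction_on' with
  | add p q hp hq => simp [hp, hq, mul_add]
  | monomial m a =>
      rw [pderiv_monomial, coeff_monomial, coeff_monomial]
      by_cases h : m = d + Finsupp.single x 1
      · subst h
        rw [add_tsub_cancel_right, if_pos rfl, if_pos rfl, Finsupp.add_apply,
          Finsupp.single_eq_same]
        push_cast
        ring
      · rw [if_neg h, mul_zero]
        by_cases hmx : m x = 0
        · simp [hmx]
        · rw [if_neg]
          intro hd
          apply h
          have hle : Finsupp.single x 1 ≤ m := by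
            rw [Finsupp.single_le_iff]; omega
          rw [← hd, tsub_add_cancel_of_le hle]

lemma degreeOf_le_one_of_pderiv2 (x : σ') (f : MvPolynomial σ' ℝ)
    (h : pderiv x (pderiv x f) = 0) : degreeOf x f ≤ 1 := by
  rw [degreeOf_le_iff]
  intro m hm
  by_contra hc
  push_neg at hc
  have h2 : Finsupp.single x 2 ≤ m := by rw [Finsupp.single_le_iff]; omega
  set d : σ' →₀ ℕ := m - Finsupp.single x 2 with hdd
  have hthis := congrArg (coeff d) h
  rw [coeff_pderiv', coeff_pderiv', coeff_zero] at hthis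
  have hsum : d + Finsupp.single x 1 + Finsupp.single x 1 = m := by
    ext y
    rw [hdd]
    simp only [Finsupp.add_apply, Finsupp.tsub_apply, Finsupp.single_apply]
    by_cases hy : x = y
    · subst hy; simp; omega
    · simp [hy]
  rw [hsum] at hthis
  have hcf : coeff m f ≠ 0 := MvPolynomial.mem_support_iff.mp hm
  have key : ∀ k : ℕ, ((k : ℝ) + 1) ≠ 0 := fun k => by positivity
  rcases mul_eq_zero.mp hthis with h' | h'
  · exact key _ h'
  rcases mul_eq_zero.mp h' with h'' | h''
  · exact key _ h''
  · exact hcf h''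

end Aux

/-- If no edge of `D` starts in `S`, `s ∈ S` and `i0 → s`, then `X_{(i0,s)}` appears at most
linearly in `f`, its partial derivative is `± det Σ[S ∪ {i0}, (S \ {s}) ∪ {j0, i0}]`, and this
determinant lies in the ideal generated by the partial derivatives of `f`. -/
theorem statement6 (n : ℕ) (D : Finset (Fin n × Fin n)) (hD : ∀ e ∈ D, e.1 < e.2)
    (i0 j0 : Fin n) (hne : i0 ≠ j0) (S : Finset (Fin n)) (hi0S : i0 ∉ S) (hj0S : j0 ∉ S)
    (hout : ∀ e ∈ D, e.1 ∉ S) (s : Fin n) (hs : s ∈ S) (hi0s : (i0, s) ∈ D) :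
    MvPolynomial.degreeOf (⟨(i0, s), hi0s⟩ : {e // e ∈ D}) (fpoly n D i0 j0 S) ≤ 1 ∧
    (∃ ε : ℝ, (ε = 1 ∨ ε = -1) ∧
      MvPolynomial.pderiv (⟨(i0, s), hi0s⟩ : {e // e ∈ D}) (fpoly n D i0 j0 S) =
        MvPolynomial.C ε * subdet (sigmaMat n D) (insert i0 S) (insert j0 (insert i0 (S.erase s)))) ∧
    subdet (sigmaMat n D) (insert i0 S) (insert j0 (insert i0 (S.erase s))) ∈
      Ideal.span (Set.range fun e : {e // e ∈ D} => MvPolynomial.pderiv e (fpoly n D i0 j0 S)) := by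
  classical
  set x : {e // e ∈ D} := ⟨(i0, s), hi0s⟩ with hxdef
  set A := edgeMatrix n D with hAdef
  set Sg := sigmaMat n D with hSmdef
  -- basic matrix facts
  have hAzero : ∀ i j : Fin n, ¬ i < j → A i j = 0 := by
    intro i j hij
    show (if h : (i, j) ∈ D then (X ⟨(i, j), h⟩ : MvPolynomial {e // e ∈ D} ℝ) else 0) = 0
    rw [dif_neg]
    exact fun h => hij (hD _ h)
  have hdet : (1 - A).det = 1 := by
    rw [Matrix.det_of_upperTriangular]
    · have h0 : ∀ i : Fin n, A i i = 0 := fun i => hAzero i i (lt_irrefl i)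
      have : ∀ i : Fin n, (1 - A) i i = 1 := by
        intro i
        rw [Matrix.sub_apply, h0, Matrix.one_apply_eq, sub_zero]
      rw [Finset.prod_congr rfl fun i _ => this i, Finset.prod_const_one]
    · intro i j hij
      rw [Matrix.sub_apply, Matrix.one_apply_ne (by exact fun h => absurd h.symm (ne_of_lt hij)),
        hAzero i j (fun h => absurd (lt_trans h hij) (lt_irrefl i)), sub_zero]
  have hu : IsUnit (1 - A).det := hdet ▸ isUnit_one
  set B := (1 - A)⁻¹ with hBdef
  have hBl : (1 - A) * B = 1 := Matrix.mul_nonsing_inv _ hu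
  have hBr : B * (1 - A) = 1 := Matrix.nonsing_inv_mul _ hu
  have hSigma : Sg = Bᵀ * B := by
    rw [hSmdef, sigmaMat, ← Matrix.transpose_nonsing_inv]
  -- row s of A vanishes
  have hArow : ∀ k, A s k = 0 := by
    intro k
    show (if h : (s, k) ∈ D then (X ⟨(s, k), h⟩ : MvPolynomial {e // e ∈ D} ℝ) else 0) = 0
    rw [dif_neg]
    exact fun h => hout _ h hs
  have hBrow : ∀ j, B s j = (1 : Matrix (Fin n) (Fin n) (MvPolynomial {e // e ∈ D} ℝ)) s j := by
    intro j
    have h1 := congrFun (congrFun hBl s) j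
    rw [Matrix.mul_apply] at h1
    have h2 : ∀ k, (1 - A) s k * B k j
        = if k = s then B s j else 0 := by
      intro k
      rw [Matrix.sub_apply, hArow, sub_zero, Matrix.one_apply]
      by_cases h : s = k
      · subst h; simp
      · simp [h, Ne.symm h]
    rw [Finset.sum_congr rfl fun k _ => h2 k, Finset.sum_ite_eq' Finset.univ s,
      if_pos (Finset.mem_univ s)] at h1
    exact h1
  -- derivative of entries of A
  have hdA : ∀ i j, pderiv x (A i j) = if i = i0 ∧ j = s then 1 else 0 := by
    intro i j
    show pderiv x (if h : (i, j) ∈ D then (X ⟨(i, j), h⟩ : MvPolynomial {e // e ∈ D} ℝ) else 0)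
      = if i = i0 ∧ j = s then 1 else 0
    by_cases h : (i, j) ∈ D
    · rw [dif_pos h]
      by_cases h2 : i = i0 ∧ j = s
      · obtain ⟨rfl, rfl⟩ := h2
        rw [if_pos ⟨rfl, rfl⟩]
        exact pderiv_X_self x
      · rw [if_neg h2]
        apply pderiv_X_of_ne
        intro he
        apply h2
        have := congrArg Subtype.val he
        simp only [hxdef] at this
        exact ⟨congrArg Prod.fst this, congrArg Prod.snd this⟩
    · rw [dif_neg h, map_zero, if_neg]
      rintro ⟨rfl, rfl⟩
      exact h hi0s
  -- derivative of entries of B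
  set E : Matrix (Fin n) (Fin n) (MvPolynomial {e // e ∈ D} ℝ) :=
    Matrix.of fun i j => if i = i0 ∧ j = s then 1 else 0 with hEdef
  set dB : Matrix (Fin n) (Fin n) (MvPolynomial {e // e ∈ D} ℝ) :=
    Matrix.of fun i j => pderiv x (B i j) with hdBdef
  have h1A : (1 - A) * dB = E * B := by
    apply Matrix.ext
    intro i j
    have h0 : pderiv x (((1 - A) * B) i j) = 0 := by
      rw [hBl]
      by_cases h : i = j <;> simp [Matrix.one_apply, h]
    rw [Matrix.mul_apply, map_sum] at h0
    simp only [pderiv_mul] at h0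
    rw [Finset.sum_add_distrib] at h0
    have hE : ∀ k, pderiv x ((1 - A) i k) = -(E i k) := by
      intro k
      rw [Matrix.sub_apply, map_sub]
      have hone : pderiv x ((1 : Matrix (Fin n) (Fin n) (MvPolynomial {e // e ∈ D} ℝ)) i k)
          = 0 := by
        by_cases h : i = k <;> simp [Matrix.one_apply, h]
      rw [hone, zero_sub, hdA]
      rfl
    have hEs : ∑ k, pderiv x ((1 - A) i k) * B k j = -∑ k, E i k * B k j := by
      rw [← Finset.sum_neg_distrib]
      exact Finset.sum_congr rfl fun k _ => by rw [hE]; ring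
    rw [hEs] at h0
    rw [Matrix.mul_apply, Matrix.mul_apply]
    have : ∀ k, (1 - A) i k * dB k j = (1 - A) i k * pderiv x (B k j) := fun k => rfl
    rw [Finset.sum_congr rfl fun k _ => this k]
    linear_combination h0
  have hEB : E * B = E := by
    apply Matrix.ext
    intro i j
    rw [Matrix.mul_apply]
    have h2 : ∀ k, E i k * B k j = if i = i0 ∧ k = s then B s j else 0 := by
      intro k
      show (if i = i0 ∧ k = s then (1 : MvPolynomial {e // e ∈ D} ℝ) else 0) * B k j = _
      by_cases h : i = i0 ∧ k = s
      · obtain ⟨rfl, rfl⟩ := h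
        rw [if_pos ⟨rfl, rfl⟩, if_pos ⟨rfl, rfl⟩, one_mul]
      · rw [if_neg h, if_neg h, zero_mul]
    rw [Finset.sum_congr rfl fun k _ => h2 k]
    show _ = if i = i0 ∧ j = s then (1 : MvPolynomial {e // e ∈ D} ℝ) else 0
    by_cases hi : i = i0
    · subst hi
      simp only [true_and]
      rw [Finset.sum_ite_eq' Finset.univ s fun _ => B s j, if_pos (Finset.mem_univ s), hBrow]
      rw [Matrix.one_apply]
      by_cases h : s = j
      · subst h; simp
      · simp [h, Ne.symm h]
    · simp [hi]
  have hdBeq : dB = B * E := by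
    calc dB = (B * (1 - A)) * dB := by rw [hBr, one_mul]
      _ = B * ((1 - A) * dB) := Matrix.mul_assoc _ _ _
      _ = B * (E * B) := by rw [h1A]
      _ = B * E := by rw [hEB]
  have hdB : ∀ i j, pderiv x (B i j) = if j = s then B i i0 else 0 := by
    intro i j
    have h1 := congrFun (congrFun hdBeq i) j
    show dB i j = _
    rw [h1, Matrix.mul_apply]
    have h2 : ∀ k, B i k * E k j = if k = i0 ∧ j = s then B i i0 else 0 := by
      intro k
      show B i k * (if k = i0 ∧ j = s then (1 : MvPolynomial {e // e ∈ D} ℝ) else 0) = _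
      by_cases h : k = i0 ∧ j = s
      · obtain ⟨rfl, hjs⟩ := h
        rw [if_pos ⟨rfl, hjs⟩, if_pos ⟨rfl, hjs⟩, mul_one]
      · rw [if_neg h, if_neg h, mul_zero]
    rw [Finset.sum_congr rfl fun k _ => h2 k]
    by_cases hjs : j = s
    · simp only [hjs, and_true]
      rw [Finset.sum_ite_eq' Finset.univ i0 fun _ => B i i0, if_pos (Finset.mem_univ i0)]
      simp
    · simp [hjs]
  -- derivative of entries of Σ
  have hSapp : ∀ i j, Sg i j = ∑ k, B k i * B k j := by
    intro i j
    rw [hSigma, Matrix.mul_apply]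
    exact Finset.sum_congr rfl fun k _ => by rw [Matrix.transpose_apply]
  have hdS : ∀ i j, pderiv x (Sg i j)
      = (if i = s then Sg i0 j else 0) + (if j = s then Sg i i0 else 0) := by
    intro i j
    rw [hSapp, map_sum]
    have h2 : ∀ k, pderiv x (B k i * B k j)
        = (if i = s then B k i0 * B k j else 0) + (if j = s then B k i * B k i0 else 0) := by
      intro k
      rw [pderiv_mul, hdB, hdB]
      by_cases hi : i = s <;> by_cases hj : j = s <;> simp [hi, hj] <;> ring
    rw [Finset.sum_congr rfl fun k _ => h2 k, Finset.sum_add_distrib]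
    congr 1
    · by_cases hi : i = s
      · subst hi; simp [hSapp]
      · simp [hi]
    · by_cases hj : j = s
      · subst hj; simp [hSapp]
      · simp [hj]
  -- index sets
  have hsI : s ∈ insert i0 S := Finset.mem_insert_of_mem hs
  have hi0I : i0 ∈ insert i0 S := Finset.mem_insert_self _ _
  have hsJ : s ∈ insert j0 S := Finset.mem_insert_of_mem hs
  have hsi0 : s ≠ i0 := fun h => hi0S (h ▸ hs)
  have hsj0 : s ≠ j0 := fun h => hj0S (h ▸ hs)
  have hi0J : i0 ∉ insert j0 S := by
    simp only [Finset.mem_insert]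
    rintro (h | h)
    · exact hne h
    · exact hi0S h
  have hcard : (insert i0 S).card = (insert j0 S).card := by
    rw [Finset.card_insert_of_notMem hi0S, Finset.card_insert_of_notMem hj0S]
  set I := insert i0 S with hIdef
  set J := insert j0 S with hJdef
  set r : Fin I.card → Fin n := fun p => ((I.orderIsoOfFin rfl) p : Fin n) with hrdef
  set c : Fin I.card → Fin n := fun p => ((J.orderIsoOfFin hcard.symm) p : Fin n) with hcdef
  have hfd : fpoly n D i0 j0 S = ((Sg.submatrix r c).det) := by
    unfold fpoly subdet
    rw [dif_pos hcard]
  have hrinj : Function.Injective r := fun a b h => (I.orderIsoOfFin rfl).injective (Subtype.ext h)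
  have hcinj : Function.Injective c :=
    fun a b h => (J.orderIsoOfFin hcard.symm).injective (Subtype.ext h)
  have hrmem : ∀ p, r p ∈ I := fun p => ((I.orderIsoOfFin rfl) p).2
  have hcmem : ∀ p, c p ∈ J := fun p => ((J.orderIsoOfFin hcard.symm) p).2
  set ps : Fin I.card := (I.orderIsoOfFin rfl).symm ⟨s, hsI⟩ with hpsdef
  set pi0 : Fin I.card := (I.orderIsoOfFin rfl).symm ⟨i0, hi0I⟩ with hpi0def
  set qs : Fin I.card := (J.orderIsoOfFin hcard.symm).symm ⟨s, hsJ⟩ with hqsdef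
  have hrps : r ps = s := by
    show ((I.orderIsoOfFin rfl) ((I.orderIsoOfFin rfl).symm ⟨s, hsI⟩) : Fin n) = s
    rw [OrderIso.apply_symm_apply]
  have hrpi0 : r pi0 = i0 := by
    show ((I.orderIsoOfFin rfl) ((I.orderIsoOfFin rfl).symm ⟨i0, hi0I⟩) : Fin n) = i0
    rw [OrderIso.apply_symm_apply]
  have hcqs : c qs = s := by
    show ((J.orderIsoOfFin hcard.symm) ((J.orderIsoOfFin hcard.symm).symm ⟨s, hsJ⟩) : Fin n) = s
    rw [OrderIso.apply_symm_apply]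
  have hpsnepi0 : ps ≠ pi0 := fun h => hsi0 (by rw [← hrps, h, hrpi0])
  have hceqs : ∀ q, c q = s ↔ q = qs :=
    fun q => ⟨fun h => hcinj (by rw [h, hcqs]), fun h => by rw [h, hcqs]⟩
  -- generic derivative computation
  have habstract : ∀ γ : Fin I.card → Fin n,
      pderiv x ((Sg.submatrix r γ).det)
        = ∑ p, ((Sg.submatrix r γ).updateRow p
            (fun q => if γ q = s then Sg (r p) i0 else 0)).det := by
    intro γ
    rw [pderiv_det']
    apply Finset.sum_congr rfl
    intro p _
    have hrow : (fun q => pderiv x ((Sg.submatrix r γ) p q))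
        = (fun q => if r p = s then Sg i0 (γ q) else 0)
          + (fun q => if γ q = s then Sg (r p) i0 else 0) := by
      funext q
      simp only [Matrix.submatrix_apply, Pi.add_apply]
      rw [hdS]
    rw [hrow, Matrix.det_updateRow_add]
    have hzero : ((Sg.submatrix r γ).updateRow p
        fun q => if r p = s then Sg i0 (γ q) else 0).det = 0 := by
      by_cases h : r p = s
      · have hp : p = ps := hrinj (by rw [h, hrps])
        subst hp
        apply Matrix.det_zero_of_row_eq (Ne.symm hpsnepi0)
        funext q
        rw [Matrix.updateRow_ne (Ne.symm hpsnepi0), Matrix.updateRow_self,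
          Matrix.submatrix_apply, hrpi0, if_pos h]
      · apply Matrix.det_eq_zero_of_row_eq_zero p
        intro q
        simp [Matrix.updateRow_self, h]
    rw [hzero, zero_add]
  -- the first derivative
  set b : Fin I.card → MvPolynomial {e // e ∈ D} ℝ := fun p => Sg (r p) i0 with hbdef
  set M0 := Sg.submatrix r c with hM0def
  have hder1 : pderiv x (M0.det) = (M0.updateCol qs b).det := by
    rw [habstract c]
    have hv : ∀ p, (fun q => if c q = s then Sg (r p) i0 else 0)
        = b p • ((Pi.single qs (1 : MvPolynomial {e // e ∈ D} ℝ)) :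
            Fin I.card → MvPolynomial {e // e ∈ D} ℝ) := by
      intro p; funext q
      rw [Pi.smul_apply, Pi.single_apply]
      by_cases h : q = qs
      · rw [if_pos ((hceqs q).mpr h), if_pos h]; simp [hbdef]
      · rw [if_neg (fun hh => h ((hceqs q).mp hh)), if_neg h]; simp
    calc ∑ p, (M0.updateRow p fun q => if c q = s then Sg (r p) i0 else 0).det
        = ∑ p, b p * (M0.updateRow p (Pi.single qs 1)).det := by
          refine Finset.sum_congr rfl fun p _ => ?_
          rw [hv p, Matrix.det_updateRow_smul]
      _ = ∑ p, M0.adjugate qs p * b p := by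
          refine Finset.sum_congr rfl fun p _ => ?_
          rw [Matrix.adjugate_apply]; ring
      _ = Matrix.cramer M0 b qs := by
          rw [Matrix.cramer_eq_adjugate_mulVec]
          simp [Matrix.mulVec, dotProduct]
      _ = (M0.updateCol qs b).det := Matrix.cramer_apply _ _ _
  set g : Fin I.card → Fin n := fun q => if q = qs then i0 else c q with hgdef
  have hupdate : M0.updateCol qs b = Sg.submatrix r g := by
    apply Matrix.ext
    intro p q
    simp only [Matrix.updateCol_apply, Matrix.submatrix_apply, hgdef]
    by_cases h : q = qs
    · rw [if_pos h, if_pos h]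
    · rw [if_neg h, if_neg h]
      rfl
  set J' := insert j0 (insert i0 (S.erase s)) with hJ'def
  have hsJ' : s ∉ J' := by
    simp [hJ'def, Finset.mem_insert, Finset.mem_erase, hsj0, hsi0]
  have hi0' : i0 ∉ S.erase s := fun h => hi0S (Finset.mem_of_mem_erase h)
  have hj0' : j0 ∉ insert i0 (S.erase s) := by
    intro h
    rcases Finset.mem_insert.mp h with h | h
    · exact hne h.symm
    · exact hj0S (Finset.mem_of_mem_erase h)
  have hJ'card : I.card = J'.card := by
    rw [hJ'def, Finset.card_insert_of_notMem hj0', Finset.card_insert_of_notMem hi0',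
      Finset.card_erase_of_mem hs, hIdef, Finset.card_insert_of_notMem hi0S]
    have : 1 ≤ S.card := Finset.card_pos.mpr ⟨s, hs⟩
    omega
  set c' : Fin I.card → Fin n := fun q => ((J'.orderIsoOfFin hJ'card.symm) q : Fin n) with hc'def
  have hc'mem : ∀ q, c' q ∈ J' := fun q => ((J'.orderIsoOfFin hJ'card.symm) q).2
  have hc'ne : ∀ q, c' q ≠ s := fun q h => hsJ' (h ▸ hc'mem q)
  have hgmem : ∀ q, g q ∈ J' := by
    intro q
    by_cases h : q = qs
    · rw [hgdef]
      simp only [if_pos h]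
      exact Finset.mem_insert_of_mem (Finset.mem_insert_self _ _)
    · rw [hgdef]
      simp only [if_neg h]
      have hcq := hcmem q
      rw [hJdef] at hcq
      rcases Finset.mem_insert.mp hcq with h1 | h1
      · rw [hJ'def, h1]; exact Finset.mem_insert_self _ _
      · have hne' : c q ≠ s := fun hh => h ((hceqs q).mp hh)
        exact Finset.mem_insert_of_mem
          (Finset.mem_insert_of_mem (Finset.mem_erase.mpr ⟨hne', h1⟩))
  have hginj : Function.Injective g := by
    intro a b' hab
    by_cases ha : a = qs <;> by_cases hb : b' = qs
    · rw [ha, hb]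
    · exfalso
      rw [hgdef] at hab
      simp only [if_pos ha, if_neg hb] at hab
      exact hi0J (by rw [hab]; exact hcmem b')
    · exfalso
      rw [hgdef] at hab
      simp only [if_neg ha, if_pos hb] at hab
      exact hi0J (by rw [← hab]; exact hcmem a)
    · rw [hgdef] at hab
      simp only [if_neg ha, if_neg hb] at hab
      exact hcinj hab
  have hπinj : Function.Injective
      (fun q => (J'.orderIsoOfFin hJ'card.symm).symm ⟨g q, hgmem q⟩) := by
    intro a b' h
    apply hginj
    have := congrArg (fun z => ((J'.orderIsoOfFin hJ'card.symm) z : Fin n)) h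
    simpa using this
  set pe : Equiv.Perm (Fin I.card) :=
    Equiv.ofBijective _ (Finite.injective_iff_bijective.mp hπinj) with hpedef
  have hcpe : ∀ q, c' (pe q) = g q := by
    intro q
    show ((J'.orderIsoOfFin hJ'card.symm)
      ((J'.orderIsoOfFin hJ'card.symm).symm ⟨g q, hgmem q⟩) : Fin n) = g q
    rw [OrderIso.apply_symm_apply]
  have hperm : Sg.submatrix r g = (Sg.submatrix r c').submatrix id pe := by
    apply Matrix.ext; intro p q
    simp [Matrix.submatrix_apply, hcpe q]
  have hdet2 : (Sg.submatrix r g).det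
      = ((Equiv.Perm.sign pe : ℤ) : MvPolynomial {e // e ∈ D} ℝ) * (Sg.submatrix r c').det := by
    rw [hperm, Matrix.det_permute']
  have hsub' : subdet Sg I J' = (Sg.submatrix r c').det := by
    unfold subdet
    rw [dif_pos hJ'card]
  set eps : ℝ := ((Equiv.Perm.sign pe : ℤ) : ℝ) with hepsdef
  have hepspm : eps = 1 ∨ eps = -1 := by
    rcases Int.units_eq_one_or (Equiv.Perm.sign pe) with h | h
    · left; rw [hepsdef, h]; norm_num
    · right; rw [hepsdef, h]; norm_num
  have hCeps : (C eps : MvPolynomial {e // e ∈ D} ℝ)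
      = ((Equiv.Perm.sign pe : ℤ) : MvPolynomial {e // e ∈ D} ℝ) := by
    rw [hepsdef, map_intCast]
  have hmain : pderiv x (fpoly n D i0 j0 S) = C eps * subdet Sg I J' := by
    rw [hfd, hder1, hupdate, hdet2, hsub', hCeps]
  have hzero2 : pderiv x ((Sg.submatrix r c').det) = 0 := by
    rw [habstract c']
    apply Finset.sum_eq_zero
    intro p _
    have hfun : (fun q => if c' q = s then Sg (r p) i0 else 0)
        = fun _ => (0 : MvPolynomial {e // e ∈ D} ℝ) := funext fun q => if_neg (hc'ne q)
    rw [hfun]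
    apply Matrix.det_eq_zero_of_row_eq_zero p
    intro q
    simp [Matrix.updateRow_self]
  have hdeg : degreeOf x (fpoly n D i0 j0 S) ≤ 1 := by
    apply degreeOf_le_one_of_pderiv2
    rw [hmain, hsub', pderiv_C_mul, hzero2, mul_zero]
  refine ⟨hdeg, ⟨eps, hepspm, hmain⟩, ?_⟩
  have hepseps : (C eps : MvPolynomial {e // e ∈ D} ℝ) * C eps = 1 := by
    rw [← C_mul]
    rcases hepspm with h | h <;> rw [h] <;> norm_num
  have hgen : pderiv x (fpoly n D i0 j0 S)
      ∈ Ideal.span (Set.range fun e : {e // e ∈ D} => pderiv e (fpoly n D i0 j0 S)) :=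
    Ideal.subset_span ⟨x, rfl⟩
  have hfin : subdet Sg I J' = C eps * pderiv x (fpoly n D i0 j0 S) := by
    rw [hmain, ← mul_assoc, hepseps, one_mul]
  rw [hfin]
  exact Ideal.mul_mem_left _ _ hgen
end

section
/- Suppose D contains no edge whose source lies in S and that (i0,j0) ∈ D. Then the variable X_{(i0,j0)} appears at most linearly in f, i.e., the degree of f in the variable X_{(i0,j0)} is at most 1. -/
set_option maxHeartbeats 1000000



open MvPolynomial Matrix

private lemma degOf_sum_le {σ R ι : Type*} [CommSemiring R] (x : σ) (s : Finset ι)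
    (f : ι → MvPolynomial σ R) (d : ℕ) (h : ∀ i ∈ s, MvPolynomial.degreeOf x (f i) ≤ d) :
    MvPolynomial.degreeOf x (∑ i ∈ s, f i) ≤ d := by
  classical
  induction s using Finset.induction_on with
  | empty => simp
  | @insert a s hnot ih =>
    rw [Finset.sum_insert hnot]
    exact le_trans (MvPolynomial.degreeOf_add_le _ _ _)
      (max_le (h _ (Finset.mem_insert_self _ _)) (ih fun i hi => h i (Finset.mem_insert_of_mem hi)))

private lemma degOf_prod_eq_zero {σ R ι : Type*} [CommSemiring R] (x : σ) (s : Finset ι)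
    (f : ι → MvPolynomial σ R) (h : ∀ i ∈ s, MvPolynomial.degreeOf x (f i) = 0) :
    MvPolynomial.degreeOf x (∏ i ∈ s, f i) = 0 := by
  classical
  induction s using Finset.induction_on with
  | empty =>
    rw [Finset.prod_empty, show (1 : MvPolynomial σ R) = MvPolynomial.C 1 by simp]
    exact MvPolynomial.degreeOf_C _ _
  | @insert a s hnot ih =>
    rw [Finset.prod_insert hnot]
    refine Nat.le_zero.mp (le_trans (MvPolynomial.degreeOf_mul_le _ _ _) ?_)
    rw [h _ (Finset.mem_insert_self _ _), ih fun i hi => h i (Finset.mem_insert_of_mem hi)]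

private lemma degOf_det_eq_zero {σ R ι : Type*} [CommRing R] [Fintype ι] [DecidableEq ι] (x : σ)
    (M : Matrix ι ι (MvPolynomial σ R)) (h : ∀ i j, MvPolynomial.degreeOf x (M i j) = 0) :
    MvPolynomial.degreeOf x M.det = 0 := by
  rw [Matrix.det_apply]
  refine Nat.le_zero.mp (degOf_sum_le x _ _ 0 fun τ _ => ?_)
  rcases Int.units_eq_one_or (Equiv.Perm.sign τ) with hs | hs <;>
    rw [hs] <;>
    simp only [one_smul, Units.neg_smul, MvPolynomial.degreeOf_neg] <;>
    exact Nat.le_zero.mpr (degOf_prod_eq_zero x _ _ fun i _ => h _ _)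

private lemma degOf_ite01 {σ R : Type*} [CommSemiring R] (x : σ) (P : Prop) [Decidable P] :
    MvPolynomial.degreeOf x (if P then (1 : MvPolynomial σ R) else 0) = 0 := by
  split
  · rw [show (1 : MvPolynomial σ R) = MvPolynomial.C 1 by simp]
    exact MvPolynomial.degreeOf_C _ _
  · exact MvPolynomial.degreeOf_zero _

private lemma updateRow_comm' {α ι κ : Type*} [DecidableEq ι] (M : Matrix ι κ α) {i j : ι}
    (h : i ≠ j) (u v : κ → α) :
    (M.updateRow i u).updateRow j v = (M.updateRow j v).updateRow i u := by
  ext a b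
  by_cases hai : a = i
  · subst hai
    rw [Matrix.updateRow_ne h, Matrix.updateRow_self, Matrix.updateRow_self]
  · by_cases haj : a = j
    · subst haj
      rw [Matrix.updateRow_self, Matrix.updateRow_ne (Ne.symm h), Matrix.updateRow_self]
    · rw [Matrix.updateRow_ne haj, Matrix.updateRow_ne hai, Matrix.updateRow_ne hai,
        Matrix.updateRow_ne haj]

/-- If no edge of `D` starts in `S` and `i0 → j0`, then `X_{(i0,j0)}` appears at most
linearly in `f`. -/
theorem statement7 (n : ℕ) (D : Finset (Fin n × Fin n)) (hD : ∀ e ∈ D, e.1 < e.2)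
    (i0 j0 : Fin n) (hne : i0 ≠ j0) (S : Finset (Fin n)) (hi0S : i0 ∉ S) (hj0S : j0 ∉ S)
    (hout : ∀ e ∈ D, e.1 ∉ S) (hedge : (i0, j0) ∈ D) :
    MvPolynomial.degreeOf (⟨(i0, j0), hedge⟩ : {e // e ∈ D}) (fpoly n D i0 j0 S) ≤ 1 := by
  classical
  set e0 : {e // e ∈ D} := ⟨(i0, j0), hedge⟩ with he0
  set x : MvPolynomial {e // e ∈ D} ℝ := MvPolynomial.X e0 with hx
  -- index sets and enumerations
  have hcard : (insert i0 S).card = (insert j0 S).card := by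
    rw [Finset.card_insert_of_notMem hi0S, Finset.card_insert_of_notMem hj0S]
  set I : Finset (Fin n) := insert i0 S with hI
  set J : Finset (Fin n) := insert j0 S with hJ
  set m : ℕ := I.card with hm
  set r : Fin m → Fin n := fun p => ((I.orderIsoOfFin rfl) p : Fin n) with hr
  set c : Fin m → Fin n := fun p => ((J.orderIsoOfFin hcard.symm) p : Fin n) with hc
  have hrI : ∀ p, r p ∈ I := fun p => ((I.orderIsoOfFin rfl) p).2
  have hcJ : ∀ p, c p ∈ J := fun p => ((J.orderIsoOfFin hcard.symm) p).2
  have hcsurj : ∀ a ∈ J, ∃ q, c q = a := by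
    intro a ha
    refine ⟨(J.orderIsoOfFin hcard.symm).symm ⟨a, ha⟩, ?_⟩
    show ((J.orderIsoOfFin hcard.symm) ((J.orderIsoOfFin hcard.symm).symm ⟨a, ha⟩) : Fin n) = a
    rw [OrderIso.apply_symm_apply]
  have hcinj : Function.Injective c := by
    intro p q hpq
    have := (J.orderIsoOfFin hcard.symm).injective (Subtype.ext hpq)
    exact this
  have hf : fpoly n D i0 j0 S = ((sigmaMat n D).submatrix r c).det := by
    unfold fpoly subdet
    rw [dif_pos hcard]
  -- matrices
  set A : Matrix (Fin n) (Fin n) (MvPolynomial {e // e ∈ D} ℝ) := edgeMatrix n D with hA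
  have hAapply : ∀ a b, A a b = if h : (a, b) ∈ D then X ⟨(a, b), h⟩ else 0 := fun a b => rfl
  have hAzero : ∀ a b : Fin n, ¬ a < b → A a b = 0 := by
    intro a b hab
    rw [hAapply]
    rw [dif_neg]
    intro h
    exact hab (hD _ h)
  have hAdiag : ∀ a : Fin n, A a a = 0 := fun a => hAzero a a (lt_irrefl a)
  have htri : (1 - A).BlockTriangular id := by
    intro a b hab
    have : ¬ a < b := not_lt_of_gt hab
    rw [Matrix.sub_apply, Matrix.one_apply_ne (show a ≠ b from (ne_of_lt hab).symm),
      hAzero a b this, sub_zero]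
  have hdet : (1 - A).det = 1 := by
    rw [Matrix.det_of_upperTriangular htri]
    have : ∀ a : Fin n, (1 - A) a a = 1 := by
      intro a
      rw [Matrix.sub_apply, Matrix.one_apply_eq, hAdiag, sub_zero]
    simp [this]
  haveI hInv : Invertible (1 - A) := (1 - A).invertibleOfIsUnitDet (by rw [hdet]; exact isUnit_one)
  haveI hInvT : Invertible (1 - A)ᵀ := Matrix.invertibleTranspose _
  -- the big block matrix
  set K : Matrix (Fin n ⊕ Fin n) (Fin n ⊕ Fin n) (MvPolynomial {e // e ∈ D} ℝ) :=
    Matrix.fromBlocks (1 - A)ᵀ 1 0 (1 - A) with hK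
  set L : Matrix (Fin n ⊕ Fin n) (Fin m) (MvPolynomial {e // e ∈ D} ℝ) :=
    Matrix.of fun z q => Sum.elim (fun _ => (0:MvPolynomial {e // e ∈ D} ℝ))
      (fun a => if a = c q then 1 else 0) z with hL
  set R' : Matrix (Fin m) (Fin n ⊕ Fin n) (MvPolynomial {e // e ∈ D} ℝ) :=
    Matrix.of fun p z => Sum.elim (fun a => if a = r p then (1:MvPolynomial {e // e ∈ D} ℝ) else 0)
      (fun _ => 0) z with hR'
  set N : Matrix ((Fin n ⊕ Fin n) ⊕ Fin m) ((Fin n ⊕ Fin n) ⊕ Fin m) (MvPolynomial {e // e ∈ D} ℝ) :=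
    Matrix.fromBlocks K L R' 0 with hN
  haveI hKinv : Invertible K := Matrix.fromBlocksZero₂₁Invertible _ _ _
  have hdetN : N.det = ((sigmaMat n D).submatrix r c).det := by
    rw [hN, Matrix.det_fromBlocks₁₁]
    have h1 : K.det = 1 := by
      rw [hK, Matrix.det_fromBlocks_zero₂₁, Matrix.det_transpose, hdet, one_mul]
    rw [h1, one_mul]
    congr 1
    have hKinvEq : ⅟K = Matrix.fromBlocks (⅟((1 - A)ᵀ)) (-(⅟((1 - A)ᵀ) * 1 * ⅟(1 - A))) 0
        (⅟(1 - A)) := Matrix.invOf_fromBlocks_zero₂₁_eq _ _ _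
    ext p q
    rw [Matrix.sub_apply, Matrix.zero_apply, Matrix.mul_apply]
    have hcol : ∀ z, (R' * ⅟K) p z * L z q
        = (R' * ⅟K) p z * (Sum.elim (fun _ => (0:MvPolynomial {e // e ∈ D} ℝ))
            (fun a => if a = c q then 1 else 0) z) := fun z => rfl
    simp only [hcol]
    rw [Fintype.sum_sum_type]
    simp only [Sum.elim_inl, Sum.elim_inr, mul_zero, Finset.sum_const_zero, zero_add,
      mul_ite, mul_one]
    rw [Finset.sum_ite_eq' Finset.univ (c q) (fun a => (R' * ⅟K) p (Sum.inr a))]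
    rw [if_pos (Finset.mem_univ _)]
    rw [Matrix.mul_apply, Fintype.sum_sum_type]
    simp only [hR', Matrix.of_apply, Sum.elim_inl, Sum.elim_inr, zero_mul,
      Finset.sum_const_zero, add_zero, ite_mul, one_mul, zero_mul]
    rw [Finset.sum_ite_eq' Finset.univ (r p) (fun a => (⅟K) (Sum.inl a) (Sum.inr (c q)))]
    rw [if_pos (Finset.mem_univ _)]
    rw [hKinvEq, Matrix.fromBlocks_apply₁₂, Matrix.neg_apply, zero_sub, neg_neg,
      Matrix.mul_one, Matrix.invOf_eq_nonsing_inv, Matrix.invOf_eq_nonsing_inv]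
    rfl
  -- the x-free version
  set A0 : Matrix (Fin n) (Fin n) (MvPolynomial {e // e ∈ D} ℝ) :=
    Matrix.of fun a b => if (a, b) = (i0, j0) then 0 else A a b with hA0
  have hAA0 : ∀ a b, A a b = A0 a b + (if (a, b) = (i0, j0) then x else 0) := by
    intro a b
    by_cases h : (a, b) = (i0, j0)
    · have ha : a = i0 := congrArg Prod.fst h
      have hb : b = j0 := congrArg Prod.snd h
      have h0 : A0 i0 j0 = 0 := by rw [hA0]; simp
      rw [ha, hb, if_pos rfl, h0, zero_add, hx, he0, hAapply, dif_pos hedge]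
    · rw [hA0]
      simp only [Matrix.of_apply, if_neg h, add_zero]
  set K0 : Matrix (Fin n ⊕ Fin n) (Fin n ⊕ Fin n) (MvPolynomial {e // e ∈ D} ℝ) :=
    Matrix.fromBlocks (1 - A0)ᵀ 1 0 (1 - A0) with hK0
  set N0 : Matrix ((Fin n ⊕ Fin n) ⊕ Fin m) ((Fin n ⊕ Fin n) ⊕ Fin m)
      (MvPolynomial {e // e ∈ D} ℝ) := Matrix.fromBlocks K0 L R' 0 with hN0
  set p1 : (Fin n ⊕ Fin n) ⊕ Fin m := Sum.inl (Sum.inl j0) with hp1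
  set q1 : (Fin n ⊕ Fin n) ⊕ Fin m := Sum.inl (Sum.inl i0) with hq1
  set p2 : (Fin n ⊕ Fin n) ⊕ Fin m := Sum.inl (Sum.inr i0) with hp2
  set q2 : (Fin n ⊕ Fin n) ⊕ Fin m := Sum.inl (Sum.inr j0) with hq2
  set e1 : ((Fin n ⊕ Fin n) ⊕ Fin m) → MvPolynomial {e // e ∈ D} ℝ :=
    fun z => if z = q1 then 1 else 0 with he1
  set e2 : ((Fin n ⊕ Fin n) ⊕ Fin m) → MvPolynomial {e // e ∈ D} ℝ :=
    fun z => if z = q2 then 1 else 0 with he2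
  have hp12 : p1 ≠ p2 := by simp [hp1, hp2]
  -- row comparisons
  have hrow1 : N p1 = N0 p1 + (-x) • e1 := by
    funext w
    simp only [Pi.add_apply, Pi.smul_apply, smul_eq_mul]
    rcases w with (b | b) | q
    · show (1 - A) b j0 = (1 - A0) b j0 + (-x) * e1 (Sum.inl (Sum.inl b))
      rw [Matrix.sub_apply, Matrix.sub_apply, hAA0 b j0, he1]
      simp only [hq1, Sum.inl.injEq]
      by_cases hb : b = i0
      · subst hb
        simp only [if_pos rfl, Prod.mk.injEq, and_self, ite_true, mul_one]
        ring
      · simp only [if_neg hb, mul_zero, add_zero]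
        rw [if_neg (by simp [hb] : ¬ ((b, j0) = (i0, j0)))]
        ring
    · show (1 : Matrix (Fin n) (Fin n) _) j0 b = (1 : Matrix (Fin n) (Fin n) _) j0 b
        + (-x) * e1 (Sum.inl (Sum.inr b))
      rw [he1]
      simp [hq1]
    · show L (Sum.inl j0) q = L (Sum.inl j0) q + (-x) * e1 (Sum.inr q)
      rw [he1]
      simp [hq1]
  have hrow2 : N p2 = N0 p2 + (-x) • e2 := by
    funext w
    simp only [Pi.add_apply, Pi.smul_apply, smul_eq_mul]
    rcases w with (b | b) | q
    · show (0 : Matrix (Fin n) (Fin n) _) i0 b = (0 : Matrix (Fin n) (Fin n) _) i0 b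
        + (-x) * e2 (Sum.inl (Sum.inl b))
      rw [he2]
      simp [hq2]
    · show (1 - A) i0 b = (1 - A0) i0 b + (-x) * e2 (Sum.inl (Sum.inr b))
      rw [Matrix.sub_apply, Matrix.sub_apply, hAA0 i0 b, he2]
      simp only [hq2, Sum.inl.injEq, Sum.inr.injEq]
      by_cases hb : b = j0
      · subst hb
        simp only [if_pos rfl, Prod.mk.injEq, and_self, ite_true, mul_one]
        ring
      · simp only [if_neg hb, mul_zero, add_zero]
        rw [if_neg (by simp [hb] : ¬ ((i0, b) = (i0, j0)))]
        ring
    · show L (Sum.inr i0) q = L (Sum.inr i0) q + (-x) * e2 (Sum.inr q)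
      rw [he2]
      simp [hq2]
  have hrowo : ∀ z, z ≠ p1 → z ≠ p2 → N z = N0 z := by
    intro z hz1 hz2
    funext w
    rcases z with (a | a) | p
    · have ha : a ≠ j0 := fun h => hz1 (by rw [hp1, h])
      rcases w with (b | b) | q
      · show (1 - A) b a = (1 - A0) b a
        rw [Matrix.sub_apply, Matrix.sub_apply, hAA0 b a,
          if_neg (by simp [ha] : ¬ ((b, a) = (i0, j0))), add_zero]
      · rfl
      · rfl
    · have ha : a ≠ i0 := fun h => hz2 (by rw [hp2, h])
      rcases w with (b | b) | q
      · rfl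
      · show (1 - A) a b = (1 - A0) a b
        rw [Matrix.sub_apply, Matrix.sub_apply, hAA0 a b,
          if_neg (by simp [ha] : ¬ ((a, b) = (i0, j0))), add_zero]
      · rfl
    · rcases w with (b | b) | q <;> rfl
  have hNeq : N = (N0.updateRow p2 (N0 p2 + (-x) • e2)).updateRow p1 (N0 p1 + (-x) • e1) := by
    ext z w
    rcases eq_or_ne z p1 with rfl | hz1
    · rw [Matrix.updateRow_self, ← hrow1]
    · rw [Matrix.updateRow_ne hz1]
      rcases eq_or_ne z p2 with rfl | hz2
      · rw [Matrix.updateRow_self, ← hrow2]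
      · rw [Matrix.updateRow_ne hz2, hrowo z hz1 hz2]
  -- determinant expansion
  set D1 : MvPolynomial {e // e ∈ D} ℝ := (N0.updateRow p1 e1).det with hD1
  set D2 : MvPolynomial {e // e ∈ D} ℝ := (N0.updateRow p2 e2).det with hD2
  set D12 : MvPolynomial {e // e ∈ D} ℝ := ((N0.updateRow p1 e1).updateRow p2 e2).det with hD12
  have hdetexp : N.det = N0.det + (-x) * D2 + ((-x) * D1 + (-x) * ((-x) * D12)) := by
    rw [hNeq]
    rw [Matrix.det_updateRow_add, Matrix.det_updateRow_smul]
    have e1eq : (N0.updateRow p2 (N0 p2 + (-x) • e2)).updateRow p1 (N0 p1)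
        = N0.updateRow p2 (N0 p2 + (-x) • e2) := by
      have : N0 p1 = (N0.updateRow p2 (N0 p2 + (-x) • e2)) p1 := by
        rw [Matrix.updateRow_ne hp12]
      rw [this, Matrix.updateRow_eq_self]
    rw [e1eq]
    rw [Matrix.det_updateRow_add, Matrix.det_updateRow_smul, Matrix.updateRow_eq_self]
    have comm1 : (N0.updateRow p2 (N0 p2 + (-x) • e2)).updateRow p1 e1
        = (N0.updateRow p1 e1).updateRow p2 (N0 p2 + (-x) • e2) :=
      updateRow_comm' N0 (Ne.symm hp12) _ _
    rw [comm1, Matrix.det_updateRow_add, Matrix.det_updateRow_smul]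
    have e2eq : (N0.updateRow p1 e1).updateRow p2 (N0 p2) = N0.updateRow p1 e1 := by
      have : N0 p2 = (N0.updateRow p1 e1) p2 := by
        rw [Matrix.updateRow_ne (Ne.symm hp12)]
      rw [this, Matrix.updateRow_eq_self]
    rw [e2eq]
    ring
  -- degree facts
  have hA0deg : ∀ a b, MvPolynomial.degreeOf e0 (A0 a b) = 0 := by
    intro a b
    by_cases h : (a, b) = (i0, j0)
    · rw [hA0]
      simp only [Matrix.of_apply, if_pos h]
      exact MvPolynomial.degreeOf_zero _
    · rw [hA0]
      simp only [Matrix.of_apply, if_neg h]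
      rw [hAapply]
      by_cases hm : (a, b) ∈ D
      · rw [dif_pos hm, MvPolynomial.degreeOf_X, if_neg]
        intro hcon
        apply h
        have := congrArg Subtype.val hcon
        rw [he0] at this
        exact this.symm
      · rw [dif_neg hm]
        exact MvPolynomial.degreeOf_zero _
  have h1A0deg : ∀ a b, MvPolynomial.degreeOf e0 ((1 - A0) a b) = 0 := by
    intro a b
    refine Nat.le_zero.mp (le_trans (MvPolynomial.degreeOf_sub_le _ _ _) ?_)
    apply max_le
    · rw [Matrix.one_apply, degOf_ite01]
    · rw [hA0deg]
  have hN0deg : ∀ z w, MvPolynomial.degreeOf e0 (N0 z w) = 0 := by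
    intro z w
    rcases z with (a | a) | p <;> rcases w with (b | b) | q
    · exact h1A0deg b a
    · show MvPolynomial.degreeOf e0 ((1 : Matrix (Fin n) (Fin n) _) a b) = 0
      rw [Matrix.one_apply, degOf_ite01]
    · exact MvPolynomial.degreeOf_zero _
    · exact MvPolynomial.degreeOf_zero _
    · exact h1A0deg a b
    · show MvPolynomial.degreeOf e0 (if a = c q then 1 else 0) = 0
      exact degOf_ite01 _ _
    · show MvPolynomial.degreeOf e0 (if b = r p then 1 else 0) = 0
      exact degOf_ite01 _ _
    · exact MvPolynomial.degreeOf_zero _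
    · exact MvPolynomial.degreeOf_zero _
  have he1deg : ∀ w, MvPolynomial.degreeOf e0 (e1 w) = 0 := fun w => degOf_ite01 _ _
  have he2deg : ∀ w, MvPolynomial.degreeOf e0 (e2 w) = 0 := fun w => degOf_ite01 _ _
  have hupdeg : ∀ (p : (Fin n ⊕ Fin n) ⊕ Fin m) (e : ((Fin n ⊕ Fin n) ⊕ Fin m) → _)
      (_ : ∀ w, MvPolynomial.degreeOf e0 (e w) = 0) (z w),
      MvPolynomial.degreeOf e0 ((N0.updateRow p e) z w) = 0 := by
    intro p e he z w
    rcases eq_or_ne z p with rfl | hz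
    · rw [Matrix.updateRow_self]; exact he w
    · rw [Matrix.updateRow_ne hz]; exact hN0deg z w
  -- the x^2 coefficient vanishes: kernel argument
  have hD12zero : D12 = 0 := by
    set B' : Matrix (Fin n) (Fin n) (MvPolynomial {e // e ∈ D} ℝ) := 1 - A0 with hB'
    set M0 : Matrix (Fin n) (Fin n) (MvPolynomial {e // e ∈ D} ℝ) := B' * B'ᵀ with hM0
    set G : Matrix (Fin n) (Fin n) (MvPolynomial {e // e ∈ D} ℝ) :=
      Matrix.of fun a b => if a ∈ I then (if b = a then 1 else 0)
        else if a = j0 then 0 else (M0 a b - B' a j0 * B' b j0) with hG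
    have hj0I : j0 ∉ I := by
      rw [hI]
      simp only [Finset.mem_insert]
      push_neg
      exact ⟨hne.symm, hj0S⟩
    have hGdet : G.det = 0 := by
      apply Matrix.det_eq_zero_of_row_eq_zero j0
      intro b
      rw [hG]
      simp [hj0I]
    obtain ⟨z1, hz1ne, hz1⟩ := Matrix.exists_mulVec_eq_zero_iff.mpr hGdet
    have hz1I : ∀ a ∈ I, z1 a = 0 := by
      intro a ha
      have hcomp := congrFun hz1 a
      rw [Matrix.mulVec, Pi.zero_apply] at hcomp
      rw [show ((fun j => G a j) ⬝ᵥ z1) = ∑ b, G a b * z1 b from rfl] at hcomp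
      have hGa : ∀ b, G a b = if b = a then 1 else 0 := by
        intro b
        rw [hG]
        simp only [Matrix.of_apply, if_pos ha]
      simp only [hGa, ite_mul, one_mul, zero_mul] at hcomp
      rwa [Finset.sum_ite_eq' Finset.univ a z1, if_pos (Finset.mem_univ _)] at hcomp
    have hz1C : ∀ a, a ∉ I → a ≠ j0 →
        (∑ b, M0 a b * z1 b) = B' a j0 * (∑ b, B' b j0 * z1 b) := by
      intro a haI haj
      have hcomp := congrFun hz1 a
      rw [Matrix.mulVec, Pi.zero_apply] at hcomp
      rw [show ((fun j => G a j) ⬝ᵥ z1) = ∑ b, G a b * z1 b from rfl] at hcomp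
      have hGa : ∀ b, G a b = M0 a b - B' a j0 * B' b j0 := by
        intro b
        rw [hG]
        simp only [Matrix.of_apply, if_neg haI, if_neg haj]
      simp only [hGa, sub_mul, mul_assoc] at hcomp
      rw [Finset.sum_sub_distrib, ← Finset.mul_sum, sub_eq_zero] at hcomp
      exact hcomp
    set z2 : Fin n → MvPolynomial {e // e ∈ D} ℝ :=
      fun a => if a = j0 then 0 else -(∑ b, B' b a * z1 b) with hz2
    set z3 : Fin m → MvPolynomial {e // e ∈ D} ℝ :=
      fun q => -(∑ b, B' (c q) b * z2 b) with hz3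
    set z : ((Fin n ⊕ Fin n) ⊕ Fin m) → MvPolynomial {e // e ∈ D} ℝ :=
      Sum.elim (Sum.elim z1 z2) z3 with hz
    set N1 : Matrix ((Fin n ⊕ Fin n) ⊕ Fin m) ((Fin n ⊕ Fin n) ⊕ Fin m)
        (MvPolynomial {e // e ∈ D} ℝ) := (N0.updateRow p1 e1).updateRow p2 e2 with hN1
    have hrowp1 : N1 p1 = e1 := by
      rw [hN1, Matrix.updateRow_ne hp12, Matrix.updateRow_self]
    have hrowp2 : N1 p2 = e2 := by
      rw [hN1, Matrix.updateRow_self]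
    have hrowoth : ∀ zr, zr ≠ p1 → zr ≠ p2 → N1 zr = N0 zr := by
      intro zr h1 h2
      rw [hN1, Matrix.updateRow_ne h2, Matrix.updateRow_ne h1]
    have hzne : z ≠ 0 := by
      intro hcon
      apply hz1ne
      funext a
      have := congrFun hcon (Sum.inl (Sum.inl a))
      exact this
    have hsum1 : ∀ (v : ((Fin n ⊕ Fin n) ⊕ Fin m) → MvPolynomial {e // e ∈ D} ℝ)
        (w0 : (Fin n ⊕ Fin n) ⊕ Fin m),
        (∑ w, (if w = w0 then (1 : MvPolynomial {e // e ∈ D} ℝ) else 0) * v w) = v w0 := by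
      intro v w0
      simp only [ite_mul, one_mul, zero_mul]
      rw [Finset.sum_ite_eq' Finset.univ w0 v, if_pos (Finset.mem_univ _)]
    have hker : N1 *ᵥ z = 0 := by
      funext zr
      rw [Matrix.mulVec, Pi.zero_apply]
      rw [show ((fun j => N1 zr j) ⬝ᵥ z) = ∑ w, N1 zr w * z w from rfl]
      rcases zr with (a | a) | p
      · by_cases haj : a = j0
        · have hzp : (Sum.inl (Sum.inl a) : (Fin n ⊕ Fin n) ⊕ Fin m) = p1 := by
            rw [hp1, haj]
          rw [hzp]
          simp only [hrowp1, he1]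
          rw [hsum1 z q1]
          show z1 i0 = 0
          exact hz1I i0 (Finset.mem_insert_self _ _)
        · have hne1 : (Sum.inl (Sum.inl a) : (Fin n ⊕ Fin n) ⊕ Fin m) ≠ p1 := by
            simp [hp1, haj]
          have hne2 : (Sum.inl (Sum.inl a) : (Fin n ⊕ Fin n) ⊕ Fin m) ≠ p2 := by
            simp [hp2]
          simp only [hrowoth _ hne1 hne2]
          rw [Fintype.sum_sum_type]
          rw [Fintype.sum_sum_type]
          have hb1 : ∀ b, N0 (Sum.inl (Sum.inl a)) (Sum.inl (Sum.inl b)) * z (Sum.inl (Sum.inl b))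
              = B' b a * z1 b := fun b => rfl
          have hb2 : ∀ b, N0 (Sum.inl (Sum.inl a)) (Sum.inl (Sum.inr b)) * z (Sum.inl (Sum.inr b))
              = (if a = b then 1 else 0) * z2 b := by
            intro b
            show ((1 : Matrix (Fin n) (Fin n) _) a b) * z2 b = _
            rw [Matrix.one_apply]
          have hb3 : ∀ q, N0 (Sum.inl (Sum.inl a)) (Sum.inr q) * z (Sum.inr q) = 0 := by
            intro q
            show (0 : MvPolynomial {e // e ∈ D} ℝ) * z3 q = 0
            rw [zero_mul]
          simp only [hb1, hb2, hb3]
          rw [Finset.sum_const_zero, add_zero]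
          have : (∑ b, (if a = b then (1:MvPolynomial {e // e ∈ D} ℝ) else 0) * z2 b) = z2 a := by
            simp only [ite_mul, one_mul, zero_mul]
            rw [Finset.sum_ite_eq Finset.univ a z2, if_pos (Finset.mem_univ _)]
          rw [this, hz2]
          simp only [if_neg haj]
          ring
      · by_cases hai : a = i0
        · have hzp : (Sum.inl (Sum.inr a) : (Fin n ⊕ Fin n) ⊕ Fin m) = p2 := by
            rw [hp2, hai]
          rw [hzp]
          simp only [hrowp2, he2]
          rw [hsum1 z q2]
          show z2 j0 = 0
          rw [hz2]
          simp
        · have hne1 : (Sum.inl (Sum.inr a) : (Fin n ⊕ Fin n) ⊕ Fin m) ≠ p1 := by simp [hp1]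
          have hne2 : (Sum.inl (Sum.inr a) : (Fin n ⊕ Fin n) ⊕ Fin m) ≠ p2 := by
            simp [hp2, hai]
          simp only [hrowoth _ hne1 hne2]
          rw [Fintype.sum_sum_type, Fintype.sum_sum_type]
          have hb1 : ∀ b, N0 (Sum.inl (Sum.inr a)) (Sum.inl (Sum.inl b)) * z (Sum.inl (Sum.inl b))
              = 0 := by
            intro b
            show (0 : MvPolynomial {e // e ∈ D} ℝ) * z1 b = 0
            rw [zero_mul]
          have hb2 : ∀ b, N0 (Sum.inl (Sum.inr a)) (Sum.inl (Sum.inr b)) * z (Sum.inl (Sum.inr b))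
              = B' a b * z2 b := fun b => rfl
          have hb3 : ∀ q, N0 (Sum.inl (Sum.inr a)) (Sum.inr q) * z (Sum.inr q)
              = (if a = c q then 1 else 0) * z3 q := fun q => rfl
          simp only [hb1, hb2, hb3]
          rw [Finset.sum_const_zero, zero_add]
          by_cases haJ : a ∈ J
          · obtain ⟨q0, hq0⟩ := hcsurj a haJ
            have hitecq : ∀ q, (if a = c q then (1 : MvPolynomial {e // e ∈ D} ℝ) else 0)
                = (if q = q0 then 1 else 0) := by
              intro q
              by_cases h : q = q0
              · rw [h, hq0]
                simp
              · rw [if_neg h, if_neg]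
                intro hcon
                have hcc : c q = c q0 := by rw [hq0]; exact hcon.symm
                exact h (hcinj hcc)
            simp only [hitecq, ite_mul, one_mul, zero_mul]
            rw [Finset.sum_ite_eq' Finset.univ q0 z3, if_pos (Finset.mem_univ _)]
            have hz3q0 : z3 q0 = -(∑ b, B' a b * z2 b) := by
              rw [hz3]
              simp only [hq0]
            rw [hz3q0]
            ring
          · have hzero : ∀ q, (if a = c q then (1 : MvPolynomial {e // e ∈ D} ℝ) else 0) = 0 := by
              intro q
              rw [if_neg]
              intro hcon
              exact haJ (hcon ▸ hcJ q)
            simp only [hzero, zero_mul]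
            rw [Finset.sum_const_zero, add_zero]
            have haj : a ≠ j0 := by
              intro h
              exact haJ (by rw [hJ, h]; exact Finset.mem_insert_self _ _)
            have haI : a ∉ I := by
              rw [hI]
              simp only [Finset.mem_insert]
              push_neg
              refine ⟨hai, fun hS => haJ ?_⟩
              rw [hJ]
              exact Finset.mem_insert_of_mem hS
            have hsplit : ∀ b, B' a b * z2 b
                = -(B' a b * (∑ d, B' d b * z1 d))
                  + (if b = j0 then B' a j0 * (∑ d, B' d j0 * z1 d) else 0) := by
              intro b
              rw [hz2]
              by_cases hb : b = j0
              · rw [hb]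
                simp
              · simp only [if_neg hb]
                ring
            rw [Finset.sum_congr rfl fun b _ => hsplit b, Finset.sum_add_distrib,
              Finset.sum_ite_eq' Finset.univ j0
                (fun _ => B' a j0 * (∑ d, B' d j0 * z1 d)), if_pos (Finset.mem_univ _)]
            have hMent : ∀ d, M0 a d = ∑ b, B' a b * B' d b := by
              intro d
              rw [hM0, Matrix.mul_apply]
              simp only [Matrix.transpose_apply]
            have hswap : (∑ b, B' a b * (∑ d, B' d b * z1 d)) = ∑ d, M0 a d * z1 d := by
              simp only [Finset.mul_sum]
              rw [Finset.sum_comm]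
              refine Finset.sum_congr rfl fun d _ => ?_
              rw [hMent d, Finset.sum_mul]
              refine Finset.sum_congr rfl fun b _ => ?_
              ring
            have hneg : (∑ b, -(B' a b * (∑ d, B' d b * z1 d))) = -(∑ d, M0 a d * z1 d) := by
              rw [← hswap]
              exact Finset.sum_neg_distrib _
            rw [hneg, hz1C a haI haj]
            ring
      · have hne1 : (Sum.inr p : (Fin n ⊕ Fin n) ⊕ Fin m) ≠ p1 := by simp [hp1]
        have hne2 : (Sum.inr p : (Fin n ⊕ Fin n) ⊕ Fin m) ≠ p2 := by simp [hp2]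
        simp only [hrowoth _ hne1 hne2]
        rw [Fintype.sum_sum_type, Fintype.sum_sum_type]
        have hb1 : ∀ b, N0 (Sum.inr p) (Sum.inl (Sum.inl b)) * z (Sum.inl (Sum.inl b))
            = (if b = r p then 1 else 0) * z1 b := fun b => rfl
        have hb2 : ∀ b, N0 (Sum.inr p) (Sum.inl (Sum.inr b)) * z (Sum.inl (Sum.inr b)) = 0 := by
          intro b
          show (0 : MvPolynomial {e // e ∈ D} ℝ) * z2 b = 0
          rw [zero_mul]
        have hb3 : ∀ q, N0 (Sum.inr p) (Sum.inr q) * z (Sum.inr q) = 0 := by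
          intro q
          show (0 : MvPolynomial {e // e ∈ D} ℝ) * z3 q = 0
          rw [zero_mul]
        simp only [hb1, hb2, hb3]
        rw [Finset.sum_const_zero, Finset.sum_const_zero, add_zero, add_zero]
        simp only [ite_mul, one_mul, zero_mul]
        rw [Finset.sum_ite_eq' Finset.univ (r p) z1, if_pos (Finset.mem_univ _)]
        exact hz1I _ (hrI p)
    rw [hD12]
    exact Matrix.exists_mulVec_eq_zero_iff.mp ⟨z, hzne, hker⟩
  -- final assembly
  have hfN : fpoly n D i0 j0 S = N.det := by rw [hf, hdetN]
  rw [hfN, hdetexp, hD12zero, mul_zero, mul_zero, add_zero]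
  have hx1 : MvPolynomial.degreeOf e0 (-x) = 1 := by
    rw [MvPolynomial.degreeOf_neg, hx, MvPolynomial.degreeOf_X, if_pos rfl]
  have hdetN0 : MvPolynomial.degreeOf e0 N0.det = 0 :=
    degOf_det_eq_zero e0 N0 hN0deg
  have hdegD1 : MvPolynomial.degreeOf e0 D1 = 0 :=
    degOf_det_eq_zero e0 _ (hupdeg p1 e1 he1deg)
  have hdegD2 : MvPolynomial.degreeOf e0 D2 = 0 :=
    degOf_det_eq_zero e0 _ (hupdeg p2 e2 he2deg)
  refine le_trans (MvPolynomial.degreeOf_add_le _ _ _) (max_le (le_trans (MvPolynomial.degreeOf_add_le _ _ _) (max_le ?_ ?_)) ?_)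
  · rw [hdetN0]
    exact Nat.zero_le 1
  · refine le_trans (MvPolynomial.degreeOf_mul_le _ _ _) ?_
    rw [hx1, hdegD2]
  · refine le_trans (MvPolynomial.degreeOf_mul_le _ _ _) ?_
    rw [hx1, hdegD1]
end

section
/- Assume (i0,j0) ∈ D and that for every s ∈ S that is below j0 one has (i0,s) ∈ D. Then det Σ[S ∪ {i0}, S ∪ {i0}] lies in the ideal of R generated by the partial derivatives {∂f/∂X_e : e ∈ D}. -/
open MvPolynomial Matrix

open Finset Equiv

private lemma derivation_prod {A : Type*} [CommRing A] [Algebra ℝ A] (d : Derivation ℝ A A)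
    {ι : Type*} [DecidableEq ι] (s : Finset ι) (f : ι → A) :
    d (∏ i ∈ s, f i) = ∑ i ∈ s, (∏ j ∈ s.erase i, f j) * d (f i) := by
  induction s using Finset.induction_on with
  | empty => simp
  | @insert a s ha ih =>
      rw [Finset.prod_insert ha, d.leibniz, smul_eq_mul, smul_eq_mul, ih, Finset.mul_sum,
        Finset.sum_insert ha, Finset.erase_insert ha]
      rw [add_comm]
      congr 1
      refine Finset.sum_congr rfl fun i hi => ?_
      rw [Finset.erase_insert_of_ne (fun h => ha (by rw [h]; exact hi)), Finset.prod_insert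
        (fun h => ha (Finset.mem_of_mem_erase h)), mul_assoc]

private lemma derivation_det {A : Type*} [CommRing A] [Algebra ℝ A] (d : Derivation ℝ A A)
    {k : ℕ} (M : Matrix (Fin k) (Fin k) A) :
    d M.det = ∑ j, (M.updateCol j fun i => d (M i j)).det := by
  rw [Matrix.det_apply, map_sum]
  have key : ∀ j : Fin k, (M.updateCol j fun i => d (M i j)).det
      = ∑ σ : Perm (Fin k), Perm.sign σ • (d (M (σ j) j) * ∏ i ∈ Finset.univ.erase j, M (σ i) i) := by
    intro j
    rw [Matrix.det_apply]
    refine Finset.sum_congr rfl fun σ _ => ?_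
    congr 1
    rw [← Finset.mul_prod_erase Finset.univ _ (Finset.mem_univ j), Matrix.updateCol_self]
    congr 1
    refine Finset.prod_congr rfl fun i hi => ?_
    rw [Matrix.updateCol_ne (Finset.ne_of_mem_erase hi)]
  calc ∑ σ : Perm (Fin k), d (Perm.sign σ • ∏ i, M (σ i) i)
      = ∑ σ : Perm (Fin k), ∑ j : Fin k,
          Perm.sign σ • (d (M (σ j) j) * ∏ i ∈ Finset.univ.erase j, M (σ i) i) := by
        refine Finset.sum_congr rfl fun σ _ => ?_
        rw [Units.smul_def, map_zsmul, derivation_prod d, Finset.smul_sum]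
        refine Finset.sum_congr rfl fun j _ => ?_
        rw [Units.smul_def, mul_comm]
    _ = ∑ j : Fin k, (M.updateCol j fun i => d (M i j)).det := by
        rw [Finset.sum_comm]
        exact Finset.sum_congr rfl fun j _ => (key j).symm

private lemma det_updateCol_sum' {A : Type*} [CommRing A] {k : ℕ}
    (M : Matrix (Fin k) (Fin k) A) (j : Fin k) {ι : Type*} [DecidableEq ι] (s : Finset ι)
    (g : ι → Fin k → A) :
    (M.updateCol j fun i => ∑ x ∈ s, g x i).det = ∑ x ∈ s, (M.updateCol j (g x)).det := by
  induction s using Finset.induction_on with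
  | empty =>
      rw [Finset.sum_empty]
      refine Matrix.det_eq_zero_of_column_eq_zero j fun i => ?_
      rw [Matrix.updateCol_self, Finset.sum_empty]
  | @insert a s ha ih =>
      rw [Finset.sum_insert ha]
      have hfun : (fun i => ∑ x ∈ insert a s, g x i)
          = g a + fun i => ∑ x ∈ s, g x i := by
        funext i; rw [Finset.sum_insert ha]; rfl
      rw [hfun, Matrix.det_updateCol_add, ih]

/-- If `i0 → j0` and `i0 → s` for every `s ∈ S` below `j0`, then
`det Σ[S ∪ {i0}, S ∪ {i0}]` lies in the ideal generated by the partial derivatives of `f`. -/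
theorem statement11 (n : ℕ) (D : Finset (Fin n × Fin n)) (hD : ∀ e ∈ D, e.1 < e.2)
    (i0 j0 : Fin n) (hne : i0 ≠ j0) (S : Finset (Fin n)) (hi0S : i0 ∉ S) (hj0S : j0 ∉ S)
    (hedge : (i0, j0) ∈ D) (hbelow : ∀ s ∈ S, Below D j0 s → (i0, s) ∈ D) :
    subdet (sigmaMat n D) (insert i0 S) (insert i0 S) ∈
      Ideal.span (Set.range fun e : {e // e ∈ D} => MvPolynomial.pderiv e (fpoly n D i0 j0 S)) := by
  classical
  set Idl := Ideal.span
      (Set.range fun e : {e // e ∈ D} => MvPolynomial.pderiv e (fpoly n D i0 j0 S)) with hIdl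
  set Λ : Matrix (Fin n) (Fin n) (MvPolynomial {e // e ∈ D} ℝ) := 1 - edgeMatrix n D with hΛdef
  set B : Matrix (Fin n) (Fin n) (MvPolynomial {e // e ∈ D} ℝ) := Λ⁻¹ with hBdef
  have hA0 : ∀ a b : Fin n, ¬ a < b → edgeMatrix n D a b = 0 := by
    intro a b h
    simp only [edgeMatrix, Matrix.of_apply]
    rw [dif_neg fun hm => h (hD _ hm)]
  have hdet : Λ.det = 1 := by
    have htri : Λ.BlockTriangular id := by
      intro a b hba
      have hne' : a ≠ b := (ne_of_gt hba)
      simp only [hΛdef, Matrix.sub_apply, Matrix.one_apply_ne hne',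
        hA0 a b (fun h => absurd hba (asymm h)), sub_zero]
    rw [Matrix.det_of_upperTriangular htri]
    have : ∀ i : Fin n, Λ i i = 1 := by
      intro i
      simp [hΛdef, Matrix.sub_apply, Matrix.one_apply_eq, hA0 i i (lt_irrefl i)]
    simp [this]
  have hunit : IsUnit Λ.det := by rw [hdet]; exact isUnit_one
  have hBΛ : B * Λ = 1 := Matrix.nonsing_inv_mul Λ hunit
  have hΛB : Λ * B = 1 := Matrix.mul_nonsing_inv Λ hunit
  have hSigma : sigmaMat n D = Bᵀ * B := by
    rw [sigmaMat, ← hΛdef, ← Matrix.transpose_nonsing_inv, ← hBdef]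
  have hdΛ : ∀ (e : {e // e ∈ D}) (a b : Fin n),
      pderiv e (Λ a b) = - (if (a, b) = e.1 then 1 else 0) := by
    intro e a b
    simp only [hΛdef, Matrix.sub_apply, map_sub]
    have h1 : pderiv e ((1 : Matrix (Fin n) (Fin n) (MvPolynomial {e // e ∈ D} ℝ)) a b) = 0 := by
      rcases eq_or_ne a b with h | h
      · subst h; rw [Matrix.one_apply_eq]; exact pderiv_one
      · rw [Matrix.one_apply_ne h, map_zero]
    rw [h1, zero_sub]
    congr 1
    simp only [edgeMatrix, Matrix.of_apply]
    by_cases hm : (a, b) ∈ D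
    · rw [dif_pos hm]
      by_cases he : (⟨(a,b), hm⟩ : {e // e ∈ D}) = e
      · rw [he, pderiv_X_self, if_pos]
        rw [← he]
      · rw [pderiv_X_of_ne he, if_neg]
        intro hab
        exact he (Subtype.ext hab)
    · rw [dif_neg hm, map_zero, if_neg, eq_comm]
      intro hab
      exact hm (hab ▸ e.2)
  have hdB : ∀ (v : Fin n) (hv : (i0, v) ∈ D) (a b : Fin n),
      pderiv (⟨(i0, v), hv⟩ : {e // e ∈ D}) (B a b) = B a i0 * B v b := by
    intro v hv a b
    set e : {e // e ∈ D} := ⟨(i0, v), hv⟩ with hedef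
    set DB : Matrix (Fin n) (Fin n) (MvPolynomial {e // e ∈ D} ℝ) :=
      Matrix.of (fun a b => pderiv e (B a b)) with hDBdef
    have h1 : DB * Λ = B * Matrix.single i0 v (1 : MvPolynomial {e // e ∈ D} ℝ) := by
      have h0 : DB * Λ + B * Matrix.of (fun a b => pderiv e (Λ a b)) = 0 := by
        funext a b
        have hz : pderiv e ((B * Λ) a b) = 0 := by
          rw [hBΛ]
          rcases eq_or_ne a b with h | h
          · subst h; rw [Matrix.one_apply_eq]; exact pderiv_one
          · rw [Matrix.one_apply_ne h, map_zero]
        rw [Matrix.mul_apply, map_sum] at hz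
        have hz2 : ∑ c, (pderiv e (B a c) * Λ c b + B a c * pderiv e (Λ c b)) = 0 := by
          rw [← hz]
          refine Finset.sum_congr rfl fun c _ => ?_
          rw [(pderiv e).leibniz, smul_eq_mul, smul_eq_mul]
          ring
        rw [Finset.sum_add_distrib] at hz2
        simp only [Matrix.add_apply, Matrix.mul_apply, Matrix.zero_apply, hDBdef,
          Matrix.of_apply]
        exact hz2
      have h2 : Matrix.of (fun a b => pderiv e (Λ a b))
          = - Matrix.single i0 v (1 : MvPolynomial {e // e ∈ D} ℝ) := by
        funext a b
        rw [Matrix.of_apply, hdΛ e a b]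
        simp only [Matrix.neg_apply, Matrix.single, Matrix.of_apply]
        congr 1
        by_cases h : (a, b) = ((i0 : Fin n), v)
        · rw [if_pos h, if_pos ⟨(congrArg Prod.fst h).symm, (congrArg Prod.snd h).symm⟩]
        · rw [if_neg h, if_neg]
          rintro ⟨h1', h2'⟩
          exact h (Prod.ext h1'.symm h2'.symm)
      rw [h2, Matrix.mul_neg] at h0
      rwa [add_neg_eq_zero] at h0
    have h3 : DB = B * (Matrix.single i0 v (1 : MvPolynomial {e // e ∈ D} ℝ) * B) := by
      calc DB = DB * (Λ * B) := by rw [hΛB, Matrix.mul_one]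
        _ = (DB * Λ) * B := by rw [← Matrix.mul_assoc]
        _ = B * (Matrix.single i0 v (1 : MvPolynomial {e // e ∈ D} ℝ) * B) := by
            rw [h1, Matrix.mul_assoc]
    have h4 : (B * (Matrix.single i0 v (1 : MvPolynomial {e // e ∈ D} ℝ) * B)) a b
        = B a i0 * B v b := by
      rw [Matrix.mul_apply]
      rw [Finset.sum_eq_single i0]
      · rw [Matrix.single_mul_apply_same, one_mul]
      · intro c _ hc
        rw [Matrix.single_mul_apply_of_ne (h := hc), mul_zero]
      · intro h; exact absurd (Finset.mem_univ i0) h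
    calc pderiv e (B a b) = DB a b := rfl
      _ = B a i0 * B v b := by rw [h3]; exact h4
  have hdS : ∀ (v : Fin n) (hv : (i0, v) ∈ D) (a b : Fin n),
      pderiv (⟨(i0, v), hv⟩ : {e // e ∈ D}) (sigmaMat n D a b)
        = B v a * sigmaMat n D i0 b + sigmaMat n D a i0 * B v b := by
    intro v hv a b
    have hs : ∀ x y : Fin n, sigmaMat n D x y = ∑ c, B c x * B c y := by
      intro x y
      rw [hSigma, Matrix.mul_apply]
      refine Finset.sum_congr rfl fun c _ => ?_
      rw [Matrix.transpose_apply]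
    rw [hs a b, map_sum]
    have hterm : ∀ c : Fin n, pderiv (⟨(i0, v), hv⟩ : {e // e ∈ D}) (B c a * B c b)
        = B v a * (B c i0 * B c b) + (B c a * B c i0) * B v b := by
      intro c
      rw [(pderiv (⟨(i0, v), hv⟩ : {e // e ∈ D})).leibniz, smul_eq_mul, smul_eq_mul,
        hdB v hv c a, hdB v hv c b]
      ring
    rw [Finset.sum_congr rfl fun c _ => hterm c, Finset.sum_add_distrib,
      ← Finset.mul_sum, ← Finset.sum_mul, ← hs i0 b, ← hs a i0]
  -- index setup
  have hcard : (insert i0 S).card = (insert j0 S).card := by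
    rw [Finset.card_insert_of_notMem hi0S, Finset.card_insert_of_notMem hj0S]
  set ρ : Fin (insert i0 S).card → Fin n :=
    fun p => ((insert i0 S).orderIsoOfFin rfl p : Fin n) with hρdef
  set γ : Fin (insert i0 S).card → Fin n :=
    fun p => ((insert j0 S).orderIsoOfFin hcard.symm p : Fin n) with hγdef
  have hρmem : ∀ p, ρ p ∈ insert i0 S := fun p => ((insert i0 S).orderIsoOfFin rfl p).2
  have hγmem : ∀ p, γ p ∈ insert j0 S := fun p => ((insert j0 S).orderIsoOfFin hcard.symm p).2
  have hγinj : Function.Injective γ := fun p q h =>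
    (OrderIso.injective _) (Subtype.ext h)
  set M := (sigmaMat n D).submatrix ρ γ with hMdef
  set w : Fin (insert i0 S).card → MvPolynomial {e // e ∈ D} ℝ :=
    fun i => sigmaMat n D (ρ i) i0 with hwdef
  set T : (Fin n → MvPolynomial {e // e ∈ D} ℝ) → MvPolynomial {e // e ∈ D} ℝ :=
    fun u => ∑ j, u (γ j) * (M.updateCol j w).det with hTdef
  set U : (Fin n → MvPolynomial {e // e ∈ D} ℝ) → MvPolynomial {e // e ∈ D} ℝ :=
    fun u => ∑ j, sigmaMat n D i0 (γ j) * (M.updateCol j (fun i => u (ρ i))).det with hUdef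
  have hf : fpoly n D i0 j0 S = M.det := by
    simp only [fpoly, subdet]
    rw [dif_pos hcard]
  have hg : subdet (sigmaMat n D) (insert i0 S) (insert i0 S)
      = ((sigmaMat n D).submatrix ρ ρ).det := by
    simp only [subdet]
    rw [dif_pos trivial]
  -- linearity of T and U
  have hTadd : ∀ u1 u2 : Fin n → MvPolynomial {e // e ∈ D} ℝ,
      T (fun c => u1 c + u2 c) = T u1 + T u2 := by
    intro u1 u2
    simp only [hTdef]
    exact (Finset.sum_congr rfl fun j _ => add_mul _ _ _).trans Finset.sum_add_distrib
  have hUadd : ∀ u1 u2 : Fin n → MvPolynomial {e // e ∈ D} ℝ,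
      U (fun c => u1 c + u2 c) = U u1 + U u2 := by
    intro u1 u2
    simp only [hUdef]
    refine (Finset.sum_congr rfl fun j _ => ?_).trans Finset.sum_add_distrib
    have h2 : (fun i => u1 (ρ i) + u2 (ρ i)) = (fun i => u1 (ρ i)) + fun i => u2 (ρ i) := rfl
    rw [h2, Matrix.det_updateCol_add, mul_add]
  have hTlin : ∀ (a : Fin n → MvPolynomial {e // e ∈ D} ℝ)
      (u : Fin n → Fin n → MvPolynomial {e // e ∈ D} ℝ),
      T (fun c => ∑ v, a v * u v c) = ∑ v, a v * T (fun c => u v c) := by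
    intro a u
    simp only [hTdef]
    calc ∑ j, (∑ v, a v * u v (γ j)) * (M.updateCol j w).det
        = ∑ j, ∑ v, a v * (u v (γ j) * (M.updateCol j w).det) := by
          refine Finset.sum_congr rfl fun j _ => ?_
          rw [Finset.sum_mul]
          exact Finset.sum_congr rfl fun v _ => mul_assoc _ _ _
      _ = ∑ v, a v * ∑ j, u v (γ j) * (M.updateCol j w).det := by
          rw [Finset.sum_comm]
          exact Finset.sum_congr rfl fun v _ => (Finset.mul_sum _ _ _).symm
  have hUlin : ∀ (a : Fin n → MvPolynomial {e // e ∈ D} ℝ)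
      (u : Fin n → Fin n → MvPolynomial {e // e ∈ D} ℝ),
      U (fun c => ∑ v, a v * u v c) = ∑ v, a v * U (fun c => u v c) := by
    intro a u
    simp only [hUdef]
    have hdet1 : ∀ j, (M.updateCol j fun i => ∑ v, a v * u v (ρ i)).det
        = ∑ v, a v * (M.updateCol j fun i => u v (ρ i)).det := by
      intro j
      rw [det_updateCol_sum' M j Finset.univ (fun v i => a v * u v (ρ i))]
      refine Finset.sum_congr rfl fun v _ => ?_
      have h2 : (fun i => a v * u v (ρ i)) = a v • fun i => u v (ρ i) := rfl
      rw [h2, Matrix.det_updateCol_smul]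
    calc ∑ j, sigmaMat n D i0 (γ j) * (M.updateCol j fun i => ∑ v, a v * u v (ρ i)).det
        = ∑ j, ∑ v, a v * (sigmaMat n D i0 (γ j) * (M.updateCol j fun i => u v (ρ i)).det) := by
          refine Finset.sum_congr rfl fun j _ => ?_
          rw [hdet1 j, Finset.mul_sum]
          exact Finset.sum_congr rfl fun v _ => by ring
      _ = ∑ v, a v * ∑ j, sigmaMat n D i0 (γ j) * (M.updateCol j fun i => u v (ρ i)).det := by
          rw [Finset.sum_comm]
          exact Finset.sum_congr rfl fun v _ => (Finset.mul_sum _ _ _).symm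
  -- derivative of f
  have hderiv : ∀ (v : Fin n) (hv : (i0, v) ∈ D),
      pderiv (⟨(i0, v), hv⟩ : {e // e ∈ D}) (fpoly n D i0 j0 S)
        = T (fun c => B v c) + U (fun c => B v c) := by
    intro v hv
    rw [hf, derivation_det]
    have hcol : ∀ j, (fun i => pderiv (⟨(i0, v), hv⟩ : {e // e ∈ D}) (M i j))
        = (B v (γ j) • w) + (sigmaMat n D i0 (γ j) • fun i => B v (ρ i)) := by
      intro j
      funext i
      show pderiv (⟨(i0, v), hv⟩ : {e // e ∈ D}) (sigmaMat n D (ρ i) (γ j)) = _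
      rw [hdS v hv]
      simp only [Pi.add_apply, Pi.smul_apply, smul_eq_mul, hwdef]
      ring
    calc ∑ j, (M.updateCol j fun i => pderiv (⟨(i0, v), hv⟩ : {e // e ∈ D}) (M i j)).det
        = ∑ j, (B v (γ j) * (M.updateCol j w).det
            + sigmaMat n D i0 (γ j) * (M.updateCol j fun i => B v (ρ i)).det) := by
          refine Finset.sum_congr rfl fun j _ => ?_
          rw [hcol j, Matrix.det_updateCol_add, Matrix.det_updateCol_smul,
            Matrix.det_updateCol_smul]
      _ = T (fun c => B v c) + U (fun c => B v c) := Finset.sum_add_distrib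
  -- vanishing of T, U on rows of the identity matrix outside the index sets
  have hTone : ∀ v : Fin n, v ∉ insert j0 S →
      T (fun c => (1 : Matrix (Fin n) (Fin n) (MvPolynomial {e // e ∈ D} ℝ)) v c) = 0 := by
    intro v hv
    simp only [hTdef]
    refine Finset.sum_eq_zero fun j _ => ?_
    rw [Matrix.one_apply_ne (fun h => hv (by rw [h]; exact hγmem j)), zero_mul]
  have hUone : ∀ v : Fin n, v ∉ insert i0 S →
      U (fun c => (1 : Matrix (Fin n) (Fin n) (MvPolynomial {e // e ∈ D} ℝ)) v c) = 0 := by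
    intro v hv
    simp only [hUdef]
    refine Finset.sum_eq_zero fun j _ => ?_
    have hz : (M.updateCol j fun i =>
        (1 : Matrix (Fin n) (Fin n) (MvPolynomial {e // e ∈ D} ℝ)) v (ρ i)).det = 0 := by
      refine Matrix.det_eq_zero_of_column_eq_zero j fun i => ?_
      rw [Matrix.updateCol_self]
      exact Matrix.one_apply_ne (fun h => hv (by rw [h]; exact hρmem i))
    rw [hz, mul_zero]
  -- row expansion of B
  have hrow : ∀ v : Fin n, (fun c => B v c)
      = fun c => (1 : Matrix (Fin n) (Fin n) (MvPolynomial {e // e ∈ D} ℝ)) v c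
          + ∑ x, edgeMatrix n D v x * B x c := by
    intro v
    have h := hΛB
    rw [hΛdef, sub_mul, one_mul, sub_eq_iff_eq_add] at h
    funext c
    conv_lhs => rw [h]
    rw [Matrix.add_apply, Matrix.mul_apply]
  -- transitivity gives strict inequality along Below
  have hlt : ∀ a b : Fin n, Below D a b → a < b := by
    intro a b h
    induction h with
    | single h => exact hD _ h
    | tail _ h ih => exact lt_trans ih (hD _ h)
  -- the key induction
  have hH : ∀ (m : ℕ) (v : Fin n), n ≤ v.val + m → ((i0, v) ∈ D ∨ Below D j0 v) →
      T (fun c => B v c) + U (fun c => B v c) ∈ Idl := by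
    intro m
    induction m with
    | zero =>
        intro v hnv _
        exact absurd hnv (by have := v.isLt; omega)
    | succ m ih =>
        intro v hnv hcase
        by_cases hv : (i0, v) ∈ D
        · rw [← hderiv v hv]
          exact Ideal.subset_span ⟨⟨(i0, v), hv⟩, rfl⟩
        · have hb : Below D j0 v := hcase.resolve_left hv
          have hvS : v ∉ S := fun hm => hv (hbelow v hm hb)
          have hj0v : j0 < v := hlt _ _ hb
          have hvnotj : v ∉ insert j0 S := by
            rw [Finset.mem_insert]
            rintro (h | h)
            · exact absurd h (ne_of_gt hj0v)
            · exact hvS h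
          have hvnoti : v ∉ insert i0 S := by
            rw [Finset.mem_insert]
            rintro (h | h)
            · have h1 : i0 < j0 := hD _ hedge
              rw [← h] at h1
              exact absurd (lt_trans h1 hj0v) (lt_irrefl v)
            · exact hvS h
          have hexp : T (fun c => B v c) + U (fun c => B v c)
              = (T (fun c => (1 : Matrix (Fin n) (Fin n) (MvPolynomial {e // e ∈ D} ℝ)) v c)
                  + U (fun c => (1 : Matrix (Fin n) (Fin n) (MvPolynomial {e // e ∈ D} ℝ)) v c))
                + ∑ x, edgeMatrix n D v x * (T (fun c => B x c) + U (fun c => B x c)) := by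
            have e1 : T (fun c => B v c)
                = T (fun c => (1 : Matrix (Fin n) (Fin n) (MvPolynomial {e // e ∈ D} ℝ)) v c)
                  + ∑ x, edgeMatrix n D v x * T (fun c => B x c) := by
              calc T (fun c => B v c)
                  = T (fun c => (1 : Matrix (Fin n) (Fin n) (MvPolynomial {e // e ∈ D} ℝ)) v c
                      + ∑ x, edgeMatrix n D v x * B x c) := by rw [hrow v]
                _ = T (fun c => (1 : Matrix (Fin n) (Fin n) (MvPolynomial {e // e ∈ D} ℝ)) v c)
                    + T (fun c => ∑ x, edgeMatrix n D v x * B x c) :=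
                  hTadd (fun c => (1 : Matrix (Fin n) (Fin n) (MvPolynomial {e // e ∈ D} ℝ)) v c)
                    (fun c => ∑ x, edgeMatrix n D v x * B x c)
                _ = _ := by rw [hTlin (fun x => edgeMatrix n D v x) (fun x c => B x c)]
            have e2 : U (fun c => B v c)
                = U (fun c => (1 : Matrix (Fin n) (Fin n) (MvPolynomial {e // e ∈ D} ℝ)) v c)
                  + ∑ x, edgeMatrix n D v x * U (fun c => B x c) := by
              calc U (fun c => B v c)
                  = U (fun c => (1 : Matrix (Fin n) (Fin n) (MvPolynomial {e // e ∈ D} ℝ)) v c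
                      + ∑ x, edgeMatrix n D v x * B x c) := by rw [hrow v]
                _ = U (fun c => (1 : Matrix (Fin n) (Fin n) (MvPolynomial {e // e ∈ D} ℝ)) v c)
                    + U (fun c => ∑ x, edgeMatrix n D v x * B x c) :=
                  hUadd (fun c => (1 : Matrix (Fin n) (Fin n) (MvPolynomial {e // e ∈ D} ℝ)) v c)
                    (fun c => ∑ x, edgeMatrix n D v x * B x c)
                _ = _ := by rw [hUlin (fun x => edgeMatrix n D v x) (fun x c => B x c)]
            rw [e1, e2, Finset.sum_congr rfl
              (fun x _ => mul_add (edgeMatrix n D v x) (T fun c => B x c) (U fun c => B x c)),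
              Finset.sum_add_distrib]
            ring
          rw [hexp, hTone v hvnotj, hUone v hvnoti, add_zero, zero_add]
          refine Ideal.sum_mem _ fun x _ => ?_
          by_cases hx : (v, x) ∈ D
          · refine Ideal.mul_mem_left _ _ (ih x ?_ (Or.inr (hb.tail hx)))
            have hvx : v.val < x.val := hD _ hx
            omega
          · have hz : edgeMatrix n D v x = 0 := by
              simp only [edgeMatrix, Matrix.of_apply]
              rw [dif_neg hx]
            rw [hz, zero_mul]
            exact Ideal.zero_mem _
  -- position of j0 among the columns
  obtain ⟨p, hp⟩ : ∃ p, γ p = j0 := by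
    refine ⟨((insert j0 S).orderIsoOfFin hcard.symm).symm ⟨j0, Finset.mem_insert_self _ _⟩, ?_⟩
    simp only [hγdef]
    rw [OrderIso.apply_symm_apply]
  have hj0noti : j0 ∉ insert i0 S := by
    rw [Finset.mem_insert]
    rintro (h | h)
    · exact hne h.symm
    · exact hj0S h
  have hsum1 : ∑ v, Λ j0 v * (T (fun c => B v c) + U (fun c => B v c)) ∈ Idl := by
    refine Ideal.sum_mem _ fun v _ => ?_
    rcases eq_or_ne v j0 with h | h
    · subst h
      exact Ideal.mul_mem_left _ _ (hH n v (Nat.le_add_left n v.val) (Or.inl hedge))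
    · by_cases hx : (j0, v) ∈ D
      · exact Ideal.mul_mem_left _ _
          (hH n v (Nat.le_add_left n v.val) (Or.inr (Relation.TransGen.single hx)))
      · have hz : Λ j0 v = 0 := by
          have hz1 : edgeMatrix n D j0 v = 0 := by
            simp only [edgeMatrix, Matrix.of_apply]
            rw [dif_neg hx]
          simp only [hΛdef, Matrix.sub_apply, Matrix.one_apply_ne h.symm, hz1, sub_zero]
        rw [hz, zero_mul]
        exact Ideal.zero_mem _
  have hsum2 : ∑ v, Λ j0 v * (T (fun c => B v c) + U (fun c => B v c))
      = (M.updateCol p w).det := by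
    have e1 : ∀ c, ∑ v, Λ j0 v * B v c
        = (1 : Matrix (Fin n) (Fin n) (MvPolynomial {e // e ∈ D} ℝ)) j0 c := by
      intro c
      rw [← Matrix.mul_apply, hΛB]
    calc ∑ v, Λ j0 v * (T (fun c => B v c) + U (fun c => B v c))
        = (∑ v, Λ j0 v * T (fun c => B v c)) + ∑ v, Λ j0 v * U (fun c => B v c) := by
          rw [← Finset.sum_add_distrib]
          exact Finset.sum_congr rfl fun v _ => mul_add _ _ _
      _ = T (fun c => ∑ v, Λ j0 v * B v c) + U (fun c => ∑ v, Λ j0 v * B v c) := by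
          rw [hTlin (fun v => Λ j0 v) (fun v c => B v c), hUlin (fun v => Λ j0 v) (fun v c => B v c)]
      _ = T (fun c => (1 : Matrix (Fin n) (Fin n) (MvPolynomial {e // e ∈ D} ℝ)) j0 c)
          + U (fun c => (1 : Matrix (Fin n) (Fin n) (MvPolynomial {e // e ∈ D} ℝ)) j0 c) := by
          rw [show (fun c => ∑ v, Λ j0 v * B v c)
            = fun c => (1 : Matrix (Fin n) (Fin n) (MvPolynomial {e // e ∈ D} ℝ)) j0 c
            from funext e1]
      _ = T (fun c => (1 : Matrix (Fin n) (Fin n) (MvPolynomial {e // e ∈ D} ℝ)) j0 c) := by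
          rw [hUone j0 hj0noti, add_zero]
      _ = (M.updateCol p w).det := by
          simp only [hTdef]
          rw [Finset.sum_eq_single p]
          · rw [hp, Matrix.one_apply_eq, one_mul]
          · intro j _ hj
            rw [Matrix.one_apply_ne fun h => hj (hγinj (hp.trans h)).symm, zero_mul]
          · intro h
            exact absurd (Finset.mem_univ p) h
  set γ' : Fin (insert i0 S).card → Fin n := Function.update γ p i0 with hγ'def
  have hup : M.updateCol p w = (sigmaMat n D).submatrix ρ γ' := by
    funext i j
    rcases eq_or_ne j p with h | h
    · subst h
      rw [Matrix.updateCol_self]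
      simp only [hwdef, hγ'def, Matrix.submatrix_apply, Function.update_self]
    · rw [Matrix.updateCol_ne h]
      simp only [hMdef, hγ'def, Matrix.submatrix_apply, Function.update_of_ne h]
  have hγ'mem : ∀ j, γ' j ∈ insert i0 S := by
    intro j
    rcases eq_or_ne j p with h | h
    · subst h
      simp only [hγ'def, Function.update_self]
      exact Finset.mem_insert_self _ _
    · simp only [hγ'def, Function.update_of_ne h]
      have h1 : γ j ∈ insert j0 S := hγmem j
      rw [Finset.mem_insert] at h1
      rcases h1 with h1 | h1
      · exact absurd (hγinj (hp.trans h1.symm)).symm h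
      · exact Finset.mem_insert_of_mem h1
  have hγ'inj : Function.Injective γ' := by
    intro a b hab
    rcases eq_or_ne a p with ha | ha <;> rcases eq_or_ne b p with hb | hb
    · rw [ha, hb]
    · exfalso
      rw [ha] at hab
      simp only [hγ'def, Function.update_self, Function.update_of_ne hb] at hab
      have h1 : γ b ∈ insert j0 S := hγmem b
      rw [← hab, Finset.mem_insert] at h1
      rcases h1 with h1 | h1
      · exact hne h1
      · exact hi0S h1
    · exfalso
      rw [hb] at hab
      simp only [hγ'def, Function.update_self, Function.update_of_ne ha] at hab
      have h1 : γ a ∈ insert j0 S := hγmem a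
      rw [hab, Finset.mem_insert] at h1
      rcases h1 with h1 | h1
      · exact hne h1
      · exact hi0S h1
    · simp only [hγ'def, Function.update_of_ne ha, Function.update_of_ne hb] at hab
      exact hγinj hab
  set σfun : Fin (insert i0 S).card → Fin (insert i0 S).card :=
    fun j => ((insert i0 S).orderIsoOfFin rfl).symm ⟨γ' j, hγ'mem j⟩ with hσdef
  have hρσ : ∀ j, ρ (σfun j) = γ' j := by
    intro j
    simp only [hρdef, hσdef]
    rw [OrderIso.apply_symm_apply]
  have hσinj : Function.Injective σfun := fun a b h => hγ'inj (by rw [← hρσ a, ← hρσ b, h])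
  have hσbij : Function.Bijective σfun := Finite.injective_iff_bijective.mp hσinj
  set σ : Equiv.Perm (Fin (insert i0 S).card) := Equiv.ofBijective σfun hσbij with hσ'def
  have hsub : (sigmaMat n D).submatrix ρ γ'
      = ((sigmaMat n D).submatrix ρ ρ).submatrix id σ := by
    funext i j
    simp only [Matrix.submatrix_apply, id_eq, hσ'def, Equiv.ofBijective_apply, hρσ j]
  have hmem : ((sigmaMat n D).submatrix ρ γ').det ∈ Idl := by
    rw [← hup, ← hsum2]
    exact hsum1
  rw [hsub, Matrix.det_permute'] at hmem
  rw [hg]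
  rcases Int.units_eq_one_or (Perm.sign σ) with h | h
  · rw [h] at hmem
    simpa using hmem
  · rw [h] at hmem
    have h2 := neg_mem hmem
    simpa using h2
end

section
/- For all vertices i, j ∈ Fin n, the (i,j) entry of Σ_Ω equals the sum of the weights w(t) over all treks t from i to j: (Σ_Ω)_{ij} = Σ_{t trek from i to j} w(t). -/
open MvPolynomial Matrix

noncomputable section

/-- The polynomial ring in the edge variables `X_e`, `e ∈ D`, and the vertex
variables `ω_m`, `m ∈ Fin n`. -/
abbrev RingOm (n : ℕ) (D : Finset (Fin n × Fin n)) : Type :=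
  MvPolynomial ({e // e ∈ D} ⊕ Fin n) ℝ

/-- The matrix of edge variables. -/
def edgeMatrixOm (n : ℕ) (D : Finset (Fin n × Fin n)) :
    Matrix (Fin n) (Fin n) (RingOm n D) :=
  Matrix.of fun i j => if h : (i, j) ∈ D then X (Sum.inl ⟨(i, j), h⟩) else 0

/-- `Σ_Ω = (I - A)⁻ᵀ · Ω · (I - A)⁻¹` with `Ω = diag(ω_0, …, ω_{n-1})`. -/
def sigmaOmMat (n : ℕ) (D : Finset (Fin n × Fin n)) :
    Matrix (Fin n) (Fin n) (RingOm n D) :=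
  ((1 - edgeMatrixOm n D)ᵀ)⁻¹ * Matrix.diagonal (fun m => X (Sum.inr m)) *
    (1 - edgeMatrixOm n D)⁻¹

/-- The edge variable attached to a pair of vertices. -/
def edgeVarOm (n : ℕ) (D : Finset (Fin n × Fin n)) (p : Fin n × Fin n) : RingOm n D :=
  if h : p ∈ D then X (Sum.inl ⟨p, h⟩) else 0

/-- The product of the edge variables along the consecutive pairs of a list of vertices. -/
def pathProdOm (n : ℕ) (D : Finset (Fin n × Fin n)) (l : List (Fin n)) : RingOm n D :=
  ((l.zip l.tail).map (edgeVarOm n D)).prod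

/-- A trek: a pair of paths (the up part and the down part) starting at the same vertex,
the top. Each path is recorded as the list of its vertices, from the top downwards. -/
structure Trek (n : ℕ) (D : Finset (Fin n × Fin n)) where
  up : List (Fin n)
  down : List (Fin n)
  up_ne : up ≠ []
  down_ne : down ≠ []
  up_chain : up.Chain' fun i j => (i, j) ∈ D
  down_chain : down.Chain' fun i j => (i, j) ∈ D
  top_eq : up.head up_ne = down.head down_ne

namespace Trek

variable {n : ℕ} {D : Finset (Fin n × Fin n)}

/-- The top of a trek. -/
def top (t : Trek n D) : Fin n := t.up.head t.up_ne

/-- The starting vertex of a trek (the lower end of its up part). -/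
def start (t : Trek n D) : Fin n := t.up.getLast t.up_ne

/-- The end vertex of a trek (the lower end of its down part). -/
def endv (t : Trek n D) : Fin n := t.down.getLast t.down_ne

/-- The weight `w(t) = (∏_{e ∈ P_U} X_e) · ω_top · (∏_{e ∈ P_D} X_e)`. -/
def wt (t : Trek n D) : RingOm n D :=
  pathProdOm n D t.up * X (Sum.inr t.top) * pathProdOm n D t.down

/-- A sided intersection between two treks: a vertex on both up parts or on both
down parts. -/
def SidedMeet (t t' : Trek n D) : Prop :=
  ∃ v : Fin n, (v ∈ t.up ∧ v ∈ t'.up) ∨ (v ∈ t.down ∧ v ∈ t'.down)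

end Trek

/-- A trek system from `I` to `J`: a family of treks starting at the elements of `I`
whose end vertices enumerate `J` bijectively. -/
structure TrekSystem (n : ℕ) (D : Finset (Fin n × Fin n)) (I J : Finset (Fin n)) where
  trek : {i // i ∈ I} → Trek n D
  bij : {i // i ∈ I} ≃ {j // j ∈ J}
  start_eq : ∀ i, (trek i).start = i
  end_eq : ∀ i, (trek i).endv = bij i

namespace TrekSystem

variable {n : ℕ} {D : Finset (Fin n × Fin n)} {I J : Finset (Fin n)}

/-- The number of crossings of (the bijection induced by) a trek system. -/
def crossings (T : TrekSystem n D I J) : ℕ :=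
  (Finset.univ.filter fun p : {i // i ∈ I} × {i // i ∈ I} =>
    (p.1 : Fin n) < (p.2 : Fin n) ∧ ((T.bij p.2 : Fin n) < (T.bij p.1 : Fin n))).card

/-- The weight `w(T)` of a trek system: the product of the weights of its treks. -/
def wt (T : TrekSystem n D I J) : RingOm n D :=
  ∏ i : {i // i ∈ I}, (T.trek i).wt

/-- `sgn(T)·w(T)` of a trek system. -/
def sgnwt (T : TrekSystem n D I J) : RingOm n D :=
  (-1 : RingOm n D) ^ T.crossings * T.wt

/-- A trek system has no sided intersections if no two distinct treks in it have one. -/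
def NoSided (T : TrekSystem n D I J) : Prop :=
  ∀ i i', i ≠ i' → ¬ (T.trek i).SidedMeet (T.trek i')

end TrekSystem

namespace Aux13

variable {n : ℕ} (D : Finset (Fin n × Fin n))

/-- all strictly sorted lists -/
def allChains (n : ℕ) : Finset (List (Fin n)) :=
  (Finset.univ : Finset (Finset (Fin n))).image (fun s => Finset.sort s (· ≤ ·))

lemma mem_allChains {l : List (Fin n)} (hl : l.Pairwise (· < ·)) : l ∈ allChains n := by
  refine Finset.mem_image.mpr ⟨l.toFinset, Finset.mem_univ _, ?_⟩
  exact (List.toFinset_sort (· ≤ ·) (hl.nodup)).mpr (hl.imp le_of_lt)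

open Classical in
def paths (m i : Fin n) : Finset (List (Fin n)) :=
  (allChains n).filter fun l =>
    l ≠ [] ∧ l.Chain' (fun a b => (a, b) ∈ D) ∧ l.head? = some m ∧ l.getLast? = some i

variable (hD : ∀ e ∈ D, e.1 < e.2)
include hD

lemma sorted_of_chain {l : List (Fin n)} (hl : l.Chain' fun a b => (a, b) ∈ D) :
    l.Pairwise (· < ·) := by
  rw [← List.isChain_iff_pairwise]
  exact hl.imp fun {a b} h => hD (a, b) h

open Classical in
lemma mem_paths {m i : Fin n} {l : List (Fin n)} :
    l ∈ paths D m i ↔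
      l ≠ [] ∧ l.Chain' (fun a b => (a, b) ∈ D) ∧ l.head? = some m ∧ l.getLast? = some i := by
  constructor
  · intro h; exact (Finset.mem_filter.mp h).2
  · intro h
    exact Finset.mem_filter.mpr ⟨mem_allChains (sorted_of_chain D hD h.2.1), h⟩

end Aux13


namespace Aux13
variable {n : ℕ} (D : Finset (Fin n × Fin n))

lemma pathProd_singleton (a : Fin n) : pathProdOm n D [a] = 1 := by
  simp [pathProdOm]

lemma pathProd_cons (a b : Fin n) (t : List (Fin n)) :
    pathProdOm n D (a :: b :: t) = edgeVarOm n D (a, b) * pathProdOm n D (b :: t) := by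
  simp [pathProdOm, List.zip]

def B (m i : Fin n) : RingOm n D := ∑ l ∈ paths D m i, pathProdOm n D l

variable (hD : ∀ e ∈ D, e.1 < e.2)
include hD

lemma B_rec (m i : Fin n) :
    B D m i = (if m = i then 1 else 0) + ∑ k, edgeVarOm n D (m, k) * B D k i := by
  classical
  have hsplit :
      B D m i =
        (∑ l ∈ (paths D m i).filter (fun l => l.length = 1), pathProdOm n D l) +
        ∑ l ∈ (paths D m i).filter (fun l => ¬ l.length = 1), pathProdOm n D l :=
    (Finset.sum_filter_add_sum_filter_not _ _ _).symm
  have h1 : (paths D m i).filter (fun l => l.length = 1) =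
      if m = i then {[m]} else ∅ := by
    ext l
    simp only [Finset.mem_filter, mem_paths D hD]
    constructor
    · rintro ⟨⟨hne, hch, hh, hl⟩, hlen⟩
      match l, hlen with
      | [a], _ =>
        simp only [List.head?_cons, Option.some.injEq] at hh
        simp only [List.getLast?_singleton, Option.some.injEq] at hl
        subst hh; subst hl
        simp
    · intro hmem
      split_ifs at hmem with h
      · simp only [Finset.mem_singleton] at hmem
        subst hmem; subst h
        refine ⟨⟨by simp, by simp [List.Chain'], by simp, by simp⟩, by simp⟩
      · simp at hmem
  have h2 : ∑ l ∈ (paths D m i).filter (fun l => ¬ l.length = 1), pathProdOm n D l =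
      ∑ k, edgeVarOm n D (m, k) * B D k i := by
    unfold B
    simp only [Finset.mul_sum]
    rw [← Finset.sum_filter_add_sum_filter_not Finset.univ (fun k => (m, k) ∈ D)]
    have hzero : ∑ k ∈ Finset.univ.filter (fun k => ¬ (m, k) ∈ D),
        ∑ l ∈ paths D k i, edgeVarOm n D (m, k) * pathProdOm n D l = 0 := by
      apply Finset.sum_eq_zero
      intro k hk
      simp only [Finset.mem_filter] at hk
      apply Finset.sum_eq_zero
      intro l _
      rw [edgeVarOm, dif_neg hk.2, zero_mul]
    rw [hzero, add_zero, Finset.sum_sigma']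
    refine Finset.sum_nbij' (fun l => (⟨l.tail.headD m, l.tail⟩ : (_ : Fin n) × List (Fin n)))
      (fun p => m :: p.2) ?_ ?_ ?_ ?_ ?_
    · -- membership forward: l ∈ filter → sigma
      intro l hl
      simp only [Finset.mem_filter, mem_paths D hD] at hl
      obtain ⟨⟨hne, hch, hh, hlast⟩, hlen⟩ := hl
      match l, hne, hlen with
      | a :: b :: t, _, _ =>
        simp only [List.head?_cons, Option.some.injEq] at hh
        subst hh
        simp only [List.Chain', List.isChain_cons_cons] at hch
        simp only [Finset.mem_sigma, Finset.mem_filter, Finset.mem_univ, true_and,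
          List.tail_cons, List.headD]
        refine ⟨hch.1, (mem_paths D hD).mpr ⟨by simp, hch.2, rfl, ?_⟩⟩
        rw [List.getLast?_cons_cons] at hlast
        exact hlast
    · -- membership backward
      rintro ⟨k, l⟩ hp
      simp only [Finset.mem_sigma, Finset.mem_filter, Finset.mem_univ, true_and] at hp
      obtain ⟨hmk, hl⟩ := hp
      rw [mem_paths D hD] at hl
      obtain ⟨hne, hch, hh, hlast⟩ := hl
      match l, hne with
      | b :: t, _ =>
        simp only [List.head?_cons, Option.some.injEq] at hh
        subst hh
        simp only [Finset.mem_filter, mem_paths D hD]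
        refine ⟨⟨by simp, List.isChain_cons_cons.mpr ⟨hmk, hch⟩, rfl, ?_⟩, by simp⟩
        rw [List.getLast?_cons_cons]
        exact hlast
    · -- left inverse
      intro l hl
      simp only [Finset.mem_filter, mem_paths D hD] at hl
      obtain ⟨⟨hne, hch, hh, hlast⟩, hlen⟩ := hl
      match l, hne, hlen with
      | a :: b :: t, _, _ =>
        simp only [List.head?_cons, Option.some.injEq] at hh
        subst hh
        rfl
    · -- right inverse
      rintro ⟨k, l⟩ hp
      simp only [Finset.mem_sigma, Finset.mem_filter, Finset.mem_univ, true_and] at hp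
      rw [mem_paths D hD] at hp
      obtain ⟨hmk, hne, hch, hh, hlast⟩ := hp
      match l, hne with
      | b :: t, _ =>
        simp only [List.head?_cons, Option.some.injEq] at hh
        subst hh
        rfl
    · -- terms
      intro l hl
      simp only [Finset.mem_filter, mem_paths D hD] at hl
      obtain ⟨⟨hne, hch, hh, hlast⟩, hlen⟩ := hl
      match l, hne, hlen with
      | a :: b :: t, _, _ =>
        simp only [List.head?_cons, Option.some.injEq] at hh
        subst hh
        simp [pathProd_cons]
  rw [hsplit, h1, h2]
  congr 1
  split_ifs with h
  · subst h; simp [pathProd_singleton]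
  · simp

end Aux13


namespace Aux13
variable {n : ℕ} (D : Finset (Fin n × Fin n))

lemma trek_ext {t t' : Trek n D} (h1 : t.up = t'.up) (h2 : t.down = t'.down) : t = t' := by
  cases t; cases t'
  cases h1; cases h2
  rfl

abbrev PathSpec (m a : Fin n) (p : List (Fin n)) : Prop :=
  p ≠ [] ∧ p.Chain' (fun u v => (u, v) ∈ D) ∧ p.head? = some m ∧ p.getLast? = some a

def mkTrek (m a b : Fin n) (p q : List (Fin n))
    (hp : PathSpec D m a p) (hq : PathSpec D m b q) : Trek n D where
  up := p
  down := q
  up_ne := hp.1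
  down_ne := hq.1
  up_chain := hp.2.1
  down_chain := hq.2.1
  top_eq := by
    have h1 := hp.2.2.1; have h2 := hq.2.2.1
    rw [List.head?_eq_head hp.1] at h1
    rw [List.head?_eq_head hq.1] at h2
    exact (Option.some.inj h1).trans (Option.some.inj h2).symm

lemma mkTrek_top (m a b : Fin n) (p q : List (Fin n))
    (hp : PathSpec D m a p) (hq : PathSpec D m b q) :
    (mkTrek D m a b p q hp hq).top = m := by
  have h1 := hp.2.2.1
  rw [List.head?_eq_head hp.1] at h1
  exact Option.some.inj h1

lemma mkTrek_start (m a b : Fin n) (p q : List (Fin n))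
    (hp : PathSpec D m a p) (hq : PathSpec D m b q) :
    (mkTrek D m a b p q hp hq).start = a := by
  have h1 := hp.2.2.2
  rw [List.getLast?_eq_getLast hp.1] at h1
  exact Option.some.inj h1

lemma mkTrek_endv (m a b : Fin n) (p q : List (Fin n))
    (hp : PathSpec D m a p) (hq : PathSpec D m b q) :
    (mkTrek D m a b p q hp hq).endv = b := by
  have h1 := hq.2.2.2
  rw [List.getLast?_eq_getLast hq.1] at h1
  exact Option.some.inj h1

variable (hD : ∀ e ∈ D, e.1 < e.2)
include hD

lemma list_eq_of_toFinset {l l' : List (Fin n)}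
    (hl : l.Chain' fun a b => (a, b) ∈ D) (hl' : l'.Chain' fun a b => (a, b) ∈ D)
    (h : l.toFinset = l'.toFinset) : l = l' := by
  haveI : IsAntisymm (Fin n) (· < ·) := ⟨fun a b h h' => (lt_asymm h h').elim⟩
  have s1 := sorted_of_chain D hD hl
  have s2 := sorted_of_chain D hD hl'
  exact List.Perm.eq_of_pairwise (fun a b _ _ h h' => (lt_asymm h h').elim) s1 s2
    (List.perm_of_nodup_nodup_toFinset_eq s1.nodup s2.nodup h)

lemma trek_finite (P : Trek n D → Prop) : Finite {t : Trek n D // P t} := by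
  apply Finite.of_injective
    (fun t : {t : Trek n D // P t} => (t.val.up.toFinset, t.val.down.toFinset))
  intro t t' h
  simp only [Prod.mk.injEq] at h
  exact Subtype.ext (trek_ext D
    (list_eq_of_toFinset D hD t.val.up_chain t'.val.up_chain h.1)
    (list_eq_of_toFinset D hD t.val.down_chain t'.val.down_chain h.2))

lemma trek_sum (i j : Fin n) :
    ∑ᶠ t : {t : Trek n D // t.start = i ∧ t.endv = j}, t.val.wt =
      ∑ m, B D m i * X (Sum.inr m) * B D m j := by
  haveI : Finite {t : Trek n D // t.start = i ∧ t.endv = j} := trek_finite D hD _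
  haveI : Fintype {t : Trek n D // t.start = i ∧ t.endv = j} := Fintype.ofFinite _
  rw [finsum_eq_sum_of_fintype]
  have key : ∑ t : {t : Trek n D // t.start = i ∧ t.endv = j}, t.val.wt =
      ∑ x ∈ Finset.univ.sigma (fun m => paths D m i ×ˢ paths D m j),
        pathProdOm n D x.2.1 * X (Sum.inr x.1) * pathProdOm n D x.2.2 := by
    refine Finset.sum_bij'
      (fun t _ => (⟨t.val.top, (t.val.up, t.val.down)⟩ :
        (m : Fin n) × (List (Fin n) × List (Fin n))))
      (fun x hx => ⟨mkTrek D x.1 i j x.2.1 x.2.2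
          ((mem_paths D hD).mp (Finset.mem_product.mp (Finset.mem_sigma.mp hx).2).1)
          ((mem_paths D hD).mp (Finset.mem_product.mp (Finset.mem_sigma.mp hx).2).2),
        mkTrek_start D _ _ _ _ _ _ _, mkTrek_endv D _ _ _ _ _ _ _⟩)
      ?_ ?_ ?_ ?_ ?_
    · rintro ⟨t, hs, he⟩ -
      simp only [Finset.mem_sigma, Finset.mem_univ, Finset.mem_product, true_and]
      constructor
      · rw [mem_paths D hD]
        refine ⟨t.up_ne, t.up_chain, List.head?_eq_head t.up_ne, ?_⟩
        rw [List.getLast?_eq_getLast t.up_ne]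
        exact congrArg some hs
      · rw [mem_paths D hD]
        refine ⟨t.down_ne, t.down_chain, ?_, ?_⟩
        · rw [List.head?_eq_head t.down_ne]
          exact congrArg some t.top_eq.symm
        · rw [List.getLast?_eq_getLast t.down_ne]
          exact congrArg some he
    · intro x hx
      exact Finset.mem_univ _
    · rintro ⟨t, hs, he⟩ -
      exact Subtype.ext (trek_ext D rfl rfl)
    · rintro ⟨m, p, q⟩ hx
      have := mkTrek_top D m i j p q
        ((mem_paths D hD).mp (Finset.mem_product.mp (Finset.mem_sigma.mp hx).2).1)
        ((mem_paths D hD).mp (Finset.mem_product.mp (Finset.mem_sigma.mp hx).2).2)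
      simp only at this ⊢
      rw [this]
      rfl
    · rintro ⟨t, hs, he⟩ -
      rfl
  rw [key, Finset.sum_sigma]
  refine Finset.sum_congr rfl fun m _ => ?_
  rw [Finset.sum_product]
  unfold B
  simp only [Finset.sum_mul, Finset.mul_sum]
  rw [Finset.sum_comm]

end Aux13


namespace Aux13
variable {n : ℕ} (D : Finset (Fin n × Fin n))

def Bmat : Matrix (Fin n) (Fin n) (RingOm n D) := Matrix.of fun m i => B D m i

variable (hD : ∀ e ∈ D, e.1 < e.2)
include hD

lemma mul_Bmat : (1 - edgeMatrixOm n D) * Bmat D = 1 := by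
  ext m i
  rw [Matrix.mul_apply, Matrix.one_apply]
  simp only [Matrix.sub_apply, Matrix.one_apply, sub_mul, Bmat, Matrix.of_apply]
  rw [Finset.sum_sub_distrib]
  have h1 : ∑ k, (if m = k then (1 : RingOm n D) else 0) * B D k i = B D m i := by
    simp
  rw [h1]
  have hA : ∀ k, edgeMatrixOm n D m k = edgeVarOm n D (m, k) := fun k => rfl
  simp only [hA]
  rw [B_rec D hD m i, add_sub_cancel_right]

lemma sigma_entry (i j : Fin n) :
    sigmaOmMat n D i j = ∑ m, B D m i * X (Sum.inr m) * B D m j := by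
  have hinv : (1 - edgeMatrixOm n D)⁻¹ = Bmat D :=
    Matrix.inv_eq_right_inv (mul_Bmat D hD)
  unfold sigmaOmMat
  rw [← Matrix.transpose_nonsing_inv, hinv, Matrix.mul_apply]
  refine Finset.sum_congr rfl fun m _ => ?_
  rw [Matrix.mul_diagonal]
  rfl

end Aux13

/-- The trek rule: `(Σ_Ω)_{ij}` is the sum of the weights of all treks from `i` to `j`. -/
theorem statement13 (n : ℕ) (D : Finset (Fin n × Fin n)) (hD : ∀ e ∈ D, e.1 < e.2)
    (i j : Fin n) :
    sigmaOmMat n D i j =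
      ∑ᶠ t : {t : Trek n D // t.start = i ∧ t.endv = j}, t.val.wt := by
  rw [Aux13.sigma_entry D hD i j]
  exact (Aux13.trek_sum D hD i j).symm

end
end

section
/- Let n = 5 and D = {(1,3),(1,4),(2,3),(2,4),(3,5),(4,5)} (vertices labeled 1,…,5). Let a ∈ ℝ^D be given by a_{13} = −3, a_{14} = −2, a_{23} = 8, a_{24} = 10, a_{35} = 2, a_{45} = 0. Then pcor²(1,2 | {5})(a) = 1024/1189 and pcor²(1,2 | {3,4})(a) = 88/105; in particular pcor²(1,2 | {5})(a) > pcor²(1,2 | {3,4})(a). -/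
open Matrix

noncomputable section

/-- `Σ(a) = (I - A(a))⁻ᵀ (I - A(a))⁻¹`. -/
def sigmaR (n : ℕ) (D : Finset (Fin n × Fin n)) (a : {e // e ∈ D} → ℝ) :
    Matrix (Fin n) (Fin n) ℝ :=
  ((1 - edgeMatrixR n D a)ᵀ)⁻¹ * (1 - edgeMatrixR n D a)⁻¹

/-- The squared partial correlation `pcor²(i0, j0 | S)(a)`. -/
def pcor2 (n : ℕ) (D : Finset (Fin n × Fin n)) (a : {e // e ∈ D} → ℝ)
    (i0 j0 : Fin n) (S : Finset (Fin n)) : ℝ :=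
  (subdet (sigmaR n D a) (insert i0 S) (insert j0 S)) ^ 2 /
    (subdet (sigmaR n D a) (insert i0 S) (insert i0 S) *
      subdet (sigmaR n D a) (insert j0 S) (insert j0 S))

/-- The edge set of the graph of the example, vertices `1,…,5` encoded as `0,…,4 : Fin 5`. -/
def Dex : Finset (Fin 5 × Fin 5) :=
  {(0, 2), (0, 3), (1, 2), (1, 3), (2, 4), (3, 4)}

/-- The parameter values `a₁₃ = −3, a₁₄ = −2, a₂₃ = 8, a₂₄ = 10, a₃₅ = 2, a₄₅ = 0`. -/
def aex : {e // e ∈ Dex} → ℝ := fun e =>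
  if e.val = ((0 : Fin 5), (2 : Fin 5)) then -3
  else if e.val = ((0 : Fin 5), (3 : Fin 5)) then -2
  else if e.val = ((1 : Fin 5), (2 : Fin 5)) then 8
  else if e.val = ((1 : Fin 5), (3 : Fin 5)) then 10
  else if e.val = ((2 : Fin 5), (4 : Fin 5)) then 2
  else 0


/-- Auxiliary: the matrix `(I - A)⁻¹` of the example. -/
def BexAux : Matrix (Fin 5) (Fin 5) ℝ :=
  !![1,0,-3,-2,-6; 0,1,8,10,16; 0,0,1,0,2; 0,0,0,1,0; 0,0,0,0,1]

/-- Auxiliary: the matrix `Σ(a)` of the example. -/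
def SmAux : Matrix (Fin 5) (Fin 5) ℝ :=
  !![1,0,-3,-2,-6; 0,1,8,10,16; -3,8,74,86,148; -2,10,86,105,172; -6,16,148,172,297]

lemma hA_aux : edgeMatrixR 5 Dex aex =
    !![0,0,-3,-2,0; 0,0,8,10,0; 0,0,0,0,2; 0,0,0,0,0; 0,0,0,0,0] := by
  ext i j
  rw [edgeMatrixR, Matrix.of_apply]
  fin_cases i <;> fin_cases j <;>
    first
      | (rw [dif_neg (by decide)] <;> norm_num)
      | (rw [dif_pos (by decide), aex]; norm_num [Fin.ext_iff]; try rfl)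

lemma hBinv_aux : (1 - edgeMatrixR 5 Dex aex)⁻¹ = BexAux := by
  apply Matrix.inv_eq_right_inv
  rw [hA_aux]
  ext i j
  fin_cases i <;> fin_cases j <;>
    simp [BexAux, Matrix.mul_apply, Fin.sum_univ_five, Matrix.one_apply] <;> norm_num

lemma hS_aux : sigmaR 5 Dex aex = SmAux := by
  rw [sigmaR, ← Matrix.transpose_nonsing_inv, hBinv_aux]
  ext i j
  fin_cases i <;> fin_cases j <;>
    norm_num [BexAux, SmAux, Matrix.mul_apply, Fin.sum_univ_succ, Matrix.cons_val_succ,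
      Fin.ext_iff]

lemma isoEval_aux (I J : Finset (Fin 5)) {k : ℕ} (v : Fin k → Fin 5) (hk : I.card = k)
    (h : J.card = I.card) (hmem : ∀ x, v x ∈ J) (hmono : StrictMono v) :
    (fun p : Fin I.card => ((J.orderIsoOfFin h) p : Fin 5)) = v ∘ ⇑(finCongr hk) := by
  funext p
  rw [Finset.coe_orderIsoOfFin_apply]
  have := Finset.orderEmbOfFin_unique (f := v ∘ ⇑(finCongr hk)) h
    (fun x => hmem _) (fun a b hab => hmono (by simpa using hab))
  exact (congrFun this p).symm

lemma sd1_aux : subdet SmAux (insert (0:Fin 5) {4}) (insert 1 {4}) = 96 := by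
  rw [subdet]
  split
  case isFalse h => exact absurd rfl h
  case isTrue h =>
    rw [isoEval_aux {0,4} {0,4} ![0,4] rfl rfl (by decide) (by decide),
        isoEval_aux {0,4} {1,4} ![1,4] rfl h.symm (by decide) (by decide),
        ← Matrix.submatrix_submatrix, Matrix.det_submatrix_equiv_self,
        Matrix.det_fin_two]
    simp [SmAux]
    norm_num

lemma sd2_aux : subdet SmAux (insert (0:Fin 5) {4}) (insert 0 {4}) = 261 := by
  rw [subdet]
  split
  case isFalse h => exact absurd rfl h
  case isTrue h =>
    rw [isoEval_aux {0,4} {0,4} ![0,4] rfl rfl (by decide) (by decide),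
        ← Matrix.submatrix_submatrix, Matrix.det_submatrix_equiv_self,
        Matrix.det_fin_two]
    simp [SmAux]
    norm_num

lemma sd3_aux : subdet SmAux (insert (1:Fin 5) {4}) (insert 1 {4}) = 41 := by
  rw [subdet]
  split
  case isFalse h => exact absurd rfl h
  case isTrue h =>
    rw [isoEval_aux {1,4} {1,4} ![1,4] rfl rfl (by decide) (by decide),
        ← Matrix.submatrix_submatrix, Matrix.det_submatrix_equiv_self,
        Matrix.det_fin_two]
    simp [SmAux]
    norm_num

lemma sd4_aux : subdet SmAux (insert (0:Fin 5) {2,3}) (insert 1 {2,3}) = 44 := by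
  rw [subdet]
  split
  case isFalse h => exact absurd rfl h
  case isTrue h =>
    rw [isoEval_aux {0,2,3} {0,2,3} ![0,2,3] rfl rfl (by decide) (by decide),
        isoEval_aux {0,2,3} {1,2,3} ![1,2,3] rfl h.symm (by decide) (by decide),
        ← Matrix.submatrix_submatrix, Matrix.det_submatrix_equiv_self,
        Matrix.det_fin_three]
    simp [SmAux]
    norm_num

lemma sd5_aux : subdet SmAux (insert (0:Fin 5) {2,3}) (insert 0 {2,3}) = 165 := by
  rw [subdet]
  split
  case isFalse h => exact absurd rfl h
  case isTrue h =>
    rw [isoEval_aux {0,2,3} {0,2,3} ![0,2,3] rfl rfl (by decide) (by decide),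
        ← Matrix.submatrix_submatrix, Matrix.det_submatrix_equiv_self,
        Matrix.det_fin_three]
    simp [SmAux]
    norm_num

lemma sd6_aux : subdet SmAux (insert (1:Fin 5) {2,3}) (insert 1 {2,3}) = 14 := by
  rw [subdet]
  split
  case isFalse h => exact absurd rfl h
  case isTrue h =>
    rw [isoEval_aux {1,2,3} {1,2,3} ![1,2,3] rfl rfl (by decide) (by decide),
        ← Matrix.submatrix_submatrix, Matrix.det_submatrix_equiv_self,
        Matrix.det_fin_three]
    simp [SmAux]
    norm_num

/-- For the graph and parameters of the example, `pcor²(1,2 | {5}) = 1024/1189`,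
`pcor²(1,2 | {3,4}) = 88/105`, and in particular `pcor²(1,2 | {5}) > pcor²(1,2 | {3,4})`. -/
theorem statement15 :
    pcor2 5 Dex aex 0 1 {4} = 1024 / 1189 ∧
    pcor2 5 Dex aex 0 1 {2, 3} = 88 / 105 ∧
    pcor2 5 Dex aex 0 1 {2, 3} < pcor2 5 Dex aex 0 1 {4} := by
  have hp1 : pcor2 5 Dex aex 0 1 {4} = 1024 / 1189 := by
    rw [pcor2, hS_aux, sd1_aux, sd2_aux, sd3_aux]
    norm_num
  have hp2 : pcor2 5 Dex aex 0 1 {2, 3} = 88 / 105 := by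
    rw [pcor2, hS_aux, sd4_aux, sd5_aux, sd6_aux]
    norm_num
  refine ⟨hp1, hp2, ?_⟩
  rw [hp1, hp2]
  norm_num


end
end
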